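/- arXiv:1509.04500 — 12 statements merged into one kernel-verified Lean document; each statement's English description precedes it below -/
import Mathlib

section
/- Let z be a nonzero complex number, (z_n)_{n≥0} an iteration sequence for z, (a_n)_{n≥0} the associated partial quotients, and (p_n), (q_n) the Q-pair associated to (a_n). Then for every n ≥ 0, q_n·z − p_n = (−1)^n · (z_1·z_2⋯z_{n+1})^{−1}. -/
/-- For an iteration sequence `zs` for `z` with partial quotients `a` and
Q-pair `p`, `q` (indexed with an offset of one, so `p (n+1) = pₙ`),
one has `qₙ z − pₙ = (−1)ⁿ (z₁⋯z₍ₙ₊₁₎)⁻¹` for all `n ≥ 0`. -/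
theorem qpair_error_formula (z : ℂ) (hz : z ≠ 0) (zs : ℕ → ℂ)
    (hzs0 : zs 0 = z) (hzsne : ∀ n, zs n ≠ 0)
    (hzsabs : ∀ n, 1 ≤ n → 1 ≤ ‖zs n‖)
    (hzsinv : ∀ n, 1 ≤ n → zs (n + 1) ≠ (zs n)⁻¹)
    (a : ℕ → ℂ) (haz : ∀ n, a n = zs n - (zs (n + 1))⁻¹)
    (p q : ℕ → ℂ)
    (hp0 : p 0 = 1) (hp1 : p 1 = a 0)
    (hp : ∀ n, p (n + 2) = a (n + 1) * p (n + 1) + p n)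
    (hq0 : q 0 = 0) (hq1 : q 1 = 1)
    (hq : ∀ n, q (n + 2) = a (n + 1) * q (n + 1) + q n) :
    ∀ n : ℕ, q (n + 1) * z - p (n + 1) =
      (-1 : ℂ) ^ n * (∏ k ∈ Finset.range (n + 1), zs (k + 1))⁻¹ := by
  have hprod : ∀ n, (∏ k ∈ Finset.range n, zs (k + 1)) ≠ 0 :=
    fun n => Finset.prod_ne_zero_iff.mpr fun k _ => hzsne _
  have key : ∀ n, q n * z - p n =
      (-1 : ℂ) ^ (n + 1) * (∏ k ∈ Finset.range n, zs (k + 1))⁻¹ := by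
    intro n
    induction n using Nat.twoStepInduction with
    | zero => simp [hq0, hp0]
    | one =>
      rw [hq1, hp1, haz 0, hzs0, Finset.prod_range_one]
      ring
    | more n ih1 ih2 =>
      have h1 := hprod n
      have h2 := hzsne (n + 1)
      have h3 := hzsne (n + 2)
      have step : q (n + 2) * z - p (n + 2) =
          a (n + 1) * (q (n + 1) * z - p (n + 1)) + (q n * z - p n) := by
        rw [hq n, hp n]; ring
      rw [step, ih1, ih2, haz (n + 1), Finset.prod_range_succ,
        Finset.prod_range_succ, Finset.prod_range_succ]
      field_simp
      ring
  intro n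
  rw [key (n + 1)]
  rw [show n + 1 + 1 = n + 2 from rfl, pow_succ, pow_succ]
  ring
end

section
/- Let z be a nonzero complex number, (z_n)_{n≥0} an iteration sequence for z, (a_n)_{n≥0} the associated partial quotients, and (p_n), (q_n) the Q-pair associated to (a_n). Then for every n ≥ 0, if |p_n| > |z_1|^{−1}, then q_n ≠ 0. -/
/-- For an iteration sequence `zs` for `z` with partial quotients `a` and
Q-pair `p`, `q` (indexed with an offset of one, so `p (n+1) = pₙ`),
for every `n ≥ 0`: if `|pₙ| > |z₁|⁻¹` then `qₙ ≠ 0`. -/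
theorem qpair_q_ne_zero (z : ℂ) (hz : z ≠ 0) (zs : ℕ → ℂ)
    (hzs0 : zs 0 = z) (hzsne : ∀ n, zs n ≠ 0)
    (hzsabs : ∀ n, 1 ≤ n → 1 ≤ ‖zs n‖)
    (hzsinv : ∀ n, 1 ≤ n → zs (n + 1) ≠ (zs n)⁻¹)
    (a : ℕ → ℂ) (haz : ∀ n, a n = zs n - (zs (n + 1))⁻¹)
    (p q : ℕ → ℂ)
    (hp0 : p 0 = 1) (hp1 : p 1 = a 0)
    (hp : ∀ n, p (n + 2) = a (n + 1) * p (n + 1) + p n)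
    (hq0 : q 0 = 0) (hq1 : q 1 = 1)
    (hq : ∀ n, q (n + 2) = a (n + 1) * q (n + 1) + q n) :
    ∀ n : ℕ, (‖zs 1‖)⁻¹ < ‖p (n + 1)‖ → q (n + 1) ≠ 0 := by
  have key : ∀ n, (q n * z - p n) * (∏ i ∈ Finset.range n, zs (i + 1)) = (-1) ^ (n + 1) := by
    intro n
    induction n using Nat.twoStepInduction with
    | zero => simp [hq0, hp0]
    | one =>
      rw [hq1, hp1, haz 0, hzs0]
      simp only [Finset.prod_range_one, pow_succ, pow_one]
      field_simp [hzsne 1]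
      ring
    | more n ih1 ih2 =>
      rw [hq n, hp n, haz (n + 1), Finset.prod_range_succ, Finset.prod_range_succ]
      rw [Finset.prod_range_succ] at ih2
      have e2 : zs (n + 2) * (zs (n + 2))⁻¹ = 1 := mul_inv_cancel₀ (hzsne (n + 2))
      linear_combination (zs (n + 1) * zs (n + 2) - (zs (n + 2))⁻¹ * zs (n + 2)) * ih2 +
        zs (n + 1) * zs (n + 2) * ih1 + (-1 : ℂ) ^ (n + 1) * e2
  intro n hlt hqz
  have hk := key (n + 1)
  rw [hqz] at hk
  have habs : ‖p (n + 1)‖ *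
      ‖∏ i ∈ Finset.range (n + 1), zs (i + 1)‖ = 1 := by
    have h := congrArg (‖·‖) hk
    simpa using h
  have h1pos : 0 < ‖zs 1‖ := by
    simpa using (norm_pos_iff.mpr (hzsne 1))
  have hP : ‖zs 1‖ ≤ ‖∏ i ∈ Finset.range (n + 1), zs (i + 1)‖ := by
    rw [norm_prod, Finset.prod_range_succ']
    have hone : (1 : ℝ) ≤ ∏ i ∈ Finset.range n, ‖zs (i + 1 + 1)‖ := by
      have h := Finset.prod_le_prod (s := Finset.range n) (f := fun _ => (1 : ℝ))
        (g := fun i => ‖zs (i + 1 + 1)‖) (by intros; norm_num)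
        (by intro i _; exact hzsabs (i + 1 + 1) (by omega))
      simpa using h
    calc ‖zs 1‖ = 1 * ‖zs (0 + 1)‖ := by norm_num
      _ ≤ (∏ i ∈ Finset.range n, ‖zs (i + 1 + 1)‖) * ‖zs (0 + 1)‖ := by
          apply mul_le_mul_of_nonneg_right hone (norm_nonneg _)
  have hPpos : 0 < ‖∏ i ∈ Finset.range (n + 1), zs (i + 1)‖ :=
    lt_of_lt_of_le h1pos hP
  have hinv : (‖zs 1‖)⁻¹ * ‖zs 1‖ = 1 := inv_mul_cancel₀ h1pos.ne'
  have hinvpos : 0 < (‖zs 1‖)⁻¹ := inv_pos.mpr h1pos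
  nlinarith [habs, hP, hlt, hinv, hPpos, hinvpos]
end

section
/- Let z be a nonzero complex number, (z_n)_{n≥0} an iteration sequence for z, (a_n)_{n≥0} the associated partial quotients, and (p_n), (q_n) the Q-pair associated to (a_n). Then for every n ≥ 0 such that |q_{n−1}| < |q_n|, one has |z − p_n/q_n| ≤ |q_n|^{−2} · (|z_{n+1}| − |q_{n−1}/q_n|)^{−1}. -/
/-- For an iteration sequence `zs` for `z` with partial quotients `a` and
Q-pair `p`, `q` (indexed with an offset of one, so `p (n+1) = pₙ`),
for every `n ≥ 0` with `|q₍ₙ₋₁₎| < |qₙ|`: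
`|z − pₙ/qₙ| ≤ |qₙ|⁻² (|z₍ₙ₊₁₎| − |q₍ₙ₋₁₎/qₙ|)⁻¹`. -/
theorem qpair_approx_bound (z : ℂ) (hz : z ≠ 0) (zs : ℕ → ℂ)
    (hzs0 : zs 0 = z) (hzsne : ∀ n, zs n ≠ 0)
    (hzsabs : ∀ n, 1 ≤ n → 1 ≤ ‖zs n‖)
    (hzsinv : ∀ n, 1 ≤ n → zs (n + 1) ≠ (zs n)⁻¹)
    (a : ℕ → ℂ) (haz : ∀ n, a n = zs n - (zs (n + 1))⁻¹)
    (p q : ℕ → ℂ)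
    (hp0 : p 0 = 1) (hp1 : p 1 = a 0)
    (hp : ∀ n, p (n + 2) = a (n + 1) * p (n + 1) + p n)
    (hq0 : q 0 = 0) (hq1 : q 1 = 1)
    (hq : ∀ n, q (n + 2) = a (n + 1) * q (n + 1) + q n) :
    ∀ n : ℕ, ‖q n‖ < ‖q (n + 1)‖ →
      ‖z - p (n + 1) / q (n + 1)‖ ≤
        (‖q (n + 1)‖ ^ 2)⁻¹ *
          (‖zs (n + 1)‖ - ‖q n / q (n + 1)‖)⁻¹ := by
  -- key identity: z * (zs (n+1) * q (n+1) + q n) = zs (n+1) * p (n+1) + p n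
  have hw : ∀ n, z * (zs (n + 1) * q (n + 1) + q n) = zs (n + 1) * p (n + 1) + p n := by
    intro n
    induction n with
    | zero =>
      have h1 : zs 1 ≠ 0 := hzsne 1
      rw [hq0, hq1, hp0, hp1, haz 0, hzs0]
      field_simp
      ring
    | succ k ih =>
      have h2 : zs (k + 2) ≠ 0 := hzsne (k + 2)
      have e1 : zs (k + 2) * q (k + 2) + q (k + 1)
          = zs (k + 2) * (zs (k + 1) * q (k + 1) + q k) := by
        rw [hq k, haz (k + 1)]
        field_simp
        ring
      have e2 : zs (k + 2) * p (k + 2) + p (k + 1)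
          = zs (k + 2) * (zs (k + 1) * p (k + 1) + p k) := by
        rw [hp k, haz (k + 1)]
        field_simp
        ring
      rw [e1, e2, ← ih]
      ring
  -- determinant identity
  have hdet : ∀ n, p n * q (n + 1) - p (n + 1) * q n = (-1 : ℂ) ^ n := by
    intro n
    induction n with
    | zero => simp [hp0, hq0, hq1]
    | succ k ih =>
      rw [hq k, hp k, pow_succ]
      linear_combination (-1 : ℂ) * ih
  intro n hn
  have hQpos : 0 < ‖q (n + 1)‖ :=
    lt_of_le_of_lt (norm_nonneg _) hn
  have hQne : q (n + 1) ≠ 0 := by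
    intro h; rw [h] at hQpos; simp at hQpos
  set u : ℂ := zs (n + 1) * q (n + 1) + q n with hu_def
  set A : ℝ := ‖q (n + 1)‖ with hA
  set B : ℝ := ‖zs (n + 1)‖ with hB
  set C : ℝ := ‖q n‖ with hC
  have hB1 : 1 ≤ B := hzsabs (n + 1) (Nat.le_add_left 1 n)
  have hBAC : 0 < B * A - C := by nlinarith
  -- lower bound for |u|
  have huB : B * A - C ≤ ‖u‖ := by
    have h1 : ‖zs (n + 1) * q (n + 1)‖ ≤ ‖u‖ + ‖q n‖ := by
      have : zs (n + 1) * q (n + 1) = u + -(q n) := by rw [hu_def]; ring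
      rw [this]
      calc ‖u + -(q n)‖ ≤ ‖u‖ + ‖-(q n)‖ :=
            norm_add_le _ _
        _ = ‖u‖ + ‖q n‖ := by rw [norm_neg]
    rw [norm_mul] at h1
    simp only [← hB, ← hA, ← hC] at h1 ⊢
    linarith
  have hune : u ≠ 0 := by
    intro h
    rw [h] at huB
    simp at huB
    linarith
  -- the error formula
  have hkey : (z - p (n + 1) / q (n + 1)) * (u * q (n + 1)) = (-1 : ℂ) ^ n := by
    have e : (z - p (n + 1) / q (n + 1)) * (u * q (n + 1))
        = z * u * q (n + 1) - p (n + 1) * u := by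
      field_simp
    rw [e, hu_def]
    linear_combination q (n + 1) * (hw n) + hdet n
  have hform : z - p (n + 1) / q (n + 1) = ((-1 : ℂ) ^ n) / (u * q (n + 1)) :=
    eq_div_of_mul_eq (mul_ne_zero hune hQne) hkey
  rw [hform, norm_div, norm_mul]
  have habs1 : ‖(-1 : ℂ) ^ n‖ = 1 := by
    simp [map_pow]
  rw [habs1, norm_div]
  simp only [← hA, ← hB, ← hC]
  have h3 : A * (B * A - C) ≤ ‖u‖ * A := by
    have := mul_le_mul_of_nonneg_right huB (le_of_lt hQpos)
    linarith [this]
  have h4 : 0 < A * (B * A - C) := mul_pos hQpos hBAC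
  have h5 : 0 < ‖u‖ * A := lt_of_lt_of_le h4 h3
  calc 1 / (‖u‖ * A) ≤ 1 / (A * (B * A - C)) := by
        apply one_div_le_one_div_of_le h4 h3
    _ = (A ^ 2)⁻¹ * (B - C / A)⁻¹ := by
        field_simp
end

section
/- Let z be a nonzero complex number, (z_n)_{n≥0} an iteration sequence for z, (a_n)_{n≥0} the associated partial quotients, and (p_n), (q_n) the Q-pair associated to (a_n). If q_n ≠ 0 for all n ≥ 0 and |q_n| → ∞ as n → ∞, then p_n/q_n converges to z as n → ∞. -/
/-- For an iteration sequence `zs` for `z` with partial quotients `a` and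
Q-pair `p`, `q` (indexed with an offset of one, so `p (n+1) = pₙ`):
if `qₙ ≠ 0` for all `n ≥ 0` and `|qₙ| → ∞`, then `pₙ/qₙ → z`. -/
theorem qpair_convergents_tendsto (z : ℂ) (hz : z ≠ 0) (zs : ℕ → ℂ)
    (hzs0 : zs 0 = z) (hzsne : ∀ n, zs n ≠ 0)
    (hzsabs : ∀ n, 1 ≤ n → 1 ≤ ‖zs n‖)
    (hzsinv : ∀ n, 1 ≤ n → zs (n + 1) ≠ (zs n)⁻¹)
    (a : ℕ → ℂ) (haz : ∀ n, a n = zs n - (zs (n + 1))⁻¹)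
    (p q : ℕ → ℂ)
    (hp0 : p 0 = 1) (hp1 : p 1 = a 0)
    (hp : ∀ n, p (n + 2) = a (n + 1) * p (n + 1) + p n)
    (hq0 : q 0 = 0) (hq1 : q 1 = 1)
    (hq : ∀ n, q (n + 2) = a (n + 1) * q (n + 1) + q n)
    (hqne : ∀ n : ℕ, q (n + 1) ≠ 0)
    (hqinf : Filter.Tendsto (fun n => ‖q (n + 1)‖) Filter.atTop Filter.atTop) :
    Filter.Tendsto (fun n => p (n + 1) / q (n + 1)) Filter.atTop (nhds z) := by
  set Q : ℕ → ℂ := fun n => q (n + 1) * zs (n + 1) + q n with hQdef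
  set P : ℕ → ℂ := fun n => p (n + 1) * zs (n + 1) + p n with hPdef
  have hQrec : ∀ n, Q (n + 1) = zs (n + 2) * Q n := by
    intro n
    have hz2 : zs (n + 2) ≠ 0 := hzsne _
    simp only [hQdef]
    rw [hq n, haz (n + 1)]
    field_simp
    ring
  have hPrec : ∀ n, P (n + 1) = zs (n + 2) * P n := by
    intro n
    have hz2 : zs (n + 2) ≠ 0 := hzsne _
    simp only [hPdef]
    rw [hp n, haz (n + 1)]
    field_simp
    ring
  have hzQP : ∀ n, z * Q n = P n := by
    intro n
    induction n with
    | zero =>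
      have hz1 : zs 1 ≠ 0 := hzsne 1
      simp only [hQdef, hPdef, hq0, hq1, hp0, hp1, haz 0, hzs0]
      field_simp
      try ring
    | succ n ih =>
      rw [hQrec n, hPrec n, ← ih]; ring
  have hQabs : ∀ n, 1 ≤ ‖Q n‖ := by
    intro n
    induction n with
    | zero =>
      simpa [hQdef, hq0, hq1] using hzsabs 1 le_rfl
    | succ n ih =>
      rw [hQrec n, norm_mul]
      calc (1:ℝ) = 1 * 1 := by ring
        _ ≤ ‖zs (n + 2)‖ * ‖Q n‖ := by
            exact mul_le_mul (hzsabs (n + 2) (by omega)) ih zero_le_one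
              (norm_nonneg _)
  have hD : ∀ n, p n * q (n + 1) - p (n + 1) * q n = (-1 : ℂ) ^ n := by
    intro n
    induction n with
    | zero => simp [hp0, hq0, hq1]
    | succ n ih =>
      rw [hp n, hq n]
      ring_nf
      ring_nf at ih
      linear_combination -ih
  have key : ∀ n, dist (p (n + 1) / q (n + 1)) z ≤ (‖q (n + 1)‖)⁻¹ := by
    intro n
    have hqn : q (n + 1) ≠ 0 := hqne n
    have hqpos : 0 < ‖q (n + 1)‖ := by
      simpa [norm_pos_iff] using hqn
    have h0 : p (n + 1) / q (n + 1) - z = (p (n + 1) - z * q (n + 1)) / q (n + 1) := by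
      field_simp
      try ring
    have hzn := hzQP n
    have hDn := hD n
    have h1 : (p (n + 1) - z * q (n + 1)) * Q n = -(-1 : ℂ) ^ n := by
      simp only [hQdef, hPdef] at hzn ⊢
      linear_combination -hDn - q (n + 1) * hzn
    have h2 : ‖p (n + 1) - z * q (n + 1)‖ * ‖Q n‖ = 1 := by
      rw [← norm_mul, h1]
      simp
    have habs1 : ‖p (n + 1) - z * q (n + 1)‖ ≤ 1 := by
      nlinarith [hQabs n, norm_nonneg (p (n + 1) - z * q (n + 1))]
    rw [Complex.dist_eq, h0, norm_div, inv_eq_one_div]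
    gcongr
  have hbound : Filter.Tendsto (fun n => (‖q (n + 1)‖)⁻¹)
      Filter.atTop (nhds 0) := Filter.Tendsto.inv_tendsto_atTop hqinf
  have := squeeze_zero (fun n => dist_nonneg) key hbound
  exact tendsto_iff_dist_tendsto_zero.mpr this
end

section
/- Let z be a nonzero complex number, (z_n)_{n≥0} an iteration sequence for z, (a_n)_{n≥0} the associated partial quotients, and (p_n), (q_n) the Q-pair associated to (a_n). Suppose that (a_n)_{n≥0} is contained in a discrete subring Γ of ℂ and that there exists α > 0 such that |z_n| ≥ 1 + α for all n ≥ 1. Then q_n ≠ 0 for all n ≥ 0, p_n/q_n → z as n → ∞, and for every n such that |q_{n−1}| < |q_n| one has |z − p_n/q_n| ≤ α^{−1}·|q_n|^{−2}. -/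
lemma discrete_subring_one_le_abs (Γ : Subring ℂ) (hΓ : DiscreteTopology Γ)
    {x : ℂ} (hx : x ∈ Γ) (hx0 : x ≠ 0) : 1 ≤ ‖x‖ := by
  by_contra h
  push_neg at h
  have hpow : Filter.Tendsto (fun n => x ^ n) Filter.atTop (nhds 0) :=
    tendsto_pow_atTop_nhds_zero_of_norm_lt_one (by simpa using h)
  have h2 : Filter.Tendsto (fun n => (⟨x ^ n, pow_mem hx n⟩ : Γ)) Filter.atTop
      (nhds (⟨0, zero_mem _⟩ : Γ)) := by
    rw [Topology.IsInducing.subtypeVal.tendsto_nhds_iff]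
    exact hpow
  rw [nhds_discrete, Filter.tendsto_pure] at h2
  obtain ⟨n, hn⟩ := h2.exists
  exact pow_ne_zero n hx0 (by simpa using congrArg Subtype.val hn)


/-- Proposition 2: for an iteration sequence `zs` for `z` whose partial
quotients lie in a discrete subring `Γ` of `ℂ` and with `|zₙ| ≥ 1 + α`
for all `n ≥ 1` (for some `α > 0`), the denominators `qₙ` are nonzero,
the convergents tend to `z`, and whenever `|q₍ₙ₋₁₎| < |qₙ|` one has
`|z − pₙ/qₙ| ≤ α⁻¹ |qₙ|⁻²`.  (Q-pairs are indexed with offset one.) -/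
theorem qpair_discrete_subring (z : ℂ) (hz : z ≠ 0) (zs : ℕ → ℂ)
    (hzs0 : zs 0 = z) (hzsne : ∀ n, zs n ≠ 0)
    (hzsinv : ∀ n, 1 ≤ n → zs (n + 1) ≠ (zs n)⁻¹)
    (a : ℕ → ℂ) (haz : ∀ n, a n = zs n - (zs (n + 1))⁻¹)
    (Γ : Subring ℂ) (hΓdisc : DiscreteTopology Γ)
    (haΓ : ∀ n, a n ∈ Γ)
    (α : ℝ) (hα : 0 < α)
    (hzsabs : ∀ n, 1 ≤ n → 1 + α ≤ ‖zs n‖)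
    (p q : ℕ → ℂ)
    (hp0 : p 0 = 1) (hp1 : p 1 = a 0)
    (hp : ∀ n, p (n + 2) = a (n + 1) * p (n + 1) + p n)
    (hq0 : q 0 = 0) (hq1 : q 1 = 1)
    (hq : ∀ n, q (n + 2) = a (n + 1) * q (n + 1) + q n) :
    (∀ n : ℕ, q (n + 1) ≠ 0) ∧
    Filter.Tendsto (fun n => p (n + 1) / q (n + 1)) Filter.atTop (nhds z) ∧
    (∀ n : ℕ, ‖q n‖ < ‖q (n + 1)‖ →
      ‖z - p (n + 1) / q (n + 1)‖ ≤ α⁻¹ * (‖q (n + 1)‖ ^ 2)⁻¹) := by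
  -- p n, q n ∈ Γ
  have hpqΓ : ∀ n, (p n ∈ Γ ∧ q n ∈ Γ) ∧ (p (n+1) ∈ Γ ∧ q (n+1) ∈ Γ) := by
    intro n
    induction n with
    | zero => exact ⟨⟨by rw [hp0]; exact one_mem _, by rw [hq0]; exact zero_mem _⟩,
        ⟨by rw [hp1]; exact haΓ 0, by rw [hq1]; exact one_mem _⟩⟩
    | succ k ih =>
      refine ⟨ih.2, ?_, ?_⟩
      · rw [hp k]; exact add_mem (mul_mem (haΓ _) ih.2.1) ih.1.1
      · rw [hq k]; exact add_mem (mul_mem (haΓ _) ih.2.2) ih.1.2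
  set W : ℕ → ℂ := fun n => zs (n+1) * q (n+1) + q n with hWdef
  set U : ℕ → ℂ := fun n => zs (n+1) * p (n+1) + p n with hUdef
  have hWrec : ∀ n, W (n+1) = zs (n+2) * W n := by
    intro n
    have hz2 : zs (n+2) ≠ 0 := hzsne _
    simp only [hWdef]
    rw [hq n, haz (n+1)]
    field_simp
    ring
  have hUrec : ∀ n, U (n+1) = zs (n+2) * U n := by
    intro n
    have hz2 : zs (n+2) ≠ 0 := hzsne _
    simp only [hUdef]
    rw [hp n, haz (n+1)]
    field_simp
    ring
  have hW0 : W 0 = zs 1 := by simp [hWdef, hq0, hq1]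
  have hU0 : U 0 = zs 1 * z := by
    have hz1 : zs 1 ≠ 0 := hzsne 1
    simp only [hUdef, hp0, hp1, haz 0, hzs0]
    field_simp
    ring
  have hUW : ∀ n, U n = z * W n := by
    intro n
    induction n with
    | zero => rw [hU0, hW0]; ring
    | succ k ih => rw [hUrec k, hWrec k, ih]; ring
  have hWabs : ∀ n, (1+α)^(n+1) ≤ ‖W n‖ := by
    intro n
    induction n with
    | zero => simpa [hW0] using hzsabs 1 le_rfl
    | succ k ih =>
      rw [hWrec k, norm_mul, pow_succ]
      have h1 : (1:ℝ) + α ≤ ‖zs (k+2)‖ := hzsabs (k+2) (by omega)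
      have h2 : (0:ℝ) ≤ (1+α)^(k+1) := by positivity
      calc (1+α)^(k+1) * (1+α) ≤ ‖zs (k+2)‖ * (1+α)^(k+1) := by nlinarith
        _ ≤ ‖zs (k+2)‖ * ‖W k‖ := by
            have : (0:ℝ) ≤ ‖zs (k+2)‖ := norm_nonneg _
            nlinarith
  have hWpos : ∀ n, 0 < ‖W n‖ := by
    intro n
    have : (0:ℝ) < (1+α)^(n+1) := by positivity
    linarith [hWabs n]
  have hD : ∀ n, p (n+1) * q n - p n * q (n+1) = (-1)^(n+1) := by
    intro n
    induction n with
    | zero => simp [hp0, hp1, hq0, hq1]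
    | succ k ih =>
      calc p (k+2) * q (k+1) - p (k+1) * q (k+2)
          = -(p (k+1) * q k - p k * q (k+1)) := by rw [hp k, hq k]; ring
        _ = -(-1)^(k+1) := by rw [ih]
        _ = (-1)^(k+2) := by ring
  have hkey : ∀ n, (q (n+1) * z - p (n+1)) * W n = (-1)^n := by
    intro n
    calc (q (n+1) * z - p (n+1)) * W n
        = q (n+1) * (z * W n) - p (n+1) * W n := by ring
      _ = q (n+1) * U n - p (n+1) * W n := by rw [hUW n]
      _ = -(p (n+1) * q n - p n * q (n+1)) := by simp only [hUdef, hWdef]; ring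
      _ = -(-1)^(n+1) := by rw [hD n]
      _ = (-1)^n := by ring
  have habskey : ∀ n, ‖q (n+1) * z - p (n+1)‖ = (‖W n‖)⁻¹ := by
    intro n
    have h1 := congrArg (‖·‖) (hkey n)
    rw [norm_mul] at h1
    have h2 : ‖(-1:ℂ)^n‖ = 1 := by
      rw [norm_pow]; simp
    rw [h2] at h1
    exact eq_inv_of_mul_eq_one_left h1
  have hqne : ∀ n, q (n+1) ≠ 0 := by
    intro n hq0'
    have hpne : p (n+1) ≠ 0 := by
      intro hp0'
      have h := hD n
      rw [hq0', hp0'] at h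
      simp at h
      exact pow_ne_zero _ (by norm_num : (-1:ℂ) ≠ 0) h.symm
    have hple : 1 ≤ ‖p (n+1)‖ :=
      discrete_subring_one_le_abs Γ hΓdisc (hpqΓ n).2.1 hpne
    have h1 := habskey n
    rw [hq0'] at h1
    simp only [zero_mul, zero_sub, norm_neg] at h1
    have hW1 : 1 < ‖W n‖ := by
      have : (1:ℝ) < (1+α)^(n+1) := one_lt_pow₀ (by linarith) (Nat.succ_ne_zero n)
      linarith [hWabs n]
    have : (‖W n‖)⁻¹ < 1 := by
      rw [inv_lt_one_iff₀]
      right; exact hW1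
    rw [h1] at hple
    linarith
  have hqabs : ∀ n, 1 ≤ ‖q (n+1)‖ := fun n =>
    discrete_subring_one_le_abs Γ hΓdisc (hpqΓ n).2.2 (hqne n)
  have hdiff : ∀ n, z - p (n+1) / q (n+1) = (q (n+1) * z - p (n+1)) / q (n+1) := by
    intro n
    field_simp [hqne n]
  refine ⟨hqne, ?_, ?_⟩
  · -- convergence
    have hbound : ∀ n, ‖z - p (n+1) / q (n+1)‖ ≤ ((1+α)⁻¹)^(n+1) := by
      intro n
      rw [hdiff n, norm_div, habskey n]
      have h1 : (‖W n‖)⁻¹ / ‖q (n+1)‖ ≤ (‖W n‖)⁻¹ :=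
        div_le_self (by positivity) (hqabs n)
      have h2 : (‖W n‖)⁻¹ ≤ ((1+α)^(n+1))⁻¹ := by
        apply inv_anti₀ (by positivity) (hWabs n)
      rw [inv_pow]
      linarith
    have hgeo : Filter.Tendsto (fun n : ℕ => ((1+α)⁻¹)^(n+1)) Filter.atTop (nhds 0) := by
      have h0 : |(1+α)⁻¹| < 1 := by
        rw [abs_of_pos (by positivity)]
        rw [inv_lt_one_iff₀]
        right; linarith
      have := tendsto_pow_atTop_nhds_zero_of_abs_lt_one h0
      exact this.comp (Filter.tendsto_add_atTop_nat 1)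
    rw [tendsto_iff_norm_sub_tendsto_zero]
    apply squeeze_zero (fun n => norm_nonneg _) _ hgeo
    intro n
    rw [← norm_neg, neg_sub]
    exact hbound n
  · -- quality of approximation
    intro n hlt
    have hqpos : 0 < ‖q (n+1)‖ := lt_of_le_of_lt (norm_nonneg _) hlt
    have hW_lb : α * ‖q (n+1)‖ ≤ ‖W n‖ := by
      have h1 : ‖zs (n+1) * q (n+1)‖ - ‖q n‖ ≤ ‖W n‖ := by
        have h := norm_sub_norm_le (zs (n+1) * q (n+1)) (-(q n))
        simp only [sub_neg_eq_add, norm_neg] at h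
        exact h
      rw [norm_mul] at h1
      have h2 : (1:ℝ) + α ≤ ‖zs (n+1)‖ := hzsabs (n+1) (by omega)
      nlinarith [hlt, hqpos]
    rw [hdiff n, norm_div, habskey n, div_eq_mul_inv, ← mul_inv]
    rw [show α⁻¹ * (‖q (n+1)‖ ^ 2)⁻¹ = (α * ‖q (n+1)‖ ^ 2)⁻¹ by
      rw [mul_inv]]
    apply inv_anti₀ (by positivity)
    nlinarith [hW_lb, hqpos]
end

section
/- Let Γ be a discrete subring of ℂ, let f : ℂ → Γ be a Γ-valued algorithm whose fundamental set is contained in the ball of radius r centered at 0, where 0 < r < 1, and let K be the subfield of ℂ generated by Γ. Let z ∈ ℂ \ K, let (z_n)_{n≥0} be the iteration sequence of z with respect to f, (a_n)_{n≥0} the associated partial quotients, and (p_n), (q_n) the corresponding Q-pair. Then: (i) q_n ≠ 0 for all n ≥ 0 and p_n/q_n → z as n → ∞; and (ii) for every n such that |q_{n−1}| < |q_n| one has |z − p_n/q_n| ≤ (r/(1−r))·|q_n|^{−2}. -/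
lemma discrete_subring_one_le (Γ : Subring ℂ) (hΓdisc : DiscreteTopology Γ)
    {x : ℂ} (hx : x ∈ Γ) (hx0 : x ≠ 0) : 1 ≤ ‖x‖ := by
  by_contra h
  push_neg at h
  have hnorm : ‖x‖ < 1 := h
  have ht : Filter.Tendsto (fun n : ℕ => x ^ n) Filter.atTop (nhds 0) :=
    tendsto_pow_atTop_nhds_zero_of_norm_lt_one hnorm
  have ht2 : Filter.Tendsto (fun n : ℕ => (⟨x ^ n, pow_mem hx n⟩ : Γ))
      Filter.atTop (nhds (0 : Γ)) := by
    rw [tendsto_subtype_rng]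
    exact ht
  rw [nhds_discrete, Filter.tendsto_pure] at ht2
  obtain ⟨n, hn⟩ := ht2.exists
  exact pow_ne_zero n hx0 (by simpa using congrArg Subtype.val hn)

/-- Theorem (algorithmic case): for a `Γ`-valued algorithm `f` whose fundamental
set is contained in a ball of radius `r < 1` centered at `0`, and `z ∉ K`
(`K` the subfield generated by `Γ`), the denominators of the convergents of the
continued fraction expansion of `z` with respect to `f` are nonzero, the
convergents tend to `z`, and whenever `|q₍ₙ₋₁₎| < |qₙ|` one has
`|z − pₙ/qₙ| ≤ (r/(1−r)) |qₙ|⁻²`.  (Q-pairs are indexed with offset one.) -/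
theorem algorithm_convergents (Γ : Subring ℂ) (hΓdisc : DiscreteTopology Γ)
    (f : ℂ → ℂ) (hfΓ : ∀ w, f w ∈ Γ) (hfalg : ∀ w, ‖w - f w‖ ≤ 1)
    (K : Subfield ℂ) (hK : K = Subfield.closure (Γ : Set ℂ))
    (r : ℝ) (hr0 : 0 < r) (hr1 : r < 1)
    (hfund : ∀ w : ℂ, w ∉ K → ‖w - f w‖ ≤ r)
    (z : ℂ) (hzK : z ∉ K)
    (zs : ℕ → ℂ) (hzs0 : zs 0 = z)
    (hzsrec : ∀ n, zs (n + 1) = (zs n - f (zs n))⁻¹)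
    (a : ℕ → ℂ) (ha : ∀ n, a n = f (zs n))
    (p q : ℕ → ℂ)
    (hp0 : p 0 = 1) (hp1 : p 1 = a 0)
    (hp : ∀ n, p (n + 2) = a (n + 1) * p (n + 1) + p n)
    (hq0 : q 0 = 0) (hq1 : q 1 = 1)
    (hq : ∀ n, q (n + 2) = a (n + 1) * q (n + 1) + q n) :
    (∀ n : ℕ, q (n + 1) ≠ 0) ∧
    Filter.Tendsto (fun n => p (n + 1) / q (n + 1)) Filter.atTop (nhds z) ∧
    (∀ n : ℕ, ‖q n‖ < ‖q (n + 1)‖ →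
      ‖z - p (n + 1) / q (n + 1)‖ ≤ r / (1 - r) * (‖q (n + 1)‖ ^ 2)⁻¹) := by
  -- Γ ⊆ K
  have hΓK : ∀ x : ℂ, x ∈ Γ → x ∈ K := by
    intro x hx; rw [hK]; exact Subfield.subset_closure hx
  -- all iterates lie outside K
  have hzn : ∀ n, zs n ∉ K := by
    intro n
    induction n with
    | zero => rw [hzs0]; exact hzK
    | succ n ih =>
      intro hmem
      have hne : zs n - f (zs n) ≠ 0 := by
        intro h0
        exact ih (by rw [sub_eq_zero] at h0; rw [h0]; exact hΓK _ (hfΓ _))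
      have : (zs (n+1))⁻¹ ∈ K := K.inv_mem hmem
      rw [hzsrec n, inv_inv] at this
      exact ih (by
        have : (zs n - f (zs n)) + f (zs n) ∈ K := K.add_mem this (hΓK _ (hfΓ _))
        simpa using this)
  have hsub_ne : ∀ n, zs n - f (zs n) ≠ 0 := by
    intro n h0
    exact hzn n (by rw [sub_eq_zero] at h0; rw [h0]; exact hΓK _ (hfΓ _))
  have hzs_ne : ∀ n, zs (n + 1) ≠ 0 := by
    intro n; rw [hzsrec n]; exact inv_ne_zero (hsub_ne n)
  have hinv : ∀ n, (zs (n + 1))⁻¹ = zs n - f (zs n) := by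
    intro n; rw [hzsrec n, inv_inv]
  have hsmall : ∀ n, ‖zs n - f (zs n)‖ ≤ r := fun n => hfund _ (hzn n)
  -- p q in Γ
  have hpqΓ : ∀ n, (p n ∈ Γ ∧ q n ∈ Γ) ∧ (p (n+1) ∈ Γ ∧ q (n+1) ∈ Γ) := by
    intro n
    induction n with
    | zero =>
      refine ⟨⟨?_, ?_⟩, ?_, ?_⟩
      · rw [hp0]; exact one_mem Γ
      · rw [hq0]; exact zero_mem Γ
      · rw [hp1, ha]; exact hfΓ _
      · rw [hq1]; exact one_mem Γ
    | succ n ih =>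
      refine ⟨ih.2, ?_, ?_⟩
      · rw [hp n]
        exact add_mem (mul_mem (by rw [ha]; exact hfΓ _) ih.2.1) ih.1.1
      · rw [hq n]
        exact add_mem (mul_mem (by rw [ha]; exact hfΓ _) ih.2.2) ih.1.2
  -- key recursion for G n = q n * z - p n
  have ha' : ∀ n, a (n+1) = zs (n+1) - (zs (n+2))⁻¹ := by
    intro n; rw [hinv (n+1), ha]; ring
  have hGrec : ∀ n, zs (n+1) * (q (n+1) * z - p (n+1)) + (q n * z - p n) = 0 := by
    intro n
    induction n with
    | zero =>
      rw [hq1, hp1, hq0, hp0, ha 0, ← hzs0]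
      have h1 : zs 1 * (zs 0 - f (zs 0)) = 1 := by
        rw [hzsrec 0]; exact inv_mul_cancel₀ (hsub_ne 0)
      linear_combination h1
    | succ n ih =>
      have hw : zs (n+2) * (zs (n+2))⁻¹ = 1 := mul_inv_cancel₀ (hzs_ne (n+1))
      rw [hq n, hp n, ha' n]
      linear_combination zs (n+2) * ih - (q (n+1) * z - p (n+1)) * hw
  -- explicit step formula
  have hGstep : ∀ n, q (n+1) * z - p (n+1) = -((zs n - f (zs n)) * (q n * z - p n)) := by
    intro n
    have h2 : (zs n - f (zs n)) * zs (n+1) = 1 := by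
      rw [hzsrec n]; exact mul_inv_cancel₀ (hsub_ne n)
    linear_combination (zs n - f (zs n)) * hGrec n - (q (n+1) * z - p (n+1)) * h2
  have hGne : ∀ n, q n * z - p n ≠ 0 := by
    intro n
    induction n with
    | zero => rw [hq0, hp0]; norm_num
    | succ n ih =>
      rw [hGstep n]
      exact neg_ne_zero.mpr (mul_ne_zero (hsub_ne n) ih)
  have hGb : ∀ n, ‖q (n+1) * z - p (n+1)‖ ≤ r ^ (n+1) := by
    intro n
    induction n with
    | zero =>
      rw [hGstep 0, hq0, hp0]
      simpa using hsmall 0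
    | succ n ih =>
      rw [hGstep (n+1), norm_neg, norm_mul, pow_succ]
      calc ‖zs (n+1) - f (zs (n+1))‖ * ‖q (n+1) * z - p (n+1)‖
          ≤ r * r ^ (n+1) := by
            apply mul_le_mul (hsmall (n+1)) ih (by positivity) hr0.le
        _ = r ^ (n+1) * r := by ring
  -- q (n+1) ≠ 0
  have hqne : ∀ n : ℕ, q (n + 1) ≠ 0 := by
    intro n hq0'
    have hGn : q (n+1) * z - p (n+1) = -p (n+1) := by rw [hq0']; ring
    have hpne : p (n+1) ≠ 0 := by
      intro h0
      exact hGne (n+1) (by rw [hGn, h0, neg_zero])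
    have h1 : 1 ≤ ‖p (n+1)‖ :=
      discrete_subring_one_le Γ hΓdisc (hpqΓ n).2.1 hpne
    have h2 : ‖p (n+1)‖ ≤ r ^ (n+1) := by
      have := hGb n
      rwa [hGn, norm_neg] at this
    have h3 : r ^ (n+1) ≤ r := pow_le_of_le_one hr0.le hr1.le (by omega)
    linarith
  have hqabs : ∀ n : ℕ, 1 ≤ ‖q (n+1)‖ := fun n =>
    discrete_subring_one_le Γ hΓdisc (hpqΓ n).2.2 (hqne n)
  -- difference formula
  have hdiff : ∀ n : ℕ, z - p (n+1) / q (n+1) = (q (n+1) * z - p (n+1)) / q (n+1) := by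
    intro n
    rw [sub_div, mul_comm, mul_div_assoc, div_self (hqne n), mul_one]
  refine ⟨hqne, ?_, ?_⟩
  · -- convergence
    have key : ∀ n : ℕ, ‖z - p (n+1) / q (n+1)‖ ≤ r ^ (n+1) := by
      intro n
      rw [hdiff n, norm_div]
      calc ‖q (n+1) * z - p (n+1)‖ / ‖q (n+1)‖
          ≤ ‖q (n+1) * z - p (n+1)‖ / 1 := by
            apply div_le_div_of_nonneg_left (by positivity) (by norm_num) (hqabs n)
        _ = _ := div_one _
        _ ≤ r ^ (n+1) := hGb n
    have hrt : Filter.Tendsto (fun n : ℕ => r ^ (n+1)) Filter.atTop (nhds 0) :=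
      (tendsto_pow_atTop_nhds_zero_of_lt_one hr0.le hr1).comp (Filter.tendsto_add_atTop_nat 1)
    have hsq : Filter.Tendsto (fun n : ℕ => ‖(fun n : ℕ => p (n+1) / q (n+1)) n - z‖)
        Filter.atTop (nhds 0) := by
      apply squeeze_zero (fun n => norm_nonneg _) _ hrt
      intro n
      rw [norm_sub_rev]
      exact key n
    exact tendsto_iff_norm_sub_tendsto_zero.mpr hsq
  · -- error estimate
    intro n hlt
    -- the denominator product identity : |G(n+1)| * |D n| = 1
    have hGD : ∀ m, ‖q (m+1) * z - p (m+1)‖ *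
        ‖zs (m+1) * q (m+1) + q m‖ = 1 := by
      intro m
      induction m with
      | zero =>
        rw [hq1, hp1, hq0, ha 0, ← hzs0]
        have h1 : zs 1 * (zs 0 - f (zs 0)) = 1 := by
          rw [hzsrec 0]; exact inv_mul_cancel₀ (hsub_ne 0)
        rw [← norm_mul]
        have : (1 * zs 0 - f (zs 0)) * (zs 1 * 1 + 0) = 1 := by linear_combination h1
        rw [this, norm_one]
      | succ m ih =>
        have hDrec : zs (m+2) * q (m+2) + q (m+1) = zs (m+2) * (zs (m+1) * q (m+1) + q m) := by
          have hw : zs (m+2) * (zs (m+2))⁻¹ = 1 := mul_inv_cancel₀ (hzs_ne (m+1))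
          rw [hq m, ha' m]
          linear_combination (-(q (m+1))) * hw
        have hGstep2 : ‖zs (m+2)‖ * ‖q (m+2) * z - p (m+2)‖ =
            ‖q (m+1) * z - p (m+1)‖ := by
          rw [← norm_mul]
          have h3 : zs (m+2) * (q (m+2) * z - p (m+2)) = -(q (m+1) * z - p (m+1)) := by
            linear_combination hGrec (m+1)
          rw [h3, norm_neg]
        rw [hDrec, norm_mul]
        calc ‖q (m+2) * z - p (m+2)‖ *
              (‖zs (m+2)‖ * ‖zs (m+1) * q (m+1) + q m‖)
            = (‖zs (m+2)‖ * ‖q (m+2) * z - p (m+2)‖) *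
              ‖zs (m+1) * q (m+1) + q m‖ := by ring
          _ = 1 := by rw [hGstep2]; exact ih
    -- lower bound on |zs (n+1)|
    have hzlb : 1 ≤ r * ‖zs (n+1)‖ := by
      have h1 : (zs n - f (zs n)) * zs (n+1) = 1 := by
        rw [hzsrec n]; exact mul_inv_cancel₀ (hsub_ne n)
      have := congrArg norm h1
      rw [norm_mul, norm_one] at this
      calc (1:ℝ) = ‖zs n - f (zs n)‖ * ‖zs (n+1)‖ := this.symm
        _ ≤ r * ‖zs (n+1)‖ := by
            apply mul_le_mul_of_nonneg_right (hsmall n) (by positivity)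
    set Q := ‖q (n+1)‖ with hQdef
    set A := ‖zs (n+1) * q (n+1) + q n‖ with hAdef
    set Gv := ‖q (n+1) * z - p (n+1)‖ with hGvdef
    have hGA : Gv * A = 1 := hGD n
    have htri : ‖zs (n+1)‖ * Q ≤ A + ‖q n‖ := by
      have := norm_add_le (zs (n+1) * q (n+1) + q n) (-(q n))
      simpa [norm_mul] using this
    have hQ1 : 1 ≤ Q := hqabs n
    have hA_lb : Q * (1 - r) ≤ r * A := by
      nlinarith [hsmall n, norm_nonneg (q n), norm_nonneg (zs (n+1))]
    have hApos : 0 < A := by nlinarith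
    have hGvQ : ‖z - p (n+1) / q (n+1)‖ = Gv / Q := by
      rw [hdiff n, norm_div]
    have hQpos : (0:ℝ) < Q := by linarith
    have h1r : (0:ℝ) < 1 - r := by linarith
    have hGv_eq : Gv = A⁻¹ := by
      field_simp
      linarith [hGA]
    rw [hGvQ, hGv_eq]
    have e1 : A⁻¹ / Q = 1 / (A * Q) := by
      rw [one_div, mul_inv, div_eq_mul_inv]
    have e2 : r / (1 - r) * (Q ^ 2)⁻¹ = r / ((1 - r) * Q ^ 2) := by
      rw [div_eq_mul_inv, div_eq_mul_inv, mul_inv]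
      ring
    rw [e1, e2, div_le_div_iff₀ (mul_pos hApos hQpos) (mul_pos h1r (by positivity))]
    nlinarith [mul_le_mul_of_nonneg_right hA_lb hQpos.le]
end

section
/- Let (a_n)_{n≥0} be a sequence in ℂ satisfying Condition 𝒞, and let (p_n), (q_n) be the corresponding Q-pair. Then |q_{n+1}| > |q_n| for all n ≥ 1. -/
open Complex

private lemma core_ineq (b A z : ℂ) (hb : 1 < ‖b‖) (hz : ‖z‖ < 1)
    (hcond : ‖b‖ ^ 2 ≤
      ‖((‖b‖ ^ 2 - 1 : ℝ) : ℂ) * A + (starRingEnd ℂ) b‖) :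
    ‖A + z‖ < ‖b * (A + z) + 1‖ := by
  set β : ℝ := ‖b‖ with hβ
  have hs : 0 < β ^ 2 - 1 := by nlinarith
  set s : ℝ := β ^ 2 - 1 with hsdef
  set w : ℂ := A + z with hw
  -- triangle inequality lower bound
  have h1 : ‖(s:ℂ) * A + (starRingEnd ℂ) b‖ - ‖(s:ℂ) * z‖
      ≤ ‖(s:ℂ) * w + (starRingEnd ℂ) b‖ := by
    have h := norm_add_le ((s:ℂ) * w + (starRingEnd ℂ) b) (-((s:ℂ) * z))
    have heq : (s:ℂ) * w + (starRingEnd ℂ) b + (-((s:ℂ) * z))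
        = (s:ℂ) * A + (starRingEnd ℂ) b := by rw [hw]; ring
    rw [heq, norm_neg] at h
    linarith
  have hsz : ‖(s:ℂ) * z‖ < s := by
    rw [norm_mul, Complex.norm_real, Real.norm_eq_abs, abs_of_pos hs]
    nlinarith [norm_nonneg z]
  have h2 : 1 < ‖(s:ℂ) * w + (starRingEnd ℂ) b‖ := by
    have := hcond
    nlinarith
  have h3 : 1 < Complex.normSq ((s:ℂ) * w + (starRingEnd ℂ) b) := by
    have := Complex.sq_norm ((s:ℂ) * w + (starRingEnd ℂ) b)
    nlinarith
  have e1 : Complex.normSq ((s:ℂ) * w + (starRingEnd ℂ) b)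
      = s ^ 2 * Complex.normSq w + 2 * (s * ((w * b).re)) + β ^ 2 := by
    rw [Complex.normSq_add, Complex.normSq_mul, Complex.normSq_conj,
      Complex.normSq_ofReal]
    have : ((s:ℂ) * w * (starRingEnd ℂ) ((starRingEnd ℂ) b)) = (s:ℂ) * (w * b) := by
      rw [Complex.conj_conj]; ring
    rw [this, Complex.re_ofReal_mul, ← Complex.sq_norm b]
    ring
  have e2 : Complex.normSq (b * w + 1)
      = β ^ 2 * Complex.normSq w + 2 * (w * b).re + 1 := by
    rw [Complex.normSq_add, Complex.normSq_mul, Complex.normSq_one]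
    have : (b * w * (starRingEnd ℂ) 1) = w * b := by
      rw [map_one]; ring
    rw [this, ← Complex.sq_norm b]
    ring
  have key : Complex.normSq w < Complex.normSq (b * w + 1) := by
    rw [e1] at h3
    have h4 : 0 < s * (s * Complex.normSq w + 2 * ((w * b).re) + 1) := by
      have hr : s * (s * Complex.normSq w + 2 * ((w * b).re) + 1)
          = s ^ 2 * Complex.normSq w + 2 * (s * ((w * b).re)) + s := by ring
      rw [hr]
      have : s = β ^ 2 - 1 := hsdef
      linarith
    have h5 : 0 < s * Complex.normSq w + 2 * ((w * b).re) + 1 := by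
      rcases mul_pos_iff.mp h4 with ⟨_, h⟩ | ⟨h, _⟩
      · exact h
      · linarith
    rw [e2]
    have : s = β ^ 2 - 1 := hsdef
    nlinarith [Complex.normSq_nonneg w]
  rw [Complex.norm_def, Complex.norm_def]
  exact Real.sqrt_lt_sqrt (Complex.normSq_nonneg _) key

/-- Monotonicity of denominators under Condition 𝒞: if `|aₙ| > 1` for all
`n ≥ 1`, and whenever `n ≥ 1` and `|a₍ₙ₊₁₎| < 2` one has
`|(|a₍ₙ₊₁₎|² − 1) aₙ + conj a₍ₙ₊₁₎| ≥ |a₍ₙ₊₁₎|²`, then `|q₍ₙ₊₁₎| > |qₙ|`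
for all `n ≥ 1`.  (Q-pairs are indexed with offset one, so `q (n+1) = qₙ`.) -/
theorem condition_C_monotone (a p q : ℕ → ℂ)
    (hC1 : ∀ n : ℕ, 1 ≤ n → 1 < ‖a n‖)
    (hC2 : ∀ n : ℕ, 1 ≤ n → ‖a (n + 1)‖ < 2 →
      ‖a (n + 1)‖ ^ 2 ≤
        ‖((‖a (n + 1)‖ ^ 2 - 1 : ℝ) : ℂ) * a n +
          (starRingEnd ℂ) (a (n + 1))‖)
    (hp0 : p 0 = 1) (hp1 : p 1 = a 0)
    (hp : ∀ n, p (n + 2) = a (n + 1) * p (n + 1) + p n)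
    (hq0 : q 0 = 0) (hq1 : q 1 = 1)
    (hq : ∀ n, q (n + 2) = a (n + 1) * q (n + 1) + q n) :
    ∀ n : ℕ, 1 ≤ n → ‖q (n + 1)‖ < ‖q (n + 2)‖ := by
  have T : ∀ k : ℕ, ‖q k‖ < ‖q (k + 1)‖ := by
    intro k
    induction k using Nat.strong_induction_on with
    | _ k ih =>
      match k with
      | 0 => simp [hq0, hq1]
      | 1 =>
        have h2 : q 2 = a 1 := by rw [hq 0, hq1, hq0]; ring
        rw [hq1, h2]
        simpa using hC1 1 le_rfl
      | (k+2) =>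
        have hk1 : ‖q (k+1)‖ < ‖q (k+2)‖ := ih (k+1) (by omega)
        have hk0 : ‖q k‖ < ‖q (k+1)‖ := ih k (by omega)
        rw [hq (k+1)]
        show ‖q (k+2)‖ < ‖a (k+2) * q (k+2) + q (k+1)‖
        by_cases hbig : 2 ≤ ‖a (k+2)‖
        · -- triangle: |a x + y| ≥ |a||x| − |y| ≥ 2|x| − |y| > |x|
          have h := norm_add_le (a (k+2) * q (k+2) + q (k+1)) (-(q (k+1)))
          have heq : a (k+2) * q (k+2) + q (k+1) + (-(q (k+1))) = a (k+2) * q (k+2) := by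
            ring
          rw [heq, norm_neg, norm_mul] at h
          nlinarith [norm_nonneg (q (k+2)), norm_nonneg (q (k+1))]
        · push_neg at hbig
          have hcond := hC2 (k+1) (by omega) hbig
          have hx : q (k+1) ≠ 0 := by
            intro h0
            rw [h0] at hk0
            simp at hk0
            exact absurd hk0 (not_lt.mpr (norm_nonneg _))
          have hxpos : 0 < ‖q (k+1)‖ :=
            lt_of_le_of_lt (norm_nonneg (q k)) hk0
          set z : ℂ := q k / q (k+1) with hzdef
          have hz : ‖z‖ < 1 := by
            rw [hzdef, norm_div, div_lt_one hxpos]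
            exact hk0
          have hw2 : q (k+2) = q (k+1) * (a (k+1) + z) := by
            rw [hq k, hzdef]
            field_simp
          have hw3 : a (k+2) * q (k+2) + q (k+1)
              = q (k+1) * (a (k+2) * (a (k+1) + z) + 1) := by
            rw [hw2]; ring
          have core := core_ineq (a (k+2)) (a (k+1)) z (hC1 (k+2) (by omega)) hz hcond
          rw [hw3, hw2, norm_mul, norm_mul]
          exact mul_lt_mul_of_pos_left core hxpos
  intro n _
  exact T (n + 1)
end

section
/- Let K be a subfield of ℂ, let z ∈ ℂ \ K, and let (z_n)_{n≥0} be an iteration sequence for z such that |z_n| > 1 for all n ≥ 1. Suppose the associated partial quotients a_n = z_n − z_{n+1}^{-1}, n ≥ 0, are all contained in a discrete subring Γ of ℂ with Γ ⊆ K. If z_m = z_n for some 0 ≤ m < n, then z is a quadratic surd over K. -/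
/-- Proposition (direct half of Lagrange): if an iteration sequence for `z`
with `|zₙ| > 1` for `n ≥ 1`, whose partial quotients lie in a discrete subring
`Γ ⊆ K`, satisfies `z_m = z_n` for some `m < n`, then `z` is a quadratic surd
over `K`. -/
theorem periodic_implies_quadratic_surd (K : Subfield ℂ)
    (z : ℂ) (hz : z ≠ 0) (hzK : z ∉ K)
    (zs : ℕ → ℂ) (hzs0 : zs 0 = z) (hzsne : ∀ n, zs n ≠ 0)
    (hzsabs : ∀ n, 1 ≤ n → 1 < ‖zs n‖)
    (hzsinv : ∀ n, 1 ≤ n → zs (n + 1) ≠ (zs n)⁻¹)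
    (a : ℕ → ℂ) (haz : ∀ n, a n = zs n - (zs (n + 1))⁻¹)
    (Γ : Subring ℂ) (hΓdisc : DiscreteTopology Γ)
    (hΓK : (Γ : Set ℂ) ⊆ (K : Set ℂ))
    (haΓ : ∀ n, a n ∈ Γ)
    (m n : ℕ) (hmn : m < n) (hzmn : zs m = zs n) :
    z ∉ K ∧ ∃ A B C : ℂ, A ∈ K ∧ B ∈ K ∧ C ∈ K ∧ A ≠ 0 ∧
      A * z ^ 2 + B * z + C = 0 := by
  have haK : ∀ k, a k ∈ K := fun k => hΓK (haΓ k)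
  -- the continued fraction "matrix" cocycle
  have main : ∀ j : ℕ, ∃ α β γ δ c : ℂ,
      α ∈ Γ ∧ β ∈ Γ ∧ γ ∈ Γ ∧ δ ∈ Γ ∧
      α * δ - β * γ = (-1 : ℂ) ^ j ∧
      ‖c‖ ≤ 1 ∧ (1 ≤ j → ‖c‖ < 1) ∧
      α * zs m + β = c * zs (m + j) ∧ γ * zs m + δ = c := by
    intro j
    induction j with
    | zero =>
      exact ⟨1, 0, 0, 1, 1, Γ.one_mem, Γ.zero_mem, Γ.zero_mem, Γ.one_mem, by ring,
        by simp, by omega, by simp, by simp⟩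
    | succ j ih =>
      obtain ⟨α, β, γ, δ, c, hα, hβ, hγ, hδ, hdet, hle, _, h1, h2⟩ := ih
      have hzabs : 1 < ‖zs (m + j + 1)‖ := hzsabs _ (by omega)
      have hzne : zs (m + j + 1) ≠ 0 := hzsne _
      have hclt : ‖c * (zs (m + j + 1))⁻¹‖ < 1 := by
        rw [norm_mul, norm_inv]
        calc ‖c‖ * (‖zs (m + j + 1)‖)⁻¹
            ≤ 1 * (‖zs (m + j + 1)‖)⁻¹ := by
              apply mul_le_mul_of_nonneg_right hle (by positivity)
          _ < 1 := by
              rw [one_mul]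
              exact inv_lt_one_of_one_lt₀ hzabs
      have hinv : (zs (m + j + 1))⁻¹ = zs (m + j) - a (m + j) := by
        rw [haz (m + j)]; ring
      refine ⟨γ, δ, α - a (m + j) * γ, β - a (m + j) * δ, c * (zs (m + j + 1))⁻¹,
        hγ, hδ, Γ.sub_mem hα (Γ.mul_mem (haΓ _) hγ), Γ.sub_mem hβ (Γ.mul_mem (haΓ _) hδ),
        by rw [pow_succ]; linear_combination (-1 : ℂ) * hdet, le_of_lt hclt,
        fun _ => hclt, ?_, ?_⟩
      · show γ * zs m + δ = c * (zs (m + j + 1))⁻¹ * zs (m + j + 1)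
        rw [h2]
        field_simp
      · show (α - a (m + j) * γ) * zs m + (β - a (m + j) * δ) = c * (zs (m + j + 1))⁻¹
        rw [hinv]
        linear_combination h1 - a (m + j) * h2
  -- extract the quadratic satisfied by `zs m`
  obtain ⟨α, β, γ, δ, c, hα, hβ, hγ, hδ, hdet, hle, hlt, h1, h2⟩ := main (n - m)
  rw [show m + (n - m) = n by omega, ← hzmn] at h1
  have habslt : ‖c‖ < 1 := hlt (by omega)
  -- the quadratic for zs m is nontrivial
  have hmquad : γ * (zs m) ^ 2 + (δ - α) * zs m + (-β) = 0 := by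
    have : α * zs m + β = (γ * zs m + δ) * zs m := by rw [h2, h1]
    linear_combination -this
  have hmnontriv : ¬(γ = 0 ∧ δ - α = 0 ∧ (-β : ℂ) = 0) := by
    rintro ⟨hg0, hda0, hb0⟩
    have hβ0 : β = 0 := by linear_combination -hb0
    have hδα : δ = α := by linear_combination hda0
    have hcα : c = α := by rw [← h2, hg0, hδα]; ring
    have habs1 : ‖α‖ = 1 := by
      have : α * α = (-1 : ℂ) ^ (n - m) := by
        rw [← hdet, hδα, hβ0, hg0]; ring
      have habs : ‖α‖ * ‖α‖ = 1 := by
        rw [← norm_mul, this]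
        simp [map_pow]
      nlinarith [norm_nonneg α]
    rw [hcα, habs1] at habslt
    exact absurd habslt (by norm_num)
  -- transport the quadratic backwards from zs m to zs 0 = z
  have back : ∀ i : ℕ, i ≤ m → ∃ A B C : ℂ, A ∈ K ∧ B ∈ K ∧ C ∈ K ∧
      ¬(A = 0 ∧ B = 0 ∧ C = 0) ∧
      A * (zs (m - i)) ^ 2 + B * zs (m - i) + C = 0 := by
    intro i
    induction i with
    | zero =>
      intro _
      exact ⟨γ, δ - α, -β, hΓK hγ, K.sub_mem (hΓK hδ) (hΓK hα), K.neg_mem (hΓK hβ),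
        hmnontriv, by simpa using hmquad⟩
    | succ i ih =>
      intro hi
      obtain ⟨A, B, C, hA, hB, hC, hnt, heq⟩ := ih (by omega)
      set k := m - (i + 1) with hk
      have hki : m - i = k + 1 := by omega
      rw [hki] at heq
      have hw : zs (k + 1) ≠ 0 := hzsne _
      have hwinv : (zs (k + 1))⁻¹ = zs k - a k := by rw [haz k]; ring
      have h3 : (zs (k + 1))⁻¹ * zs (k + 1) = 1 := inv_mul_cancel₀ hw
      have key : (A + B * (zs k - a k) + C * (zs k - a k) ^ 2) * zs (k + 1) ^ 2 = 0 := by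
        rw [← hwinv]
        linear_combination heq + (B * zs (k + 1)) * h3 +
          (C * ((zs (k + 1))⁻¹ * zs (k + 1) + 1)) * h3
      have hu : A + B * (zs k - a k) + C * (zs k - a k) ^ 2 = 0 := by
        rcases mul_eq_zero.mp key with h | h
        · exact h
        · exact absurd h (pow_ne_zero 2 hw)
      refine ⟨C, B - 2 * C * a k, A - B * a k + C * (a k) ^ 2, hC,
        K.sub_mem hB (K.mul_mem (K.mul_mem (by rw [show (2:ℂ) = 1 + 1 by norm_num]; exact K.add_mem K.one_mem K.one_mem : (2:ℂ) ∈ K) hC) (haK k)),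
        K.add_mem (K.sub_mem hA (K.mul_mem hB (haK k)))
          (K.mul_mem hC (K.pow_mem (haK k) 2)), ?_, by linear_combination hu⟩
      rintro ⟨hC0, hB0, hA0⟩
      apply hnt
      have hB0' : B = 0 := by rw [hC0] at hB0; linear_combination hB0
      have hA0' : A = 0 := by rw [hC0, hB0'] at hA0; linear_combination hA0
      exact ⟨hA0', hB0', hC0⟩
  obtain ⟨A, B, C, hA, hB, hC, hnt, heq⟩ := back m le_rfl
  rw [Nat.sub_self, hzs0] at heq
  refine ⟨hzK, A, B, C, hA, hB, hC, ?_, heq⟩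
  intro hA0
  by_cases hB0 : B = 0
  · apply hnt
    refine ⟨hA0, hB0, ?_⟩
    rw [hA0, hB0] at heq
    linear_combination heq
  · apply hzK
    have hzval : z = -(B⁻¹ * C) := by
      rw [hA0] at heq
      field_simp
      linear_combination heq
    rw [hzval]
    exact K.neg_mem (K.mul_mem (K.inv_mem hB) hC)
end

section
/- Let Γ be a discrete subring of ℂ and K the subfield of ℂ generated by Γ (the quotient field of Γ). Let z be a quadratic surd over K, and let (z_n)_{n≥0} be an iteration sequence for z whose associated partial quotients (a_n)_{n≥0} are all contained in Γ. Let (p_n), (q_n) be the Q-pair corresponding to (a_n). Suppose: (i) there exists α > 0 such that |z_n| > 1 + α for all n ≥ 1; and (ii) |q_n| → ∞ as n → ∞. Then the set {z_n : n ≥ 0} is finite. -/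
private def gg (A B C : ℂ) (p q : ℕ → ℂ) (n : ℕ) : ℂ :=
  A * p n ^ 2 + B * p n * q n + C * q n ^ 2

private def bb (A B C : ℂ) (p q : ℕ → ℂ) (n : ℕ) : ℂ :=
  2*A*p (n+1)*p n + B*(p (n+1)*q n + p n*q (n+1)) + 2*C*q (n+1)*q n

lemma quad_roots_finite (u v w : ℂ) : ({x : ℂ | u ≠ 0 ∧ u*x^2+v*x+w = 0}).Finite := by
  by_cases hu : u = 0
  · simp [hu]
  · have hP : (Polynomial.C u * Polynomial.X^2 + Polynomial.C v * Polynomial.X + Polynomial.C w : Polynomial ℂ) ≠ 0 := by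
      intro h
      have := congrArg (fun P => Polynomial.coeff P 2) h
      simp [Polynomial.coeff_add, Polynomial.coeff_C] at this
      exact hu this
    apply Set.Finite.subset (Polynomial.finite_setOf_isRoot hP)
    rintro x ⟨-, hx⟩
    simp [Polynomial.IsRoot, Set.mem_setOf_eq]
    linear_combination hx

lemma discrete_bounded_finite (Γ : Subring ℂ) (hΓdisc : DiscreteTopology Γ) (R : ℝ) :
    ({x : ℂ | x ∈ Γ ∧ ‖x‖ ≤ R}).Finite := by
  have hdisc : DiscreteTopology (Γ : Set ℂ) := hΓdisc
  have hclosed : IsClosed (Γ : Set ℂ) := by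
    have : DiscreteTopology (Γ.toAddSubgroup : Set ℂ) := hdisc
    exact AddSubgroup.isClosed_of_discrete (H := Γ.toAddSubgroup)
  have hsub : {x : ℂ | x ∈ Γ ∧ ‖x‖ ≤ R} = (Γ : Set ℂ) ∩ Metric.closedBall 0 R := by
    ext x; simp [Metric.mem_closedBall, Complex.dist_eq]
  rw [hsub]
  exact ((isCompact_closedBall 0 R).inter_left hclosed).finite
    (isDiscrete_iff_discreteTopology.mpr (DiscreteTopology.of_subset hdisc Set.inter_subset_left))

/-- Lagrange-type theorem: if `z` is a quadratic surd over the subfield `K`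
generated by a discrete subring `Γ` of `ℂ`, and `zs` is an iteration sequence
for `z` whose partial quotients lie in `Γ`, such that `|zₙ| > 1 + α` for all
`n ≥ 1` (some `α > 0`) and `|qₙ| → ∞`, then `{zₙ : n ≥ 0}` is finite.
(Q-pairs are indexed with offset one, so `q (n+1) = qₙ`.) -/
theorem quadratic_surd_orbit_finite (Γ : Subring ℂ) (hΓdisc : DiscreteTopology Γ)
    (K : Subfield ℂ) (hK : K = Subfield.closure (Γ : Set ℂ))
    (z : ℂ) (hz : z ≠ 0) (hzK : z ∉ K)
    (hsurd : ∃ A B C : ℂ, A ∈ K ∧ B ∈ K ∧ C ∈ K ∧ A ≠ 0 ∧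
      A * z ^ 2 + B * z + C = 0)
    (zs : ℕ → ℂ) (hzs0 : zs 0 = z) (hzsne : ∀ n, zs n ≠ 0)
    (hzsinv : ∀ n, 1 ≤ n → zs (n + 1) ≠ (zs n)⁻¹)
    (a : ℕ → ℂ) (haz : ∀ n, a n = zs n - (zs (n + 1))⁻¹)
    (haΓ : ∀ n, a n ∈ Γ)
    (p q : ℕ → ℂ)
    (hp0 : p 0 = 1) (hp1 : p 1 = a 0)
    (hp : ∀ n, p (n + 2) = a (n + 1) * p (n + 1) + p n)
    (hq0 : q 0 = 0) (hq1 : q 1 = 1)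
    (hq : ∀ n, q (n + 2) = a (n + 1) * q (n + 1) + q n)
    (α : ℝ) (hα : 0 < α)
    (hzsabs : ∀ n, 1 ≤ n → 1 + α < ‖zs n‖)
    (hqinf : Filter.Tendsto (fun n => ‖q (n + 1)‖) Filter.atTop Filter.atTop) :
    (Set.range zs).Finite := by
  classical
  have hΓK : ∀ x : ℂ, x ∈ Γ → x ∈ K := by
    intro x hx; rw [hK]; exact Subfield.subset_closure hx
  -- replace coefficients by ones in Γ
  obtain ⟨A, B, C, hAΓ, hBΓ, hCΓ, hA0, heq⟩ :
      ∃ A B C : ℂ, A ∈ Γ ∧ B ∈ Γ ∧ C ∈ Γ ∧ A ≠ 0 ∧ A * z ^ 2 + B * z + C = 0 := by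
    obtain ⟨A, B, C, hA, hB, hC, hA0, heq⟩ := hsurd
    have hrep : ∀ x : ℂ, x ∈ K → ∃ u v : ℂ, u ∈ Γ ∧ v ∈ Γ ∧ v ≠ 0 ∧ x * v = u := by
      intro x hx
      rw [hK, Subfield.mem_closure_iff] at hx
      obtain ⟨u, hu, v, hv, huv⟩ := hx
      rw [Subring.closure_eq] at hu hv
      by_cases hv0 : v = 0
      · refine ⟨0, 1, Γ.zero_mem, Γ.one_mem, one_ne_zero, ?_⟩
        rw [← huv, hv0]; simp
      · exact ⟨u, v, hu, hv, hv0, by rw [← huv]; field_simp⟩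
    obtain ⟨uA, vA, huA, hvA, hvA0, hArep⟩ := hrep A hA
    obtain ⟨uB, vB, huB, hvB, hvB0, hBrep⟩ := hrep B hB
    obtain ⟨uC, vC, huC, hvC, hvC0, hCrep⟩ := hrep C hC
    have huA0 : uA ≠ 0 := by
      intro h; rw [h] at hArep
      exact hA0 ((mul_eq_zero.mp hArep).resolve_right hvA0)
    refine ⟨uA * vB * vC, uB * vA * vC, uC * vA * vB,
      Γ.mul_mem (Γ.mul_mem huA hvB) hvC,
      Γ.mul_mem (Γ.mul_mem huB hvA) hvC,
      Γ.mul_mem (Γ.mul_mem huC hvA) hvB,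
      mul_ne_zero (mul_ne_zero huA0 hvB0) hvC0, ?_⟩
    linear_combination (vA*vB*vC) * heq - (vB*vC*z^2) * hArep - (vA*vC*z) * hBrep - (vA*vB) * hCrep
  -- p q in Γ
  have hpqΓ : ∀ n, p n ∈ Γ ∧ q n ∈ Γ := by
    have key : ∀ n, (p n ∈ Γ ∧ q n ∈ Γ) ∧ (p (n+1) ∈ Γ ∧ q (n+1) ∈ Γ) := by
      intro n
      induction n with
      | zero =>
        refine ⟨⟨?_, ?_⟩, ?_, ?_⟩
        · rw [hp0]; exact Γ.one_mem
        · rw [hq0]; exact Γ.zero_mem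
        · rw [hp1]; exact haΓ 0
        · rw [hq1]; exact Γ.one_mem
      | succ k ih =>
        refine ⟨ih.2, ?_, ?_⟩
        · rw [hp k]; exact Γ.add_mem (Γ.mul_mem (haΓ _) ih.2.1) ih.1.1
        · rw [hq k]; exact Γ.add_mem (Γ.mul_mem (haΓ _) ih.2.2) ih.1.2
    exact fun n => (key n).1
  have hpΓ : ∀ n, p n ∈ Γ := fun n => (hpqΓ n).1
  have hqΓ : ∀ n, q n ∈ Γ := fun n => (hpqΓ n).2
  -- basic recursion identity
  have hstep : ∀ n, a (n+1) * zs (n+2) + 1 = zs (n+1) * zs (n+2) := by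
    intro n
    rw [haz (n+1)]
    field_simp [hzsne (n+2)]
    ring
  -- convergents identity: z * D n = N n
  have hD : ∀ n, z * (q (n+1) * zs (n+1) + q n) = p (n+1) * zs (n+1) + p n := by
    intro n
    induction n with
    | zero =>
      rw [hq1, hq0, hp1, hp0, haz 0, hzs0]
      field_simp [hzsne 1]
      ring
    | succ k ih =>
      rw [hq k, hp k]
      linear_combination zs (k+2) * ih + (z * q (k+1) - p (k+1)) * hstep k
  have hDrec : ∀ n, q (n+2) * zs (n+2) + q (n+1) = zs (n+2) * (q (n+1) * zs (n+1) + q n) := by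
    intro n
    rw [hq n]
    linear_combination (q (n+1)) * hstep n
  have h1α : (0:ℝ) < 1 + α := by linarith
  have habsD : ∀ n, (1+α)^(n+1) ≤ ‖q (n+1) * zs (n+1) + q n‖ := by
    intro n
    induction n with
    | zero =>
      rw [hq1, hq0]
      simpa using (hzsabs 1 le_rfl).le
    | succ k ih =>
      rw [hDrec k, norm_mul]
      calc (1+α)^(k+2) = (1+α) * (1+α)^(k+1) := by ring
        _ ≤ ‖zs (k+2)‖ * ‖q (k+1) * zs (k+1) + q k‖ := by
            apply mul_le_mul (hzsabs (k+2) (by omega)).le ih (by positivity) (by positivity)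
  have hDone : ∀ n, (1:ℝ) ≤ ‖q (n+1) * zs (n+1) + q n‖ := by
    intro n
    calc (1:ℝ) ≤ (1+α)^(n+1) := one_le_pow₀ (by linarith)
      _ ≤ _ := habsD n
  have hDne : ∀ n, q (n+1) * zs (n+1) + q n ≠ 0 := by
    intro n h
    have := hDone n
    rw [h] at this
    norm_num at this
  -- determinant
  have he : ∀ n, p (n+1) * q n - p n * q (n+1) = -(-1:ℂ)^n := by
    intro n
    induction n with
    | zero => rw [hp1, hp0, hq1, hq0]; ring
    | succ k ih =>
      rw [hp k, hq k, pow_succ]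
      linear_combination -ih
  have hδ : ∀ n, (q (n+1) * z - p (n+1)) * (q (n+1) * zs (n+1) + q n) = (-1:ℂ)^n := by
    intro n
    linear_combination q (n+1) * hD n - he n
  have habsδ : ∀ n, ‖q (n+1) * z - p (n+1)‖ * ‖q (n+1) * zs (n+1) + q n‖ = 1 := by
    intro n
    rw [← norm_mul, hδ n]
    simp
  have hδne : ∀ n, q (n+1) * z - p (n+1) ≠ 0 := by
    intro n h
    have := habsδ n
    rw [h] at this; simp at this
  have hδsmall : ∀ n, ‖q (n+1) * z - p (n+1)‖ ≤ 1 := by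
    intro n
    have h1 := habsδ n
    have h2 := hDone n
    nlinarith [norm_nonneg (q (n+1) * z - p (n+1))]
  -- the bound |q (n+1)| ≤ M |D n|
  set M : ℝ := (1+α)/(α*(2+α)) with hMdef
  have hM : 0 < M := by positivity
  have hMkey : M * (1+α)^2 = M + (1+α) := by
    rw [hMdef]; field_simp; ring
  have hM1 : 1 ≤ M * (1+α) := by nlinarith
  have hqM : ∀ n, ‖q (n+1)‖ ≤ M * ‖q (n+1) * zs (n+1) + q n‖ := by
    intro n
    induction n with
    | zero =>
      rw [hq1, hq0]
      simp only [one_mul, add_zero, norm_one]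
      calc (1:ℝ) ≤ M * (1+α) := hM1
        _ ≤ M * ‖zs 1‖ := by
            apply mul_le_mul_of_nonneg_left (hzsabs 1 le_rfl).le hM.le
    | succ k ih =>
      have hrel : q (k+2) * zs (k+2) = (q (k+2) * zs (k+2) + q (k+1)) - q (k+1) := by ring
      have htri : ‖q (k+2)‖ * ‖zs (k+2)‖ ≤
          ‖q (k+2) * zs (k+2) + q (k+1)‖ + ‖q (k+1)‖ := by
        rw [← norm_mul, hrel]
        simpa using norm_add_le (q (k+2) * zs (k+2) + q (k+1)) (-(q (k+1)))
      have hY : ‖q (k+2) * zs (k+2) + q (k+1)‖ =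
          ‖zs (k+2)‖ * ‖q (k+1) * zs (k+1) + q k‖ := by
        rw [hDrec k, norm_mul]
      have hs : 1 + α < ‖zs (k+2)‖ := hzsabs (k+2) (by omega)
      have hYd := hDone k
      have hX : (0:ℝ) ≤ ‖q (k+2)‖ := norm_nonneg _
      have hs0 : (0:ℝ) < ‖zs (k+2)‖ := by linarith
      have hkey2 : ‖zs (k+2)‖ + M ≤ M * ‖zs (k+2)‖^2 := by
        nlinarith [mul_nonneg (by linarith : (0:ℝ) ≤ ‖zs (k+2)‖ - (1+α))
          (by nlinarith [hM1] : (0:ℝ) ≤ M*(‖zs (k+2)‖ + (1+α)) - 1)]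
      have hchain : ‖q (k+2)‖ * ‖zs (k+2)‖ ≤
          (M * (‖zs (k+2)‖ * ‖q (k+1) * zs (k+1) + q k‖)) * ‖zs (k+2)‖ := by
        calc ‖q (k+2)‖ * ‖zs (k+2)‖
            ≤ ‖q (k+2) * zs (k+2) + q (k+1)‖ + ‖q (k+1)‖ := htri
          _ = ‖zs (k+2)‖ * ‖q (k+1) * zs (k+1) + q k‖
              + ‖q (k+1)‖ := by rw [hY]
          _ ≤ ‖zs (k+2)‖ * ‖q (k+1) * zs (k+1) + q k‖
              + M * ‖q (k+1) * zs (k+1) + q k‖ := by linarith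
          _ = (‖zs (k+2)‖ + M) * ‖q (k+1) * zs (k+1) + q k‖ := by ring
          _ ≤ (M * ‖zs (k+2)‖^2) * ‖q (k+1) * zs (k+1) + q k‖ := by
              apply mul_le_mul_of_nonneg_right hkey2 (by linarith)
          _ = (M * (‖zs (k+2)‖ * ‖q (k+1) * zs (k+1) + q k‖)) * ‖zs (k+2)‖ := by ring
      rw [hY]
      exact le_of_mul_le_mul_right hchain hs0
  -- quadratic satisfied by zs (n+1)
  have hquad : ∀ n, gg A B C p q (n+1) * zs (n+1)^2 + bb A B C p q n * zs (n+1)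
      + gg A B C p q n = 0 := by
    intro n
    have h := hD n
    simp only [gg, bb]
    linear_combination (q (n+1) * zs (n+1) + q n)^2 * heq
      - (A * ((p (n+1) * zs (n+1) + p n) + z * (q (n+1) * zs (n+1) + q n))
         + B * (q (n+1) * zs (n+1) + q n)) * h
  have hgid : ∀ n, gg A B C p q (n+1) = -((q (n+1)*z - p (n+1)) * (q (n+1) * (2*A*z+B)))
      + A*(q (n+1)*z - p (n+1))^2 := by
    intro n
    simp only [gg]
    linear_combination (q (n+1))^2 * heq
  set R0 : ℝ := max (M * ‖2*A*z+B‖ + ‖A‖) (‖A‖) with hR0def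
  have hR0nn : (0:ℝ) ≤ R0 := le_trans (norm_nonneg _) (le_max_right _ _)
  have hgbound : ∀ n, ‖gg A B C p q n‖ ≤ R0 := by
    intro n
    cases n with
    | zero =>
      have h0 : gg A B C p q 0 = A := by simp [gg, hp0, hq0]
      rw [h0]; exact le_max_right _ _
    | succ n =>
      rw [hgid n]
      have hδnn := norm_nonneg (q (n+1)*z - p (n+1))
      have h2 := mul_le_mul_of_nonneg_left (hqM n) hδnn
      have h3 : ‖q (n+1)*z - p (n+1)‖ * (M * ‖q (n+1) * zs (n+1) + q n‖) = M := by
        calc ‖q (n+1)*z - p (n+1)‖ * (M * ‖q (n+1) * zs (n+1) + q n‖)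
            = M * (‖q (n+1)*z - p (n+1)‖ * ‖q (n+1) * zs (n+1) + q n‖) := by ring
          _ = M := by rw [habsδ n, mul_one]
      have h1 : ‖q (n+1)*z - p (n+1)‖ * ‖q (n+1)‖ ≤ M := by
        rw [← h3]; exact h2
      have hWnn := norm_nonneg (2*A*z+B)
      have hAnn := norm_nonneg A
      have hs := hδsmall n
      calc ‖-((q (n+1)*z - p (n+1)) * (q (n+1) * (2*A*z+B))) + A*(q (n+1)*z - p (n+1))^2‖
          ≤ ‖-((q (n+1)*z - p (n+1)) * (q (n+1) * (2*A*z+B)))‖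
            + ‖A*(q (n+1)*z - p (n+1))^2‖ := norm_add_le _ _
        _ = ‖q (n+1)*z - p (n+1)‖ * ‖q (n+1)‖ * ‖2*A*z+B‖
            + ‖A‖ * ‖q (n+1)*z - p (n+1)‖^2 := by
            rw [norm_neg, norm_mul, norm_mul, norm_mul, norm_pow]; ring
        _ ≤ M * ‖2*A*z+B‖ + ‖A‖ := by
            have hsq : ‖q (n+1)*z - p (n+1)‖^2 ≤ 1 := by nlinarith
            have t1 := mul_le_mul_of_nonneg_right h1 hWnn
            have t2 := mul_le_mul_of_nonneg_left hsq hAnn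
            nlinarith
        _ ≤ R0 := le_max_left _ _
  have hbbsq : ∀ n, (bb A B C p q n)^2 = 4 * (gg A B C p q (n+1)) * (gg A B C p q n) + (B^2 - 4*A*C) := by
    intro n
    have hsq : (p (n+1) * q n - p n * q (n+1))^2 = 1 := by
      rw [he n, neg_sq, ← pow_mul, mul_comm n 2, pow_mul]
      norm_num
    simp only [gg, bb]
    linear_combination (B^2 - 4*A*C) * hsq
  have hbbound : ∀ n, ‖bb A B C p q n‖ ≤ Real.sqrt (4*R0^2 + ‖B^2-4*A*C‖) := by
    intro n
    have h2 : ‖bb A B C p q n‖^2 ≤ 4*R0^2 + ‖B^2-4*A*C‖ := by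
      have he2 : ‖bb A B C p q n‖^2 = ‖(bb A B C p q n)^2‖ := (norm_pow _ _).symm
      rw [he2, hbbsq n]
      calc ‖4 * gg A B C p q (n+1) * gg A B C p q n + (B^2-4*A*C)‖
          ≤ ‖4 * gg A B C p q (n+1) * gg A B C p q n‖ + ‖B^2-4*A*C‖ :=
            norm_add_le _ _
        _ ≤ 4*R0^2 + ‖B^2-4*A*C‖ := by
            simp only [norm_mul]
            have h4 : ‖(4:ℂ)‖ = 4 := by norm_num
            rw [h4]
            nlinarith [hgbound (n+1), hgbound n,
              norm_nonneg (gg A B C p q (n+1)),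
              norm_nonneg (gg A B C p q n)]
    have hb0 := norm_nonneg (bb A B C p q n)
    have h5 : ‖bb A B C p q n‖ = Real.sqrt (‖bb A B C p q n‖^2) :=
      (Real.sqrt_sq hb0).symm
    rw [h5]
    exact Real.sqrt_le_sqrt h2
  -- leading coefficient nonzero
  have hgne : ∀ n, gg A B C p q (n+1) ≠ 0 := by
    intro n
    set z' : ℂ := -B/A - z with hz'def
    have hBz : B = -(A*(z+z')) := by
      rw [hz'def]; field_simp; ring
    have hCz : C = A*z*z' := by
      linear_combination heq - z * hBz
    have hfac : gg A B C p q (n+1) = A * (p (n+1) - z*q (n+1)) * (p (n+1) - z'*q (n+1)) := by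
      simp only [gg]
      linear_combination (p (n+1)*q (n+1)) * hBz + (q (n+1))^2 * hCz
    have hf1 : p (n+1) - z*q (n+1) ≠ 0 := by
      intro h; apply hδne n; linear_combination -h
    have hf2 : p (n+1) - z'*q (n+1) ≠ 0 := by
      intro h
      by_cases hq0' : q (n+1) = 0
      · exact hδne n (by rw [hq0']; linear_combination -h - z'*hq0')
      · apply hzK
        have hz'eq : z' = p (n+1) / q (n+1) := by
          field_simp
          linear_combination -h
        have hz'K : z' ∈ K := by
          rw [hz'eq]
          exact K.div_mem (hΓK _ (hpΓ (n+1))) (hΓK _ (hqΓ (n+1)))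
        have hzexpr : z = -B/A - z' := by rw [hz'def]; ring
        rw [hzexpr]
        exact K.sub_mem (K.div_mem (K.neg_mem (hΓK _ hBΓ)) (hΓK _ hAΓ)) hz'K
    rw [hfac]
    exact mul_ne_zero (mul_ne_zero hA0 hf1) hf2
  -- assemble
  set R2 : ℝ := max R0 (Real.sqrt (4*R0^2 + ‖B^2-4*A*C‖)) with hR2def
  have hSfin := discrete_bounded_finite Γ hΓdisc R2
  have hggΓ : ∀ n, gg A B C p q n ∈ Γ := by
    intro n; simp only [gg]
    exact Γ.add_mem (Γ.add_mem (Γ.mul_mem hAΓ (Γ.pow_mem (hpΓ n) 2))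
      (Γ.mul_mem (Γ.mul_mem hBΓ (hpΓ n)) (hqΓ n))) (Γ.mul_mem hCΓ (Γ.pow_mem (hqΓ n) 2))
  have h2Γ : (2:ℂ) ∈ Γ := by
    have h := Γ.add_mem Γ.one_mem Γ.one_mem
    norm_num at h
    norm_num
  have hbbΓ : ∀ n, bb A B C p q n ∈ Γ := by
    intro n; simp only [bb]
    refine Γ.add_mem (Γ.add_mem ?_ ?_) ?_
    · exact Γ.mul_mem (Γ.mul_mem (Γ.mul_mem h2Γ hAΓ) (hpΓ _)) (hpΓ _)
    · exact Γ.mul_mem hBΓ (Γ.add_mem (Γ.mul_mem (hpΓ _) (hqΓ _)) (Γ.mul_mem (hpΓ _) (hqΓ _)))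
    · exact Γ.mul_mem (Γ.mul_mem (Γ.mul_mem h2Γ hCΓ) (hqΓ _)) (hqΓ _)
  have hgS : ∀ n, gg A B C p q n ∈ {x : ℂ | x ∈ Γ ∧ ‖x‖ ≤ R2} :=
    fun n => ⟨hggΓ n, (hgbound n).trans (le_max_left _ _)⟩
  have hbS : ∀ n, bb A B C p q n ∈ {x : ℂ | x ∈ Γ ∧ ‖x‖ ≤ R2} :=
    fun n => ⟨hbbΓ n, (hbbound n).trans (le_max_right _ _)⟩
  have hTfin : ({x : ℂ | ∃ u v w : ℂ, (u ∈ Γ ∧ ‖u‖ ≤ R2) ∧ (v ∈ Γ ∧ ‖v‖ ≤ R2)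
      ∧ (w ∈ Γ ∧ ‖w‖ ≤ R2) ∧ u ≠ 0 ∧ u*x^2+v*x+w = 0}).Finite := by
    apply Set.Finite.subset (hSfin.biUnion (fun u _ => hSfin.biUnion (fun v _ =>
      hSfin.biUnion (fun w _ => quad_roots_finite u v w))))
    rintro x ⟨u, v, w, hu, hv, hw, h0, hx⟩
    exact Set.mem_biUnion hu (Set.mem_biUnion hv (Set.mem_biUnion hw ⟨h0, hx⟩))
  apply Set.Finite.subset (hTfin.insert z)
  rintro x ⟨n, rfl⟩
  cases n with
  | zero => exact Set.mem_insert_iff.mpr (Or.inl hzs0)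
  | succ m =>
    exact Set.mem_insert_iff.mpr (Or.inr ⟨gg A B C p q (m+1), bb A B C p q m, gg A B C p q m,
      hgS _, hbS _, hgS _, hgne m, hquad m⟩)
end

section
/- Let Γ be a discrete subring of ℂ, K the subfield of ℂ generated by Γ, and f : ℂ → Γ a Γ-valued algorithm. Let z be a quadratic surd over K and let (z_n)_{n≥0} be the iteration sequence of z with respect to f, with partial quotients (a_n)_{n≥0} and Q-pair (p_n), (q_n). Suppose: (i) there exists α > 0 such that |z_n| > 1 + α for all n ≥ 1; and (ii) |q_n| → ∞ as n → ∞. Then the sequence (a_n)_{n≥0} is eventually periodic, i.e., there exist m ≥ 0 and k ≥ 1 such that a_{n+k} = a_n for all n ≥ m. -/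
/-- A nonzero quadratic cannot have three distinct roots. -/
lemma aux_three_roots (A₀ B₀ C₀ w₁ w₂ w₃ : ℂ)
    (h1 : A₀ * w₁ ^ 2 + B₀ * w₁ + C₀ = 0)
    (h2 : A₀ * w₂ ^ 2 + B₀ * w₂ + C₀ = 0)
    (h3 : A₀ * w₃ ^ 2 + B₀ * w₃ + C₀ = 0)
    (hnd : ¬(A₀ = 0 ∧ B₀ = 0 ∧ C₀ = 0)) :
    w₁ = w₂ ∨ w₁ = w₃ ∨ w₂ = w₃ := by
  by_contra hcon
  push_neg at hcon
  obtain ⟨d12, d13, d23⟩ := hcon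
  apply hnd
  have e12 : A₀ * (w₁ + w₂) + B₀ = 0 := by
    have h : (w₁ - w₂) * (A₀ * (w₁ + w₂) + B₀) = 0 := by linear_combination h1 - h2
    rcases mul_eq_zero.mp h with h | h
    · exact absurd (sub_eq_zero.mp h) d12
    · exact h
  have e13 : A₀ * (w₁ + w₃) + B₀ = 0 := by
    have h : (w₁ - w₃) * (A₀ * (w₁ + w₃) + B₀) = 0 := by linear_combination h1 - h3
    rcases mul_eq_zero.mp h with h | h
    · exact absurd (sub_eq_zero.mp h) d13
    · exact h
  have hA : A₀ = 0 := by
    have h : A₀ * (w₂ - w₃) = 0 := by linear_combination e12 - e13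
    rcases mul_eq_zero.mp h with h | h
    · exact h
    · exact absurd (sub_eq_zero.mp h) d23
  have hB : B₀ = 0 := by rw [hA] at e12; simpa using e12
  have hC : C₀ = 0 := by rw [hA, hB] at h1; simpa using h1
  exact ⟨hA, hB, hC⟩

/-- A discrete subring of ℂ meets a closed ball in finitely many points. -/
lemma aux_finite_ball (Γ : Subring ℂ) (hΓdisc : DiscreteTopology Γ) (R : ℝ) :
    {x : ℂ | x ∈ Γ ∧ ‖x‖ ≤ R}.Finite := by
  haveI : DiscreteTopology (Γ.toAddSubgroup : Set ℂ) := hΓdisc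
  have hclosed : IsClosed (Γ : Set ℂ) :=
    AddSubgroup.isClosed_of_discrete (H := Γ.toAddSubgroup)
  have hcompact : IsCompact ((Γ : Set ℂ) ∩ Metric.closedBall (0 : ℂ) R) :=
    (isCompact_closedBall (0 : ℂ) R).inter_left hclosed
  have hdisc : DiscreteTopology ((Γ : Set ℂ) ∩ Metric.closedBall (0 : ℂ) R : Set ℂ) :=
    DiscreteTopology.of_subset hΓdisc Set.inter_subset_left
  have hfin := hcompact.finite (isDiscrete_iff_discreteTopology.mpr hdisc)
  refine hfin.subset ?_
  rintro x ⟨h1, h2⟩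
  refine ⟨h1, ?_⟩
  simpa [Complex.dist_eq] using h2

set_option maxHeartbeats 1000000 in
/-- Lagrange-type theorem, algorithmic case: if `z` is a quadratic surd over
the subfield `K` generated by a discrete subring `Γ`, and the iteration
sequence of `z` with respect to a `Γ`-valued algorithm `f` satisfies
`|zₙ| > 1 + α` for all `n ≥ 1` (some `α > 0`) and `|qₙ| → ∞`, then the
sequence of partial quotients is eventually periodic.
(Q-pairs are indexed with offset one, so `q (n+1) = qₙ`.) -/
theorem quadratic_surd_eventually_periodic (Γ : Subring ℂ) (hΓdisc : DiscreteTopology Γ)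
    (K : Subfield ℂ) (hK : K = Subfield.closure (Γ : Set ℂ))
    (f : ℂ → ℂ) (hfΓ : ∀ w, f w ∈ Γ) (hfalg : ∀ w, ‖w - f w‖ ≤ 1)
    (z : ℂ) (hzK : z ∉ K)
    (hsurd : ∃ A B C : ℂ, A ∈ K ∧ B ∈ K ∧ C ∈ K ∧ A ≠ 0 ∧
      A * z ^ 2 + B * z + C = 0)
    (zs : ℕ → ℂ) (hzs0 : zs 0 = z)
    (hzsrec : ∀ n, zs (n + 1) = (zs n - f (zs n))⁻¹)
    (a : ℕ → ℂ) (ha : ∀ n, a n = f (zs n))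
    (p q : ℕ → ℂ)
    (hp0 : p 0 = 1) (hp1 : p 1 = a 0)
    (hp : ∀ n, p (n + 2) = a (n + 1) * p (n + 1) + p n)
    (hq0 : q 0 = 0) (hq1 : q 1 = 1)
    (hq : ∀ n, q (n + 2) = a (n + 1) * q (n + 1) + q n)
    (α : ℝ) (hα : 0 < α)
    (hzsabs : ∀ n, 1 ≤ n → 1 + α < ‖zs n‖)
    (hqinf : Filter.Tendsto (fun n => ‖q (n + 1)‖) Filter.atTop Filter.atTop) :
    ∃ m k : ℕ, 1 ≤ k ∧ ∀ n, m ≤ n → a (n + k) = a n := by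
  -- Γ lies in K
  have hΓK : ∀ x : ℂ, x ∈ Γ → x ∈ K := by
    intro x hx; rw [hK]; exact Subfield.subset_closure hx
  have haΓ : ∀ n, a n ∈ Γ := by intro n; rw [ha n]; exact hfΓ (zs n)
  have haK : ∀ n, a n ∈ K := fun n => hΓK _ (haΓ n)
  -- iterates stay outside K
  have hzsK : ∀ n, zs n ∉ K := by
    intro n
    induction n with
    | zero => rw [hzs0]; exact hzK
    | succ n ih =>
      intro hmem
      apply ih
      have hinv : (zs (n + 1))⁻¹ = zs n - f (zs n) := by rw [hzsrec n, inv_inv]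
      have h2 : zs n - f (zs n) ∈ K := hinv ▸ K.inv_mem hmem
      have h3 : zs n = (zs n - f (zs n)) + f (zs n) := by ring
      rw [h3]; exact K.add_mem h2 (hΓK _ (hfΓ _))
  have hne : ∀ n, zs n - a n ≠ 0 := by
    intro n h0
    rw [sub_eq_zero] at h0
    exact hzsK n (by rw [h0]; exact haK n)
  have hmul : ∀ n, zs (n + 1) * (zs n - a n) = 1 := by
    intro n
    have h := hne n
    rw [ha n] at h
    rw [hzsrec n, ha n]
    exact inv_mul_cancel₀ h
  -- key linear relation for errors  e n = p n - z q n
  have hE : ∀ n, (p (n + 1) - z * q (n + 1)) * zs (n + 1) + (p n - z * q n) = 0 := by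
    intro n
    induction n with
    | zero =>
      have k0 := hmul 0
      rw [hzs0] at k0
      rw [hp1, hq1, hp0, hq0]
      linear_combination -k0
    | succ n ih =>
      have key := hmul (n + 1)
      rw [hp n, hq n]
      linear_combination zs (n + 2) * ih - (p (n + 1) - z * q (n + 1)) * key
  -- determinant identity
  have hpq : ∀ n, p (n + 1) * q n - p n * q (n + 1) = (-1 : ℂ) ^ (n + 1) := by
    intro n
    induction n with
    | zero => rw [hp1, hq1, hp0, hq0]; ring
    | succ n ih =>
      rw [hp n, hq n]
      linear_combination -ih
  have hdet : ∀ n, q (n + 1) * (p n - z * q n) - q n * (p (n + 1) - z * q (n + 1))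
      = (-1 : ℂ) ^ n := by
    intro n
    linear_combination -hpq n
  -- abs of iterates
  have habs_zs : ∀ n : ℕ, 1 + α ≤ ‖(zs (n + 1))‖ :=
    fun n => le_of_lt (hzsabs (n + 1) (by omega))
  -- abs recursion for errors
  have hEabs : ∀ n, ‖(p (n + 1) - z * q (n + 1))‖ * ‖(zs (n + 1))‖
      = ‖(p n - z * q n)‖ := by
    intro n
    have h2 : (p (n + 1) - z * q (n + 1)) * zs (n + 1) = -(p n - z * q n) := by
      linear_combination hE n
    rw [← norm_mul, h2, norm_neg]
  have hqEabs : ∀ n, (‖(q n)‖ * ‖(p (n + 1) - z * q (n + 1))‖)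
      * ‖(zs (n + 1))‖ = ‖(q n)‖ * ‖(p n - z * q n)‖ := by
    intro n
    rw [mul_assoc, hEabs n]
  have he1 : ∀ n, ‖(p n - z * q n)‖ ≤ 1 := by
    intro n
    induction n with
    | zero => rw [hp0, hq0]; simp
    | succ n ih =>
      have h := hEabs n
      have hzs := habs_zs n
      nlinarith [norm_nonneg (p (n + 1) - z * q (n + 1))]
  -- bound on q n * e n
  set M : ℝ := (1 + α) / ((1 + α) ^ 2 - 1) with hMdef
  have hden : (0 : ℝ) < (1 + α) ^ 2 - 1 := by nlinarith
  have hM : 0 < M := div_pos (by linarith) hden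
  have hMid : M * (1 + α) ^ 2 = (1 + α) + M := by
    rw [hMdef]; field_simp; ring
  clear_value M
  have hu : ∀ n, ‖(q n)‖ * ‖(p n - z * q n)‖ ≤ M := by
    intro n
    induction n with
    | zero => rw [hq0]; simpa using le_of_lt hM
    | succ n ih =>
      have hzs := habs_zs n
      have hx : ‖(q n)‖ * ‖(p (n + 1) - z * q (n + 1))‖ * (1 + α) ≤ M := by
        have h1 := hqEabs n
        have h3 : 0 ≤ ‖(q n)‖ * ‖(p (n + 1) - z * q (n + 1))‖ := by
          positivity
        nlinarith
      have hb : (q (n + 1) * (p (n + 1) - z * q (n + 1))) * zs (n + 1)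
          = -((-1 : ℂ) ^ n + q n * (p (n + 1) - z * q (n + 1))) := by
        linear_combination q (n + 1) * hE n - hdet n
      have hb' : (‖(q (n + 1))‖ * ‖(p (n + 1) - z * q (n + 1))‖)
          * ‖(zs (n + 1))‖
          = ‖((-1 : ℂ) ^ n + q n * (p (n + 1) - z * q (n + 1)))‖ := by
        rw [← norm_mul, ← norm_mul, hb, norm_neg]
      have habs1 : ‖((-1 : ℂ) ^ n)‖ = 1 := by simp
      have htri : ‖((-1 : ℂ) ^ n + q n * (p (n + 1) - z * q (n + 1)))‖
          ≤ 1 + ‖(q n)‖ * ‖(p (n + 1) - z * q (n + 1))‖ := by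
        refine (norm_add_le _ _).trans ?_
        rw [habs1, norm_mul]
      have hu1nn : 0 ≤ ‖(q (n + 1))‖ * ‖(p (n + 1) - z * q (n + 1))‖ := by
        positivity
      have key1 : ‖(q (n + 1))‖ * ‖(p (n + 1) - z * q (n + 1))‖ * (1 + α)
          ≤ 1 + ‖(q n)‖ * ‖(p (n + 1) - z * q (n + 1))‖ := by
        nlinarith
      have h1α : (0 : ℝ) ≤ 1 + α := by linarith
      nlinarith [mul_le_mul_of_nonneg_right key1 h1α]
  -- derived bounds, unsplit form
  have huU : ∀ n, ‖(q n * (p n - z * q n))‖ ≤ M := by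
    intro n; rw [norm_mul]; exact hu n
  have hx' : ∀ n, ‖(q n * (p (n + 1) - z * q (n + 1)))‖ ≤ M := by
    intro n
    rw [norm_mul]
    have hzs := habs_zs n
    have h1 := hqEabs n
    have h3 : 0 ≤ ‖(q n)‖ * ‖(p (n + 1) - z * q (n + 1))‖ := by positivity
    nlinarith [hu n]
  have hq1e : ∀ n, ‖(q (n + 1) * (p n - z * q n))‖ ≤ 1 + M := by
    intro n
    have hb : q (n + 1) * (p n - z * q n)
        = (-1 : ℂ) ^ n + q n * (p (n + 1) - z * q (n + 1)) := by
      linear_combination hdet n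
    rw [hb]
    refine (norm_add_le _ _).trans ?_
    have habs1 : ‖((-1 : ℂ) ^ n)‖ = 1 := by simp
    rw [habs1]
    linarith [hx' n]
  -- get Γ-valued quadratic coefficients
  have hrep : ∀ x : ℂ, x ∈ K → ∃ s t : ℂ, s ∈ Γ ∧ t ∈ Γ ∧ t ≠ 0 ∧ x * t = s := by
    intro x hx
    rw [hK, Subfield.mem_closure_iff] at hx
    obtain ⟨y, hy, t, ht, hyt⟩ := hx
    rw [Subring.closure_eq] at hy ht
    by_cases h0 : t = 0
    · refine ⟨0, 1, Γ.zero_mem, Γ.one_mem, one_ne_zero, ?_⟩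
      subst h0
      simp at hyt
      rw [← hyt]; ring
    · refine ⟨y, t, hy, ht, h0, ?_⟩
      rw [← hyt]
      field_simp
  obtain ⟨A', B', C', hA'K, hB'K, hC'K, hA'0, hquad'⟩ := hsurd
  obtain ⟨sA, tA, hsA, htA, htA0, hA⟩ := hrep A' hA'K
  obtain ⟨sB, tB, hsB, htB, htB0, hB⟩ := hrep B' hB'K
  obtain ⟨sC, tC, hsC, htC, htC0, hC⟩ := hrep C' hC'K
  set A : ℂ := sA * tB * tC with hAdef
  set B : ℂ := sB * tA * tC with hBdef
  set C : ℂ := sC * tA * tB with hCdef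
  have hAΓ : A ∈ Γ := Γ.mul_mem (Γ.mul_mem hsA htB) htC
  have hBΓ : B ∈ Γ := Γ.mul_mem (Γ.mul_mem hsB htA) htC
  have hCΓ : C ∈ Γ := Γ.mul_mem (Γ.mul_mem hsC htA) htB
  have hsA0 : sA ≠ 0 := by
    intro h0
    rw [h0] at hA
    exact hA'0 (by rcases mul_eq_zero.mp hA with h | h; exact h; exact absurd h htA0)
  have hA0 : A ≠ 0 := mul_ne_zero (mul_ne_zero hsA0 htB0) htC0
  have hquad : A * z ^ 2 + B * z + C = 0 := by
    rw [hAdef, hBdef, hCdef]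
    linear_combination (tA * tB * tC) * hquad' - z ^ 2 * tB * tC * hA - z * tA * tC * hB
      - tA * tB * hC
  clear_value A B C
  have h2Γ : (2 : ℂ) ∈ Γ := by
    have h := Γ.add_mem Γ.one_mem Γ.one_mem
    rw [one_add_one_eq_two] at h
    exact h
  -- p, q in Γ
  have hpqΓ : ∀ n, (p n ∈ Γ ∧ q n ∈ Γ) ∧ (p (n + 1) ∈ Γ ∧ q (n + 1) ∈ Γ) := by
    intro n
    induction n with
    | zero =>
      refine ⟨⟨?_, ?_⟩, ?_, ?_⟩
      · rw [hp0]; exact Γ.one_mem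
      · rw [hq0]; exact Γ.zero_mem
      · rw [hp1]; exact haΓ 0
      · rw [hq1]; exact Γ.one_mem
    | succ n ih =>
      refine ⟨ih.2, ?_, ?_⟩
      · rw [hp n]; exact Γ.add_mem (Γ.mul_mem (haΓ _) ih.2.1) ih.1.1
      · rw [hq n]; exact Γ.add_mem (Γ.mul_mem (haΓ _) ih.2.2) ih.1.2
  have hpΓ : ∀ n, p n ∈ Γ := fun n => (hpqΓ n).1.1
  have hqΓ : ∀ n, q n ∈ Γ := fun n => (hpqΓ n).1.2
  -- the shifted quadratics
  set AA : ℕ → ℂ := fun n => A * p (n + 1) ^ 2 + B * (p (n + 1) * q (n + 1)) + C * q (n + 1) ^ 2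
    with hAAdef
  set BB : ℕ → ℂ := fun n => 2 * A * (p (n + 1) * p n)
      + B * (p (n + 1) * q n + p n * q (n + 1)) + 2 * C * (q (n + 1) * q n) with hBBdef
  set CC : ℕ → ℂ := fun n => A * p n ^ 2 + B * (p n * q n) + C * q n ^ 2 with hCCdef
  clear_value AA BB CC
  have hAAΓ : ∀ n, AA n ∈ Γ := by
    intro n
    rw [hAAdef]
    exact Γ.add_mem (Γ.add_mem (Γ.mul_mem hAΓ (Γ.pow_mem (hpΓ _) 2))
      (Γ.mul_mem hBΓ (Γ.mul_mem (hpΓ _) (hqΓ _)))) (Γ.mul_mem hCΓ (Γ.pow_mem (hqΓ _) 2))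
  have hBBΓ : ∀ n, BB n ∈ Γ := by
    intro n
    rw [hBBdef]
    refine Γ.add_mem (Γ.add_mem ?_ ?_) ?_
    · exact Γ.mul_mem (Γ.mul_mem h2Γ hAΓ) (Γ.mul_mem (hpΓ _) (hpΓ _))
    · exact Γ.mul_mem hBΓ (Γ.add_mem (Γ.mul_mem (hpΓ _) (hqΓ _)) (Γ.mul_mem (hpΓ _) (hqΓ _)))
    · exact Γ.mul_mem (Γ.mul_mem h2Γ hCΓ) (Γ.mul_mem (hqΓ _) (hqΓ _))
  have hCCΓ : ∀ n, CC n ∈ Γ := by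
    intro n
    rw [hCCdef]
    exact Γ.add_mem (Γ.add_mem (Γ.mul_mem hAΓ (Γ.pow_mem (hpΓ _) 2))
      (Γ.mul_mem hBΓ (Γ.mul_mem (hpΓ _) (hqΓ _)))) (Γ.mul_mem hCΓ (Γ.pow_mem (hqΓ _) 2))
  -- zs (n+1) is a root
  have hroot : ∀ n, AA n * zs (n + 1) ^ 2 + BB n * zs (n + 1) + CC n = 0 := by
    intro n
    simp only [hAAdef, hBBdef, hCCdef]
    linear_combination (q (n + 1) * zs (n + 1) + q n) ^ 2 * hquad
      + (2 * A * z * (q (n + 1) * zs (n + 1) + q n) + B * (q (n + 1) * zs (n + 1) + q n)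
        + A * ((p (n + 1) - z * q (n + 1)) * zs (n + 1) + (p n - z * q n))) * hE n
  -- nondegeneracy
  have hnd : ∀ n, ¬(AA n = 0 ∧ BB n = 0 ∧ CC n = 0) := by
    intro n
    rintro ⟨h1, h2, h3⟩
    have hid : AA n * q n ^ 2 - BB n * (q n * q (n + 1)) + CC n * q (n + 1) ^ 2
        = A * (p (n + 1) * q n - p n * q (n + 1)) ^ 2 := by
      simp only [hAAdef, hBBdef, hCCdef]
      ring
    rw [h1, h2, h3, hpq n] at hid
    simp only [zero_mul, add_zero, sub_zero, zero_add] at hid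
    have hsq : ((-1 : ℂ) ^ (n + 1)) ^ 2 = 1 := by
      rw [← pow_mul, mul_comm, pow_mul]
      simp
    rw [hsq, mul_one] at hid
    exact hA0 hid.symm
  -- bounds on the coefficients
  set R : ℝ := 2 * ‖A‖ * ‖z‖ * (1 + 2 * M) + 2 * ‖A‖
      + ‖B‖ * (1 + 2 * M) with hRdef
  clear_value R
  have habs3 : ∀ x y w : ℂ, ‖(x + y + w)‖
      ≤ ‖x‖ + ‖y‖ + ‖w‖ := fun x y w =>
    (norm_add_le _ _).trans (add_le_add_left (norm_add_le _ _) _)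
  have hM12 : M ≤ 1 + 2 * M := by linarith
  have habsAnn : (0 : ℝ) ≤ ‖A‖ := norm_nonneg _
  have habsBnn : (0 : ℝ) ≤ ‖B‖ := norm_nonneg _
  have habsznn : (0 : ℝ) ≤ ‖z‖ := norm_nonneg _
  have hCClike : ∀ m : ℕ, ‖(A * p m ^ 2 + B * (p m * q m) + C * q m ^ 2)‖ ≤ R := by
    intro m
    have hrw : A * p m ^ 2 + B * (p m * q m) + C * q m ^ 2
        = 2 * A * z * (q m * (p m - z * q m)) + A * (p m - z * q m) ^ 2
          + B * (q m * (p m - z * q m)) := by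
      linear_combination (q m) ^ 2 * hquad
    rw [hrw]
    refine (habs3 _ _ _).trans ?_
    have b1 : ‖(2 * A * z * (q m * (p m - z * q m)))‖
        ≤ 2 * ‖A‖ * ‖z‖ * (1 + 2 * M) := by
      rw [norm_mul, norm_mul, norm_mul, Complex.norm_two]
      exact mul_le_mul_of_nonneg_left ((huU m).trans hM12) (by positivity)
    have b2 : ‖(A * (p m - z * q m) ^ 2)‖ ≤ 2 * ‖A‖ := by
      rw [norm_mul, norm_pow]
      have : ‖(p m - z * q m)‖ ^ 2 ≤ 1 := by
        nlinarith [he1 m, norm_nonneg (p m - z * q m)]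
      nlinarith
    have b3 : ‖(B * (q m * (p m - z * q m)))‖ ≤ ‖B‖ * (1 + 2 * M) := by
      rw [norm_mul]
      exact mul_le_mul_of_nonneg_left ((huU m).trans hM12) habsBnn
    rw [hRdef]; linarith
  have hAAb : ∀ n, ‖(AA n)‖ ≤ R := by
    intro n
    rw [hAAdef]; exact hCClike (n + 1)
  have hCCb : ∀ n, ‖(CC n)‖ ≤ R := by
    intro n
    rw [hCCdef]; exact hCClike n
  have hBBb : ∀ n, ‖(BB n)‖ ≤ R := by
    intro n
    have hrw : BB n = 2 * A * z
          * (q (n + 1) * (p n - z * q n) + q n * (p (n + 1) - z * q (n + 1)))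
        + 2 * A * ((p n - z * q n) * (p (n + 1) - z * q (n + 1)))
        + B * (q (n + 1) * (p n - z * q n) + q n * (p (n + 1) - z * q (n + 1))) := by
      simp only [hBBdef]
      linear_combination 2 * (q n * q (n + 1)) * hquad
    rw [hrw]
    refine (habs3 _ _ _).trans ?_
    have hSb : ‖(q (n + 1) * (p n - z * q n)
        + q n * (p (n + 1) - z * q (n + 1)))‖ ≤ 1 + 2 * M := by
      refine (norm_add_le _ _).trans ?_
      linarith [hq1e n, hx' n]
    have b1 : ‖(2 * A * z
          * (q (n + 1) * (p n - z * q n) + q n * (p (n + 1) - z * q (n + 1))))‖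
        ≤ 2 * ‖A‖ * ‖z‖ * (1 + 2 * M) := by
      rw [norm_mul, norm_mul, norm_mul, Complex.norm_two]
      exact mul_le_mul_of_nonneg_left hSb (by positivity)
    have b2 : ‖(2 * A * ((p n - z * q n) * (p (n + 1) - z * q (n + 1))))‖
        ≤ 2 * ‖A‖ := by
      rw [norm_mul, norm_mul, norm_mul, Complex.norm_two]
      have h1 := he1 n
      have h2 := he1 (n + 1)
      have h3 := norm_nonneg (p n - z * q n)
      have h4 := norm_nonneg (p (n + 1) - z * q (n + 1))
      have h5 : ‖(p n - z * q n)‖ * ‖(p (n + 1) - z * q (n + 1))‖ ≤ 1 := by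
        nlinarith
      nlinarith [mul_le_mul_of_nonneg_left h5 (by positivity : (0:ℝ) ≤ 2 * ‖A‖)]
    have b3 : ‖(B * (q (n + 1) * (p n - z * q n)
        + q n * (p (n + 1) - z * q (n + 1))))‖ ≤ ‖B‖ * (1 + 2 * M) := by
      rw [norm_mul]
      exact mul_le_mul_of_nonneg_left hSb habsBnn
    rw [hRdef]; linarith
  -- pigeonhole on the finite set of possible coefficient triples
  have hSfin : {x : ℂ | x ∈ Γ ∧ ‖x‖ ≤ R}.Finite := aux_finite_ball Γ hΓdisc R
  set S : Set ℂ := {x : ℂ | x ∈ Γ ∧ ‖x‖ ≤ R} with hSdef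
  have hS3fin : (S ×ˢ S ×ˢ S).Finite := hSfin.prod (hSfin.prod hSfin)
  have hmemS3 : ∀ n : ℕ, (AA n, BB n, CC n) ∈ S ×ˢ S ×ˢ S := by
    intro n
    exact ⟨⟨hAAΓ n, hAAb n⟩, ⟨hBBΓ n, hBBb n⟩, ⟨hCCΓ n, hCCb n⟩⟩
  haveI : Finite ↥(S ×ˢ S ×ˢ S) := hS3fin.to_subtype
  obtain ⟨y, hy⟩ := Finite.exists_infinite_fiber
    (fun n : ℕ => (⟨(AA n, BB n, CC n), hmemS3 n⟩ : ↥(S ×ˢ S ×ˢ S)))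
  have hfib : {n : ℕ | (⟨(AA n, BB n, CC n), hmemS3 n⟩ : ↥(S ×ˢ S ×ˢ S)) = y}.Infinite := by
    rw [← Set.infinite_coe_iff]
    exact hy
  obtain ⟨n₁, hn₁⟩ := hfib.nonempty
  obtain ⟨n₂, hn₂, h12⟩ := hfib.exists_gt n₁
  obtain ⟨n₃, hn₃, h23⟩ := hfib.exists_gt n₂
  have heq12 : (AA n₁, BB n₁, CC n₁) = (AA n₂, BB n₂, CC n₂) := by
    have := hn₁.trans hn₂.symm
    exact congrArg Subtype.val this
  have heq13 : (AA n₁, BB n₁, CC n₁) = (AA n₃, BB n₃, CC n₃) := by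
    have := hn₁.trans hn₃.symm
    exact congrArg Subtype.val this
  have hA12 : AA n₁ = AA n₂ := congrArg Prod.fst heq12
  have hB12 : BB n₁ = BB n₂ := congrArg (fun x => x.2.1) heq12
  have hC12 : CC n₁ = CC n₂ := congrArg (fun x => x.2.2) heq12
  have hA13 : AA n₁ = AA n₃ := congrArg Prod.fst heq13
  have hB13 : BB n₁ = BB n₃ := congrArg (fun x => x.2.1) heq13
  have hC13 : CC n₁ = CC n₃ := congrArg (fun x => x.2.2) heq13
  -- three roots of the same nonzero quadratic
  have hr1 := hroot n₁
  have hr2 := hroot n₂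
  have hr3 := hroot n₃
  rw [← hA12, ← hB12, ← hC12] at hr2
  rw [← hA13, ← hB13, ← hC13] at hr3
  have htriple := aux_three_roots (AA n₁) (BB n₁) (CC n₁)
    (zs (n₁ + 1)) (zs (n₂ + 1)) (zs (n₃ + 1)) hr1 hr2 hr3 (hnd n₁)
  -- from two equal iterates, conclude periodicity
  have hper : ∀ i j : ℕ, i < j → zs (i + 1) = zs (j + 1) →
      ∃ m k : ℕ, 1 ≤ k ∧ ∀ n, m ≤ n → a (n + k) = a n := by
    intro i j hij heq
    refine ⟨i + 1, j - i, by omega, ?_⟩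
    have hzsp : ∀ d, zs (i + 1 + d) = zs (j + 1 + d) := by
      intro d
      induction d with
      | zero => simpa using heq
      | succ d ih =>
        have e1 : i + 1 + (d + 1) = (i + 1 + d) + 1 := by omega
        have e2 : j + 1 + (d + 1) = (j + 1 + d) + 1 := by omega
        rw [e1, e2, hzsrec, hzsrec, ih]
    intro n hn
    have e1 : n + (j - i) = j + 1 + (n - (i + 1)) := by omega
    have e2 : i + 1 + (n - (i + 1)) = n := by omega
    rw [ha, ha, e1, ← hzsp (n - (i + 1)), e2]
  rcases htriple with h | h | h
  · exact hper n₁ n₂ h12 h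
  · exact hper n₁ n₃ (h12.trans h23) h
  · exact hper n₂ n₃ h23 h
end

section
/- Let Γ be a discrete subring of ℂ, K the subfield of ℂ generated by Γ, and f : ℂ → Γ a Γ-valued algorithm whose fundamental set is contained in a ball of radius r centered at 0 with 0 < r < 1. Let z be a quadratic surd over K and let (a_n)_{n≥0} ⊆ Γ be the sequence of partial quotients of z with respect to f. If (a_n)_{n≥0} satisfies Condition 𝒞, then (a_n)_{n≥0} is eventually periodic, i.e., there exist m ≥ 0 and k ≥ 1 such that a_{n+k} = a_n for all n ≥ m. -/
/-- Numerators of the convergents. -/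
noncomputable def lagP (a : ℕ → ℂ) : ℕ → ℂ
  | 0 => 1
  | 1 => a 0
  | (n+2) => a (n+1) * lagP a (n+1) + lagP a n

/-- Denominators of the convergents. -/
noncomputable def lagQ (a : ℕ → ℂ) : ℕ → ℂ
  | 0 => 0
  | 1 => 1
  | (n+2) => a (n+1) * lagQ a (n+1) + lagQ a n

lemma lag_finite_ball (Γ : Subring ℂ) (hΓdisc : DiscreteTopology Γ) (M : ℝ) :
    {x : ℂ | x ∈ Γ ∧ ‖x‖ ≤ M}.Finite := by
  have hdisc : DiscreteTopology ((Γ : Set ℂ) : Type) := hΓdisc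
  have hclosed : IsClosed (Γ : Set ℂ) := by
    haveI : DiscreteTopology (Γ.toAddSubgroup : Set ℂ) := hΓdisc
    exact AddSubgroup.isClosed_of_discrete (H := Γ.toAddSubgroup)
  have hset : {x : ℂ | x ∈ Γ ∧ ‖x‖ ≤ M}
      = (Γ : Set ℂ) ∩ Metric.closedBall 0 M := by
    ext x
    simp [Complex.dist_eq]
  rw [hset]
  have hcomp : IsCompact ((Γ : Set ℂ) ∩ Metric.closedBall 0 M) :=
    (isCompact_closedBall 0 M).inter_left hclosed
  have hd2 : DiscreteTopology (((Γ : Set ℂ) ∩ Metric.closedBall 0 M : Set ℂ) : Type) :=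
    DiscreteTopology.of_subset hdisc Set.inter_subset_left
  exact hcomp.finite (isDiscrete_iff_discreteTopology.mpr hd2)

lemma lag_roots_finite (α β γ : ℂ) :
    {w : ℂ | α * w ^ 2 + β * w + γ = 0 ∧ α ≠ 0}.Finite := by
  by_cases hα : α = 0
  · convert Set.finite_empty
    ext w; simp [hα]
  · have hp : (Polynomial.C α * Polynomial.X ^ 2 + Polynomial.C β * Polynomial.X
        + Polynomial.C γ : Polynomial ℂ) ≠ 0 := by
      intro h
      have := congrArg (fun p => Polynomial.coeff p 2) h
      simp [Polynomial.coeff_one, Polynomial.coeff_X] at this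
      exact hα this
    refine Set.Finite.subset (Polynomial.finite_setOf_isRoot hp) ?_
    intro w hw
    simp only [Set.mem_setOf_eq, Polynomial.IsRoot, Polynomial.eval_add,
      Polynomial.eval_mul, Polynomial.eval_pow, Polynomial.eval_C, Polynomial.eval_X]
    exact hw.1

/-- Corollary (Lagrange theorem for algorithms): let `f` be a `Γ`-valued
algorithm whose fundamental set is contained in a ball of radius `r < 1`
centered at `0`, `z` a quadratic surd over the subfield `K` generated by the
discrete subring `Γ`, and suppose the partial quotients of `z` with respect to
`f` satisfy Condition 𝒞.  Then the sequence of partial quotients is eventually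
periodic. -/
theorem quadratic_surd_condition_C_eventually_periodic
    (Γ : Subring ℂ) (hΓdisc : DiscreteTopology Γ)
    (K : Subfield ℂ) (hK : K = Subfield.closure (Γ : Set ℂ))
    (f : ℂ → ℂ) (hfΓ : ∀ w, f w ∈ Γ) (hfalg : ∀ w, ‖w - f w‖ ≤ 1)
    (r : ℝ) (hr0 : 0 < r) (hr1 : r < 1)
    (hfund : ∀ w : ℂ, w ∉ K → ‖w - f w‖ ≤ r)
    (z : ℂ) (hzK : z ∉ K)
    (hsurd : ∃ A B C : ℂ, A ∈ K ∧ B ∈ K ∧ C ∈ K ∧ A ≠ 0 ∧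
      A * z ^ 2 + B * z + C = 0)
    (zs : ℕ → ℂ) (hzs0 : zs 0 = z)
    (hzsrec : ∀ n, zs (n + 1) = (zs n - f (zs n))⁻¹)
    (a : ℕ → ℂ) (ha : ∀ n, a n = f (zs n))
    (hC1 : ∀ n : ℕ, 1 ≤ n → 1 < ‖a n‖)
    (hC2 : ∀ n : ℕ, 1 ≤ n → ‖a (n + 1)‖ < 2 →
      ‖a (n + 1)‖ ^ 2 ≤
        ‖((‖a (n + 1)‖ ^ 2 - 1 : ℝ) : ℂ) * a n +
          (starRingEnd ℂ) (a (n + 1))‖) :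
    ∃ m k : ℕ, 1 ≤ k ∧ ∀ n, m ≤ n → a (n + k) = a n := by
  -- Γ is contained in K
  have hΓK : ∀ x : ℂ, x ∈ Γ → x ∈ K := by
    intro x hx; rw [hK]; exact Subfield.subset_closure hx
  -- every element of K is a quotient of elements of Γ
  have hrepr : ∀ x : ℂ, x ∈ K → ∃ p q : ℂ, p ∈ Γ ∧ q ∈ Γ ∧ q ≠ 0 ∧ x = p / q := by
    intro x hx
    rw [hK, Subfield.mem_closure_iff] at hx
    obtain ⟨y, hy, w, hw, hwx⟩ := hx
    rw [Subring.closure_eq] at hy hw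
    by_cases hw0 : w = 0
    · refine ⟨0, 1, Γ.zero_mem, Γ.one_mem, one_ne_zero, ?_⟩
      rw [← hwx, hw0, div_zero, zero_div]
    · exact ⟨y, w, hy, hw, hw0, hwx.symm⟩
  -- scale the quadratic equation to have coefficients in Γ
  obtain ⟨cA, cB, cC, hcA, hcB, hcC, hcAne, hceq⟩ :
      ∃ A B C : ℂ, A ∈ Γ ∧ B ∈ Γ ∧ C ∈ Γ ∧ A ≠ 0 ∧ A * z ^ 2 + B * z + C = 0 := by
    obtain ⟨A, B, C, hA, hB, hC, hAne, heq⟩ := hsurd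
    obtain ⟨pa, qa, hpa, hqa, hqa0, hAe⟩ := hrepr A hA
    obtain ⟨pb, qb, hpb, hqb, hqb0, hBe⟩ := hrepr B hB
    obtain ⟨pc, qc, hpc, hqc, hqc0, hCe⟩ := hrepr C hC
    refine ⟨pa * qb * qc, pb * qa * qc, pc * qa * qb, ?_, ?_, ?_, ?_, ?_⟩
    · exact Γ.mul_mem (Γ.mul_mem hpa hqb) hqc
    · exact Γ.mul_mem (Γ.mul_mem hpb hqa) hqc
    · exact Γ.mul_mem (Γ.mul_mem hpc hqa) hqb
    · have hpa0 : pa ≠ 0 := by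
        intro h; rw [h, zero_div] at hAe; exact hAne hAe
      exact mul_ne_zero (mul_ne_zero hpa0 hqb0) hqc0
    · have h1 : pa * qb * qc = A * (qa * qb * qc) := by rw [hAe]; field_simp
      have h2 : pb * qa * qc = B * (qa * qb * qc) := by rw [hBe]; field_simp
      have h3 : pc * qa * qb = C * (qa * qb * qc) := by rw [hCe]; field_simp
      rw [h1, h2, h3]
      linear_combination (qa * qb * qc) * heq
  -- the iterates stay outside K
  have hzsK : ∀ n, zs n ∉ K := by
    intro n
    induction n with
    | zero => rw [hzs0]; exact hzK
    | succ n ih =>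
      rw [hzsrec n]
      intro hmem
      have hδK : zs n - f (zs n) ∈ K := by
        rw [← inv_inv (zs n - f (zs n))]
        exact K.inv_mem hmem
      have : zs n ∈ K := by
        have := K.add_mem hδK (hΓK _ (hfΓ (zs n)))
        simpa using this
      exact ih this
  -- the epsilon sequence
  set ε : ℕ → ℂ := fun n => zs n - a n with hεdef
  have hεf : ∀ n, ε n = zs n - f (zs n) := by
    intro n; simp only [hεdef, ha]
  have hεne : ∀ n, ε n ≠ 0 := by
    intro n h0
    apply hzsK n
    have hz : zs n = a n := sub_eq_zero.mp h0
    rw [hz, ha]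
    exact hΓK _ (hfΓ (zs n))
  have hεr : ∀ n, ‖ε n‖ ≤ r := by
    intro n; rw [hεf]; exact hfund _ (hzsK n)
  have hzs1 : ∀ n, zs (n + 1) = (ε n)⁻¹ := by
    intro n; rw [hzsrec, hεf]
  -- convergents
  set P : ℕ → ℂ := lagP a with hPdef
  set Q : ℕ → ℂ := lagQ a with hQdef
  have hP0 : P 0 = 1 := rfl
  have hP1 : P 1 = a 0 := rfl
  have hQ0 : Q 0 = 0 := rfl
  have hQ1 : Q 1 = 1 := rfl
  have hP2 : ∀ n, P (n + 2) = a (n + 1) * P (n + 1) + P n := fun n => rfl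
  have hQ2 : ∀ n, Q (n + 2) = a (n + 1) * Q (n + 1) + Q n := fun n => rfl
  have haΓ : ∀ n, a n ∈ Γ := by intro n; rw [ha]; exact hfΓ _
  have hPQΓ : ∀ n, P n ∈ Γ ∧ Q n ∈ Γ := by
    have key : ∀ n, (P n ∈ Γ ∧ Q n ∈ Γ) ∧ (P (n+1) ∈ Γ ∧ Q (n+1) ∈ Γ) := by
      intro n
      induction n with
      | zero =>
        refine ⟨⟨?_, ?_⟩, ?_, ?_⟩
        · rw [hP0]; exact Γ.one_mem
        · rw [hQ0]; exact Γ.zero_mem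
        · rw [hP1]; exact haΓ 0
        · rw [hQ1]; exact Γ.one_mem
      | succ n ih =>
        refine ⟨ih.2, ?_, ?_⟩
        · rw [hP2]; exact Γ.add_mem (Γ.mul_mem (haΓ _) ih.2.1) ih.1.1
        · rw [hQ2]; exact Γ.add_mem (Γ.mul_mem (haΓ _) ih.2.2) ih.1.2
    exact fun n => (key n).1
  set E : ℕ → ℂ := fun n => Q n * z - P n with hEdef
  have hE0 : E 0 = -1 := by simp [hEdef, hQ0, hP0]
  have hE1 : E 1 = ε 0 := by
    simp only [hEdef, hQ1, hP1, hεdef]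
    rw [hzs0]; ring
  have hE2 : ∀ n, E (n + 2) = a (n + 1) * E (n + 1) + E n := by
    intro n; simp only [hEdef, hP2, hQ2]; ring
  have hεrec : ∀ n, ε (n + 1) = (ε n)⁻¹ - a (n + 1) := by
    intro n
    have : ε (n + 1) = zs (n + 1) - a (n + 1) := rfl
    rw [this, hzs1 n]
  have hEstep : ∀ n, E (n + 1) = -(ε n) * E n := by
    intro n
    induction n with
    | zero => rw [hE1, hE0]; ring
    | succ n ih =>
      rw [hE2, hεrec n, ih]
      have hinv : (ε n)⁻¹ * ε n = 1 := inv_mul_cancel₀ (hεne n)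
      linear_combination (-(E n)) * hinv
  have hEne : ∀ n, E n ≠ 0 := by
    intro n
    induction n with
    | zero => rw [hE0]; exact neg_ne_zero.mpr one_ne_zero
    | succ n ih =>
      rw [hEstep n]
      exact mul_ne_zero (neg_ne_zero.mpr (hεne n)) ih
  have hEle : ∀ n, ‖E n‖ ≤ 1 := by
    intro n
    induction n with
    | zero => rw [hE0]; simp
    | succ n ih =>
      rw [hEstep n, norm_mul, norm_neg]
      calc ‖ε n‖ * ‖E n‖ ≤ r * 1 :=
            mul_le_mul (hεr n) ih (norm_nonneg _) (le_of_lt hr0)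
        _ ≤ 1 := by linarith
  have hdet : ∀ n, P (n + 1) * Q n - P n * Q (n + 1) = (-1) ^ (n + 1) := by
    intro n
    induction n with
    | zero => rw [hP1, hP0, hQ1, hQ0]; ring
    | succ n ih =>
      rw [hP2, hQ2]
      linear_combination (-1 : ℂ) * ih
  have hcrossE : ∀ n, Q (n + 1) * E n - Q n * E (n + 1) = (-1) ^ (n + 1) := by
    intro n
    simp only [hEdef]
    linear_combination hdet n
  -- bound on |Q n * E n|
  have hr2 : (0:ℝ) < 1 - r ^ 2 := by nlinarith
  set K0 : ℝ := r / (1 - r ^ 2) with hK0def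
  have hK0pos : 0 < K0 := div_pos hr0 hr2
  have hQE : ∀ n, ‖Q n * E n‖ ≤ K0 := by
    intro n
    induction n with
    | zero => rw [hQ0]; simpa using le_of_lt hK0pos
    | succ n ih =>
      have h1 : ‖Q (n+1) * E n‖ ≤ 1 + r * K0 := by
        have he : Q (n+1) * E n = (-1) ^ (n+1) + Q n * E (n+1) := by
          linear_combination hcrossE n
        rw [he]
        calc ‖(-1) ^ (n+1) + Q n * E (n+1)‖
            ≤ ‖(-1 : ℂ) ^ (n+1)‖ + ‖Q n * E (n+1)‖ :=
              norm_add_le _ _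
          _ ≤ 1 + r * K0 := by
              have h2 : ‖(-1 : ℂ) ^ (n+1)‖ = 1 := by
                simp
              have h3 : ‖Q n * E (n+1)‖ ≤ r * K0 := by
                rw [hEstep n]
                have : Q n * (-(ε n) * E n) = -(ε n) * (Q n * E n) := by ring
                rw [this, norm_mul, norm_neg]
                exact mul_le_mul (hεr n) ih (norm_nonneg _) (le_of_lt hr0)
              linarith
      have he2 : Q (n+1) * E (n+1) = -(ε n) * (Q (n+1) * E n) := by
        rw [hEstep n]; ring
      rw [he2, norm_mul, norm_neg]
      have : ‖ε n‖ * ‖Q (n+1) * E n‖ ≤ r * (1 + r * K0) :=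
        mul_le_mul (hεr n) h1 (norm_nonneg _) (le_of_lt hr0)
      have heq' : r * (1 + r * K0) = K0 := by
        rw [hK0def]; field_simp; ring
      linarith
  have hQE' : ∀ n, ‖Q (n+1) * E n‖ ≤ 1 + r * K0 := by
    intro n
    have he : Q (n+1) * E n = (-1) ^ (n+1) + Q n * E (n+1) := by
      linear_combination hcrossE n
    rw [he]
    calc ‖(-1) ^ (n+1) + Q n * E (n+1)‖
        ≤ ‖(-1 : ℂ) ^ (n+1)‖ + ‖Q n * E (n+1)‖ :=
          norm_add_le _ _
      _ ≤ 1 + r * K0 := by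
          have h2 : ‖(-1 : ℂ) ^ (n+1)‖ = 1 := by simp
          have h3 : ‖Q n * E (n+1)‖ ≤ r * K0 := by
            rw [hEstep n]
            have : Q n * (-(ε n) * E n) = -(ε n) * (Q n * E n) := by ring
            rw [this, norm_mul, norm_neg]
            exact mul_le_mul (hεr n) (hQE n) (norm_nonneg _) (le_of_lt hr0)
          linarith
  -- Moebius identity
  have hMob : ∀ n, z * (Q (n+1) * zs (n+1) + Q n) = P (n+1) * zs (n+1) + P n := by
    intro n
    induction n with
    | zero =>
      rw [hQ1, hQ0, hP1, hP0, hzs1 0]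
      have hz : z = ε 0 + a 0 := by
        have : ε 0 = zs 0 - a 0 := rfl
        rw [this, hzs0]; ring
      rw [hz]
      field_simp [hεne 0]
      ring
    | succ n ih =>
      have h2' : zs (n+2) * (zs (n+1) - a (n+1)) = 1 := by
        have hε' : ε (n+1) = zs (n+1) - a (n+1) := rfl
        rw [← hε', hzs1 (n+1)]
        exact inv_mul_cancel₀ (hεne (n+1))
      rw [hQ2, hP2]
      linear_combination zs (n+2) * ih - (z * Q (n+1) - P (n+1)) * h2'
  -- the quadratic satisfied by the iterates
  set cAn : ℕ → ℂ := fun n =>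
    cA * P (n+1) ^ 2 + cB * (P (n+1) * Q (n+1)) + cC * Q (n+1) ^ 2 with hcAndef
  set cBn : ℕ → ℂ := fun n =>
    2 * cA * (P (n+1) * P n) + cB * (P (n+1) * Q n + P n * Q (n+1))
      + 2 * cC * (Q (n+1) * Q n) with hcBndef
  set cCn : ℕ → ℂ := fun n =>
    cA * P n ^ 2 + cB * (P n * Q n) + cC * Q n ^ 2 with hcCndef
  have hquadn : ∀ n, cAn n * zs (n+1) ^ 2 + cBn n * zs (n+1) + cCn n = 0 := by
    intro n
    simp only [hcAndef, hcBndef, hcCndef]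
    linear_combination ((Q (n+1) * zs (n+1) + Q n) ^ 2) * hceq -
      (cA * ((P (n+1) * zs (n+1) + P n) + z * (Q (n+1) * zs (n+1) + Q n))
        + cB * (Q (n+1) * zs (n+1) + Q n)) * hMob n
  -- linear expressions
  set G : ℕ → ℂ := fun n => cA * (P n + z * Q n) + cB * Q n with hGdef
  have hAeq : ∀ n, cAn n = -(E (n+1)) * G (n+1) := by
    intro n
    simp only [hcAndef, hGdef, hEdef]
    linear_combination (Q (n+1) ^ 2) * hceq
  have hCeq : ∀ n, cCn n = -(E n) * G n := by
    intro n
    simp only [hcCndef, hGdef, hEdef]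
    linear_combination (Q n ^ 2) * hceq
  have hBeq : ∀ n, cBn n = -(E (n+1) * G n + E n * G (n+1)) := by
    intro n
    simp only [hcBndef, hGdef, hEdef]
    linear_combination (2 * Q (n+1) * Q n) * hceq
  -- coefficients are in Γ
  have hAnΓ : ∀ n, cAn n ∈ Γ := by
    intro n
    simp only [hcAndef]
    exact Γ.add_mem (Γ.add_mem
      (Γ.mul_mem hcA (Γ.pow_mem (hPQΓ (n+1)).1 2))
      (Γ.mul_mem hcB (Γ.mul_mem (hPQΓ (n+1)).1 (hPQΓ (n+1)).2)))
      (Γ.mul_mem hcC (Γ.pow_mem (hPQΓ (n+1)).2 2))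
  have hBnΓ : ∀ n, cBn n ∈ Γ := by
    intro n
    simp only [hcBndef]
    have h2Γ : (2:ℂ) ∈ Γ := by
      have h := Γ.add_mem Γ.one_mem Γ.one_mem
      rw [one_add_one_eq_two] at h
      exact h
    refine Γ.add_mem (Γ.add_mem ?_ ?_) ?_
    · exact Γ.mul_mem (Γ.mul_mem h2Γ hcA)
        (Γ.mul_mem (hPQΓ (n+1)).1 (hPQΓ n).1)
    · exact Γ.mul_mem hcB (Γ.add_mem (Γ.mul_mem (hPQΓ (n+1)).1 (hPQΓ n).2)
        (Γ.mul_mem (hPQΓ n).1 (hPQΓ (n+1)).2))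
    · exact Γ.mul_mem (Γ.mul_mem h2Γ hcC)
        (Γ.mul_mem (hPQΓ (n+1)).2 (hPQΓ n).2)
  have hCnΓ : ∀ n, cCn n ∈ Γ := by
    intro n
    simp only [hcCndef]
    exact Γ.add_mem (Γ.add_mem
      (Γ.mul_mem hcA (Γ.pow_mem (hPQΓ n).1 2))
      (Γ.mul_mem hcB (Γ.mul_mem (hPQΓ n).1 (hPQΓ n).2)))
      (Γ.mul_mem hcC (Γ.pow_mem (hPQΓ n).2 2))
  -- the linear forms never vanish
  have hGne : ∀ m, G m ≠ 0 := by
    intro m hG0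
    simp only [hGdef] at hG0
    by_cases hQm : Q m = 0
    · have hPm : P m = 0 := by
        rw [hQm] at hG0
        simp at hG0
        rcases hG0 with h | h
        · exact absurd h hcAne
        · exact h
      apply hEne m
      simp only [hEdef]
      rw [hQm, hPm]
      ring
    · apply hzK
      have hne : cA * Q m ≠ 0 := mul_ne_zero hcAne hQm
      have hz : z = -(cA * P m + cB * Q m) / (cA * Q m) := by
        rw [eq_div_iff hne]
        linear_combination hG0
      rw [hz]
      exact K.div_mem (K.neg_mem (K.add_mem
        (K.mul_mem (hΓK _ hcA) (hΓK _ (hPQΓ m).1))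
        (K.mul_mem (hΓK _ hcB) (hΓK _ (hPQΓ m).2))))
        (K.mul_mem (hΓK _ hcA) (hΓK _ (hPQΓ m).2))
  have hAnne : ∀ n, cAn n ≠ 0 := by
    intro n h
    rw [hAeq n] at h
    exact mul_ne_zero (neg_ne_zero.mpr (hEne (n+1))) (hGne (n+1)) h
  -- bounds on the coefficients
  set az : ℝ := ‖z‖ with hazdef
  set acA : ℝ := ‖cA‖ with hacAdef
  set acB : ℝ := ‖cB‖ with hacBdef
  have haz0 : 0 ≤ az := norm_nonneg z
  have hacA0 : 0 ≤ acA := norm_nonneg cA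
  have hacB0 : 0 ≤ acB := norm_nonneg cB
  have hEQ : ∀ n, ‖E n * Q n‖ ≤ K0 := by
    intro n; rw [mul_comm]; exact hQE n
  have hEQ' : ∀ n, ‖E n * Q (n+1)‖ ≤ 1 + r * K0 := by
    intro n; rw [mul_comm]; exact hQE' n
  have hEP : ∀ n, ‖E n * P n‖ ≤ az * K0 + 1 := by
    intro n
    have hsp : E n * P n = z * (E n * Q n) - E n * E n := by
      simp only [hEdef]; ring
    rw [hsp]
    calc ‖z * (E n * Q n) - E n * E n‖
        ≤ ‖z * (E n * Q n)‖ + ‖E n * E n‖ := by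
          have h := norm_add_le (z * (E n * Q n)) (-(E n * E n))
          simpa [sub_eq_add_neg] using h
      _ ≤ az * K0 + 1 := by
          have h1 : ‖z * (E n * Q n)‖ ≤ az * K0 := by
            rw [norm_mul]; exact mul_le_mul_of_nonneg_left (hEQ n) haz0
          have h2 : ‖E n * E n‖ ≤ 1 := by
            rw [norm_mul]; nlinarith [hEle n, norm_nonneg (E n)]
          linarith
  have hEP' : ∀ n, ‖E n * P (n+1)‖ ≤ az * (1 + r * K0) + 1 := by
    intro n
    have hsp : E n * P (n+1) = z * (E n * Q (n+1)) - E n * E (n+1) := by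
      simp only [hEdef]; ring
    rw [hsp]
    calc ‖z * (E n * Q (n+1)) - E n * E (n+1)‖
        ≤ ‖z * (E n * Q (n+1))‖ + ‖E n * E (n+1)‖ := by
          have h := norm_add_le (z * (E n * Q (n+1))) (-(E n * E (n+1)))
          simpa [sub_eq_add_neg] using h
      _ ≤ az * (1 + r * K0) + 1 := by
          have h1 : ‖z * (E n * Q (n+1))‖ ≤ az * (1 + r * K0) := by
            rw [norm_mul]; exact mul_le_mul_of_nonneg_left (hEQ' n) haz0
          have h2 : ‖E n * E (n+1)‖ ≤ 1 := by
            rw [norm_mul]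
            nlinarith [hEle n, hEle (n+1), norm_nonneg (E n),
              norm_nonneg (E (n+1))]
          linarith
  set MG : ℝ := acA * (az * K0 + 1) + acA * (az * K0) + acB * K0 with hMGdef
  set MG' : ℝ := acA * (az * (1 + r * K0) + 1) + acA * (az * (1 + r * K0))
      + acB * (1 + r * K0) with hMG'def
  have hEG : ∀ n, ‖E n * G n‖ ≤ MG := by
    intro n
    have hsp : E n * G n = cA * (E n * P n) + cA * z * (E n * Q n)
        + cB * (E n * Q n) := by
      simp only [hGdef]; ring
    rw [hsp]
    calc ‖cA * (E n * P n) + cA * z * (E n * Q n) + cB * (E n * Q n)‖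
        ≤ ‖cA * (E n * P n) + cA * z * (E n * Q n)‖
            + ‖cB * (E n * Q n)‖ := norm_add_le _ _
      _ ≤ ‖cA * (E n * P n)‖ + ‖cA * z * (E n * Q n)‖
            + ‖cB * (E n * Q n)‖ := by
          have := norm_add_le (cA * (E n * P n)) (cA * z * (E n * Q n))
          linarith
      _ ≤ MG := by
          have h1 : ‖cA * (E n * P n)‖ ≤ acA * (az * K0 + 1) := by
            rw [norm_mul]; exact mul_le_mul_of_nonneg_left (hEP n) hacA0
          have h2 : ‖cA * z * (E n * Q n)‖ ≤ acA * (az * K0) := by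
            rw [norm_mul, norm_mul, mul_assoc]
            exact mul_le_mul_of_nonneg_left
              (mul_le_mul_of_nonneg_left (hEQ n) haz0) hacA0
          have h3 : ‖cB * (E n * Q n)‖ ≤ acB * K0 := by
            rw [norm_mul]; exact mul_le_mul_of_nonneg_left (hEQ n) hacB0
          linarith [hMGdef]
  have hEG' : ∀ n, ‖E n * G (n+1)‖ ≤ MG' := by
    intro n
    have hsp : E n * G (n+1) = cA * (E n * P (n+1)) + cA * z * (E n * Q (n+1))
        + cB * (E n * Q (n+1)) := by
      simp only [hGdef]; ring
    rw [hsp]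
    calc ‖cA * (E n * P (n+1)) + cA * z * (E n * Q (n+1))
            + cB * (E n * Q (n+1))‖
        ≤ ‖cA * (E n * P (n+1)) + cA * z * (E n * Q (n+1))‖
            + ‖cB * (E n * Q (n+1))‖ := norm_add_le _ _
      _ ≤ ‖cA * (E n * P (n+1))‖ + ‖cA * z * (E n * Q (n+1))‖
            + ‖cB * (E n * Q (n+1))‖ := by
          have := norm_add_le (cA * (E n * P (n+1))) (cA * z * (E n * Q (n+1)))
          linarith
      _ ≤ MG' := by
          have h1 : ‖cA * (E n * P (n+1))‖ ≤ acA * (az * (1 + r * K0) + 1) := by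
            rw [norm_mul]; exact mul_le_mul_of_nonneg_left (hEP' n) hacA0
          have h2 : ‖cA * z * (E n * Q (n+1))‖ ≤ acA * (az * (1 + r * K0)) := by
            rw [norm_mul, norm_mul, mul_assoc]
            exact mul_le_mul_of_nonneg_left
              (mul_le_mul_of_nonneg_left (hEQ' n) haz0) hacA0
          have h3 : ‖cB * (E n * Q (n+1))‖ ≤ acB * (1 + r * K0) := by
            rw [norm_mul]; exact mul_le_mul_of_nonneg_left (hEQ' n) hacB0
          linarith [hMG'def]
  have hMGnn : 0 ≤ MG := by
    have h0 := hEG 0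
    exact le_trans (norm_nonneg _) h0
  have hMG'nn : 0 ≤ MG' := by
    have h0 := hEG' 0
    exact le_trans (norm_nonneg _) h0
  set M : ℝ := MG + MG' with hMdef
  have hMGM : MG ≤ M := by rw [hMdef]; linarith
  have hAnb : ∀ n, ‖cAn n‖ ≤ M := by
    intro n
    rw [hAeq n, neg_mul, norm_neg]
    exact le_trans (hEG (n+1)) hMGM
  have hCnb : ∀ n, ‖cCn n‖ ≤ M := by
    intro n
    rw [hCeq n, neg_mul, norm_neg]
    exact le_trans (hEG n) hMGM
  have hBnb : ∀ n, ‖cBn n‖ ≤ M := by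
    intro n
    rw [hBeq n, norm_neg]
    have h1 : ‖E (n+1) * G n‖ ≤ MG := by
      rw [hEstep n]
      have hsp : -(ε n) * E n * G n = -(ε n) * (E n * G n) := by ring
      rw [hsp, norm_mul, norm_neg]
      have hε1 : ‖ε n‖ ≤ 1 := le_trans (hεr n) (le_of_lt hr1)
      calc ‖ε n‖ * ‖E n * G n‖ ≤ 1 * MG :=
            mul_le_mul hε1 (hEG n) (norm_nonneg _) zero_le_one
        _ = MG := one_mul _
    have h2 : ‖E n * G (n+1)‖ ≤ MG' := hEG' n
    calc ‖E (n+1) * G n + E n * G (n+1)‖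
        ≤ ‖E (n+1) * G n‖ + ‖E n * G (n+1)‖ :=
          norm_add_le _ _
      _ ≤ M := by rw [hMdef]; linarith
  -- finiteness of possible coefficients and roots
  set S : Set ℂ := {x | x ∈ Γ ∧ ‖x‖ ≤ M} with hSdef
  have hSfin : S.Finite := lag_finite_ball Γ hΓdisc M
  set T : Set ℂ := {w | ∃ α β γ : ℂ, α ∈ S ∧ β ∈ S ∧ γ ∈ S ∧
      (α * w ^ 2 + β * w + γ = 0 ∧ α ≠ 0)} with hTdef
  have hTfin : T.Finite := by
    have hsub : T ⊆ ⋃ α ∈ S, ⋃ β ∈ S, ⋃ γ ∈ S,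
        {w : ℂ | α * w ^ 2 + β * w + γ = 0 ∧ α ≠ 0} := by
      rintro w ⟨α, β, γ, hα, hβ, hγ, hw⟩
      simp only [Set.mem_iUnion]
      exact ⟨α, hα, β, hβ, γ, hγ, hw⟩
    exact Set.Finite.subset
      (hSfin.biUnion fun α _ => hSfin.biUnion fun β _ => hSfin.biUnion fun γ _ =>
        lag_roots_finite α β γ) hsub
  have hmemT : ∀ n, zs (n+1) ∈ T := by
    intro n
    exact ⟨cAn n, cBn n, cCn n, ⟨hAnΓ n, hAnb n⟩, ⟨hBnΓ n, hBnb n⟩,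
      ⟨hCnΓ n, hCnb n⟩, hquadn n, hAnne n⟩
  -- pigeonhole and periodicity
  have main : ∀ i j : ℕ, i < j → zs (i+1) = zs (j+1) →
      ∃ m k : ℕ, 1 ≤ k ∧ ∀ n, m ≤ n → a (n + k) = a n := by
    intro i j hij hzz
    refine ⟨i + 1, j - i, by omega, ?_⟩
    have hper : ∀ d, zs (i+1+d) = zs (j+1+d) := by
      intro d
      induction d with
      | zero => simpa using hzz
      | succ d ihd =>
        have e1 : i+1+(d+1) = (i+1+d)+1 := by omega
        have e2 : j+1+(d+1) = (j+1+d)+1 := by omega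
        rw [e1, e2, hzsrec, hzsrec, ihd]
    intro n hn
    have hd : j+1+(n-(i+1)) = n + (j-i) := by omega
    have hd2 : i+1+(n-(i+1)) = n := by omega
    have hzn := hper (n-(i+1))
    rw [hd, hd2] at hzn
    rw [ha, ha, ← hzn]
  haveI : Finite (T : Type) := hTfin.to_subtype
  obtain ⟨i, j, hij, hg⟩ := Finite.exists_ne_map_eq_of_infinite
    (fun n : ℕ => (⟨zs (n+1), hmemT n⟩ : T))
  have hzsij : zs (i+1) = zs (j+1) := congrArg Subtype.val hg
  rcases lt_or_gt_of_ne hij with h | h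
  · exact main i j h hzsij
  · exact main j i h hzsij.symm
end

section
/- Let 𝔈 be the ring of Eisenstein integers and let f : ℂ → 𝔈 be an 𝔈-valued algorithm with fundamental set Φ. Suppose: (a) Φ ⊆ B(0,r) for some 0 < r < 1; (b) |f(ζ)| > 1 for all ζ ∈ Φ^{−1} (the set of inverses of elements of Φ); and (c) for all 0 ≤ k ≤ 5 and all t ∈ {−1+j, j, 1+j}, the sets ρ^{−k}·t + (C_f(ρ^k·j))^{−1} and C_f(ρ^{−k}·t) ∩ Φ^{−1} are disjoint, where C_f(a) = {z ∈ ℂ : f(z) = a}. Let K be the subfield of ℂ generated by 𝔈, let z ∈ ℂ \ K, let (a_n)_{n≥0} be the partial quotients of z with respect to f, and (p_n), (q_n) the corresponding Q-pair. Then: (i) |q_n| > |q_{n−1}| for all n ≥ 1 (in particular q_n ≠ 0 for all n); (ii) p_n/q_n → z as n → ∞ and |z − p_n/q_n| ≤ (r/(1−r))·|q_n|^{−2} for all n; and (iii) z is a quadratic surd over K if and only if (a_n)_{n≥0} is eventually periodic. -/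
open Complex Filter

noncomputable def Complex.abs : AbsoluteValue ℂ ℝ := NormedField.toAbsoluteValue ℂ

lemma Complex.abs_apply (z : ℂ) : Complex.abs z = Real.sqrt (Complex.normSq z) := Complex.norm_def z

lemma Complex.sq_abs (z : ℂ) : (Complex.abs z) ^ 2 = Complex.normSq z := Complex.sq_norm z

lemma Complex.abs_ofReal (x : ℝ) : Complex.abs (x : ℂ) = |x| := Complex.norm_real x

noncomputable def ZS (f : ℂ → ℂ) (w : ℂ) : ℕ → ℂ
  | 0 => w
  | n+1 => (ZS f w n - f (ZS f w n))⁻¹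

noncomputable def QQ (b : ℕ → ℂ) (x y : ℂ) : ℕ → ℂ
  | 0 => x
  | 1 => y
  | n+2 => b (n+1) * QQ b x y (n+1) + QQ b x y n

namespace Eis

lemma sqrt3_sq : (Real.sqrt 3 : ℝ)^2 = 3 := Real.sq_sqrt (by norm_num)
lemma sqrt3_sqC : ((Real.sqrt 3 : ℝ) : ℂ)^2 = 3 := by
  exact_mod_cast sqrt3_sq
lemma sqrt3_pos : 0 < Real.sqrt 3 := Real.sqrt_pos.2 (by norm_num)
lemma sqrt3_lt2 : Real.sqrt 3 < 2 := by nlinarith [sqrt3_sq, sqrt3_pos]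
lemma one_lt_sqrt3 : 1 < Real.sqrt 3 := by nlinarith [sqrt3_sq, sqrt3_pos]

structure Setup where
  ω : ℂ
  ρ : ℂ
  jj : ℂ
  E : Set ℂ
  f : ℂ → ℂ
  K : Subfield ℂ
  Φ : Set ℂ
  r : ℝ
  hω : ω = -(1 / 2) + (Real.sqrt 3 / 2) * Complex.I
  hρ : ρ = 1 / 2 + (Real.sqrt 3 / 2) * Complex.I
  hjj : jj = Real.sqrt 3 * Complex.I
  hE : E = {w : ℂ | ∃ x y : ℤ, w = (x : ℂ) + (y : ℂ) * ω}
  hfE : ∀ w, f w ∈ E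
  hfalg : ∀ w, Complex.abs (w - f w) ≤ 1
  hK : K = Subfield.closure E
  hΦ : Φ = (fun w => w - f w) '' {w : ℂ | w ∉ K}
  hr0 : 0 < r
  hr1 : r < 1
  ca : Φ ⊆ Metric.ball (0 : ℂ) r
  cb : ∀ ζ ∈ Inv.inv '' Φ, 1 < Complex.abs (f ζ)
  cc : ∀ k : ℕ, k ≤ 5 → ∀ t ∈ ({-1 + jj, jj, 1 + jj} : Set ℂ),
      Disjoint ((fun w => ρ ^ (-(k : ℤ)) * t + w⁻¹) '' {w : ℂ | f w = ρ ^ k * jj})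
        ({w : ℂ | f w = ρ ^ (-(k : ℤ)) * t} ∩ Inv.inv '' Φ)

namespace Setup

variable (S : Setup)

lemma homega2 : S.ω ^ 2 = -1 - S.ω := by
  rw [S.hω]
  have h1 : (Complex.I)^2 = -1 := Complex.I_sq
  have h2 : ((Real.sqrt 3 : ℝ) : ℂ)^2 = 3 := sqrt3_sqC
  ring_nf
  linear_combination (((Real.sqrt 3 : ℝ):ℂ)^2/4) * h1 - ((1:ℂ)/4) * h2

lemma mem_E (x y : ℤ) : ((x : ℂ) + (y : ℂ) * S.ω) ∈ S.E := by
  rw [S.hE]; exact ⟨x, y, rfl⟩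

lemma E_add {u v : ℂ} (hu : u ∈ S.E) (hv : v ∈ S.E) : u + v ∈ S.E := by
  rw [S.hE] at *
  obtain ⟨x, y, rfl⟩ := hu; obtain ⟨x', y', rfl⟩ := hv
  exact ⟨x + x', y + y', by push_cast; ring⟩

lemma E_neg {u : ℂ} (hu : u ∈ S.E) : -u ∈ S.E := by
  rw [S.hE] at *
  obtain ⟨x, y, rfl⟩ := hu
  exact ⟨-x, -y, by push_cast; ring⟩

lemma E_mul {u v : ℂ} (hu : u ∈ S.E) (hv : v ∈ S.E) : u * v ∈ S.E := by
  rw [S.hE] at *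
  obtain ⟨x, y, rfl⟩ := hu; obtain ⟨x', y', rfl⟩ := hv
  refine ⟨x * x' - y * y', x * y' + x' * y - y * y', ?_⟩
  push_cast
  linear_combination (y : ℂ) * (y' : ℂ) * S.homega2

lemma E_zero : (0 : ℂ) ∈ S.E := by simpa using S.mem_E 0 0
lemma E_one : (1 : ℂ) ∈ S.E := by simpa using S.mem_E 1 0

/-- the absolute value squared of an Eisenstein integer -/
lemma E_abs_sq (x y : ℤ) :
    (Complex.abs ((x : ℂ) + (y : ℂ) * S.ω))^2 = ((x^2 - x*y + y^2 : ℤ) : ℝ) := by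
  have h : ((x : ℂ) + (y : ℂ) * S.ω) =
      Complex.mk ((x : ℝ) - (y : ℝ)/2) ((y : ℝ) * (Real.sqrt 3 / 2)) := by
    rw [S.hω]
    apply Complex.ext <;> simp [Complex.ext_iff] <;> push_cast <;> ring
  rw [h]
  rw [Complex.sq_abs]
  simp [Complex.normSq_mk]
  push_cast
  nlinarith [sqrt3_sq]

end Setup


lemma zmod3 : ∀ a b : ZMod 3, a^2 - a*b + b^2 ≠ 2 := by decide

lemma int_no_norm2 (x y : ℤ) : x^2 - x*y + y^2 ≠ 2 := by
  intro h
  apply zmod3 (x : ZMod 3) (y : ZMod 3)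
  have := congrArg (Int.cast : ℤ → ZMod 3) h
  push_cast at this
  exact this

lemma norm3_class (x y : ℤ) (h : x^2 - x*y + y^2 = 3) :
    (x = -1 ∧ y = -2) ∨ (x = 1 ∧ y = -1) ∨ (x = -2 ∧ y = -1) ∨
    (x = -1 ∧ y = 1) ∨ (x = 2 ∧ y = 1) ∨ (x = 1 ∧ y = 2) := by
  have hy1 : -2 ≤ y := by nlinarith [sq_nonneg (2*x - y)]
  have hy2 : y ≤ 2 := by nlinarith [sq_nonneg (2*x - y)]
  have hx1 : -2 ≤ x := by nlinarith [sq_nonneg (x - 2*y)]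
  have hx2 : x ≤ 2 := by nlinarith [sq_nonneg (x - 2*y)]
  interval_cases x <;> interval_cases y <;> omega

lemma int_key (x y : ℤ) (h3 : 3 ≤ x^2 - x*y + y^2)
    (e1 : ¬(x = 0 ∧ y = 2)) (e2 : ¬(x = 1 ∧ y = 2)) (e3 : ¬(x = 2 ∧ y = 2)) :
    9 ≤ (2*x - y)^2 + 3*(y-1)^2 := by
  rcases le_or_gt y (-1) with hy | hy
  · nlinarith
  rcases le_or_gt 3 y with hy' | hy'
  · nlinarith
  interval_cases y
  · nlinarith
  · nlinarith
  · have hx : x ≤ -1 ∨ 3 ≤ x := by omega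
    rcases hx with hx | hx <;> nlinarith


namespace Setup
variable (S : Setup)

lemma jj_eq : S.jj = 1 + 2 * S.ω := by
  rw [S.hjj, S.hω]; push_cast; ring

lemma rho_eq : S.ρ = 1 + S.ω := by
  rw [S.hρ, S.hω]; push_cast; ring

lemma rho_E : S.ρ ∈ S.E := by
  rw [S.rho_eq]; simpa using S.mem_E 1 1

lemma rho_normSq : Complex.normSq S.ρ = 1 := by
  rw [S.hρ]
  simp [Complex.normSq_apply]
  nlinarith [sqrt3_sq]

lemma rho_abs : Complex.abs S.ρ = 1 := by
  rw [Complex.abs_apply, S.rho_normSq, Real.sqrt_one]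

lemma rho_ne : S.ρ ≠ 0 := by
  intro h
  have := S.rho_abs
  rw [h] at this; simp at this

lemma E_inj {x y x' y' : ℤ} (h : (x:ℂ) + (y:ℂ) * S.ω = (x':ℂ) + (y':ℂ) * S.ω) :
    x = x' ∧ y = y' := by
  rw [S.hω] at h
  rw [Complex.ext_iff] at h
  simp at h
  obtain ⟨h1, h2⟩ := h
  subst h2
  exact ⟨by exact_mod_cast (by linarith : (x:ℝ) = x'), rfl⟩

/-- The key geometric lemma. -/
lemma key_geom {b g : ℂ} (hbE : b ∈ S.E) (hb3 : 3 ≤ (Complex.abs b)^2)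
    (h1 : b ≠ -1 + S.jj) (h2 : b ≠ S.jj) (h3 : b ≠ 1 + S.jj)
    (hg : Complex.abs g < 1) :
    1 < Complex.abs (S.jj + (b + g)⁻¹) := by
  rw [S.hE] at hbE
  obtain ⟨x, y, rfl⟩ := hbE
  set b : ℂ := (x:ℂ) + (y:ℂ) * S.ω with hbdef
  have habs := S.E_abs_sq x y
  have hZ3 : (3:ℤ) ≤ x^2 - x*y + y^2 := by
    have : (3:ℝ) ≤ ((x^2 - x*y + y^2 : ℤ) : ℝ) := by rw [← habs]; exact hb3
    exact_mod_cast this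
  have he1 : ¬(x = 0 ∧ y = 2) := by
    rintro ⟨rfl, rfl⟩
    exact h1 (by rw [S.jj_eq]; push_cast; ring)
  have he2 : ¬(x = 1 ∧ y = 2) := by
    rintro ⟨rfl, rfl⟩
    exact h2 (by rw [S.jj_eq]; push_cast; ring)
  have he3 : ¬(x = 2 ∧ y = 2) := by
    rintro ⟨rfl, rfl⟩
    exact h3 (by rw [S.jj_eq]; push_cast; ring)
  have hkey : (9:ℤ) ≤ (2*x - y)^2 + 3*(y-1)^2 := int_key x y hZ3 he1 he2 he3
  have hkeyR : (9:ℝ) ≤ ((2*(x:ℝ) - y)^2 + 3*((y:ℝ)-1)^2) := by exact_mod_cast hkey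
  -- |b - jj/2| ≥ 3/2
  have hbre : (b - S.jj/2).re = (x:ℝ) - (y:ℝ)/2 := by
    rw [hbdef, S.hjj, S.hω]; simp; ring
  have hbim : (b - S.jj/2).im = ((y:ℝ) - 1) * (Real.sqrt 3 / 2) := by
    rw [hbdef, S.hjj, S.hω]; simp; ring
  have hbnsq : Complex.normSq (b - S.jj/2) =
      ((2*(x:ℝ) - y)^2 + 3*((y:ℝ)-1)^2) / 4 := by
    rw [Complex.normSq_apply, hbre, hbim]
    nlinarith [sqrt3_sq]
  have hbdist : (3:ℝ)/2 ≤ Complex.abs (b - S.jj/2) := by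
    have h1' : (9:ℝ)/4 ≤ Complex.normSq (b - S.jj/2) := by rw [hbnsq]; linarith
    have h2' := Complex.sq_abs (b - S.jj/2)
    nlinarith [Complex.abs.nonneg (b - S.jj/2)]
  set w : ℂ := b + g with hwdef
  have hwdist : 1/2 < Complex.abs (w - S.jj/2) := by
    have : Complex.abs (b - S.jj/2) ≤ Complex.abs (w - S.jj/2) + Complex.abs g := by
      calc Complex.abs (b - S.jj/2) = Complex.abs ((w - S.jj/2) + (-g)) := by
            rw [hwdef]; ring_nf
          _ ≤ _ := by simpa using Complex.abs.add_le (w - S.jj/2) (-g)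
    linarith
  have hbabs : Real.sqrt 3 ≤ Complex.abs b := by
    nlinarith [Complex.abs.nonneg b, sqrt3_sq, sqrt3_pos]
  have hwabs : 0 < Complex.abs w := by
    have h5 : Complex.abs b ≤ Complex.abs w + Complex.abs g := by
      calc Complex.abs b = Complex.abs (w + (-g)) := by rw [hwdef]; ring_nf
        _ ≤ _ := by simpa using Complex.abs.add_le w (-g)
    nlinarith [one_lt_sqrt3]
  have hwne : w ≠ 0 := by
    intro h0
    rw [h0] at hwabs
    simp at hwabs
  -- key identity: normSq (jj*w+1) - normSq w = 2*(normSq (w - jj/2) - 1/4)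
  have hiden : Complex.normSq (S.jj * w + 1) - Complex.normSq w =
      2 * (Complex.normSq (w - S.jj/2) - 1/4) := by
    rw [S.hjj]
    simp only [Complex.normSq_apply, Complex.add_re, Complex.add_im,
      Complex.mul_re, Complex.mul_im, Complex.one_re, Complex.one_im,
      Complex.sub_re, Complex.sub_im, Complex.div_ofNat_re, Complex.div_ofNat_im,
      Complex.I_re, Complex.I_im, Complex.ofReal_re, Complex.ofReal_im]
    ring_nf
    linear_combination (w.re^2 + w.im^2 - 1/2) * sqrt3_sq
  have hsq : Complex.normSq w < Complex.normSq (S.jj * w + 1) := by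
    have h1' : 1/4 < Complex.normSq (w - S.jj/2) := by
      have := Complex.sq_abs (w - S.jj/2)
      nlinarith [Complex.abs.nonneg (w - S.jj/2)]
    linarith
  have habslt : Complex.abs w < Complex.abs (S.jj * w + 1) := by
    rw [Complex.abs_apply, Complex.abs_apply]
    exact Real.sqrt_lt_sqrt (Complex.normSq_nonneg _) hsq
  have hrw : S.jj + w⁻¹ = (S.jj * w + 1) / w := by field_simp
  rw [hrw, map_div₀]
  rw [lt_div_iff₀ (by positivity : 0 < Complex.abs w)]
  simpa using habslt

lemma E_pow_rho (k : ℕ) : S.ρ^k ∈ S.E := by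
  induction k with
  | zero => simpa using S.E_one
  | succ n ih => rw [pow_succ]; exact S.E_mul ih S.rho_E

lemma key_geom' {k : ℕ} (hk : k ≤ 5) {aa g : ℂ} (haE : aa ∈ S.E)
    (ha3 : 3 ≤ (Complex.abs aa)^2)
    (h1 : aa ≠ S.ρ^(-(k:ℤ)) * (-1 + S.jj)) (h2 : aa ≠ S.ρ^(-(k:ℤ)) * S.jj)
    (h3 : aa ≠ S.ρ^(-(k:ℤ)) * (1 + S.jj)) (hg : Complex.abs g < 1) :
    1 < Complex.abs (S.ρ^k * S.jj + (aa + g)⁻¹) := by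
  have hρk : S.ρ^(-(k:ℤ)) = (S.ρ^k)⁻¹ := by
    rw [zpow_neg, zpow_natCast]
  have hρkne : S.ρ^k ≠ 0 := pow_ne_zero _ S.rho_ne
  have habsk : Complex.abs (S.ρ^k) = 1 := by rw [map_pow, S.rho_abs, one_pow]
  have hbE : S.ρ^k * aa ∈ S.E := S.E_mul (S.E_pow_rho k) haE
  have hb3 : 3 ≤ (Complex.abs (S.ρ^k * aa))^2 := by rw [map_mul, habsk, one_mul]; exact ha3
  have hexc : ∀ t : ℂ, aa ≠ S.ρ^(-(k:ℤ)) * t → S.ρ^k * aa ≠ t := by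
    intro t hne he
    apply hne
    rw [hρk, ← he, ← mul_assoc, inv_mul_cancel₀ hρkne, one_mul]
  have hg' : Complex.abs (S.ρ^k * g) < 1 := by rw [map_mul, habsk, one_mul]; exact hg
  have hgeo := S.key_geom (g := S.ρ^k * g) hbE hb3
    (hexc _ h1) (hexc _ h2) (hexc _ h3) hg'
  have hrw : S.jj + (S.ρ^k * aa + S.ρ^k * g)⁻¹ = (S.ρ^k)⁻¹ * (S.ρ^k * S.jj + (aa + g)⁻¹) := by
    rw [mul_add, ← mul_assoc, inv_mul_cancel₀ hρkne, one_mul, ← mul_inv, mul_add]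
  calc (1:ℝ) < Complex.abs (S.jj + (S.ρ^k*aa + S.ρ^k*g)⁻¹) := hgeo
    _ = Complex.abs (S.ρ^k * S.jj + (aa+g)⁻¹) := by
        rw [hrw, map_mul, map_inv₀, habsk]; simp

-- powers of rho times jj
lemma rho2 : S.ρ^(2:ℕ) = S.ω := by
  rw [S.rho_eq]; linear_combination S.homega2
lemma Ejj0 : S.ρ^(0:ℕ) * S.jj = 1 + 2*S.ω := by rw [S.jj_eq]; ring
lemma Ejj1 : S.ρ^(1:ℕ) * S.jj = -1 + S.ω := by
  rw [pow_one, S.rho_eq, S.jj_eq]; linear_combination (2:ℂ) * S.homega2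
lemma Ejj2 : S.ρ^(2:ℕ) * S.jj = -2 - S.ω := by
  have h : S.ρ^(2:ℕ) * S.jj = S.ρ * (S.ρ^(1:ℕ) * S.jj) := by ring
  rw [h, S.Ejj1, S.rho_eq]; linear_combination S.homega2
lemma Ejj3 : S.ρ^(3:ℕ) * S.jj = -1 - 2*S.ω := by
  have h : S.ρ^(3:ℕ) * S.jj = S.ρ * (S.ρ^(2:ℕ) * S.jj) := by ring
  rw [h, S.Ejj2, S.rho_eq]; linear_combination (-1:ℂ) * S.homega2
lemma Ejj4 : S.ρ^(4:ℕ) * S.jj = 1 - S.ω := by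
  have h : S.ρ^(4:ℕ) * S.jj = S.ρ * (S.ρ^(3:ℕ) * S.jj) := by ring
  rw [h, S.Ejj3, S.rho_eq]; linear_combination (-2:ℂ) * S.homega2
lemma Ejj5 : S.ρ^(5:ℕ) * S.jj = 2 + S.ω := by
  have h : S.ρ^(5:ℕ) * S.jj = S.ρ * (S.ρ^(4:ℕ) * S.jj) := by ring
  rw [h, S.Ejj4, S.rho_eq]; linear_combination (-1:ℂ) * S.homega2

lemma E_sub_K : S.E ⊆ (S.K : Set ℂ) := by
  rw [S.hK]; exact Subfield.subset_closure

lemma ZS_succ (f : ℂ → ℂ) (w : ℂ) (n : ℕ) :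
    ZS f w (n+1) = (ZS f w n - f (ZS f w n))⁻¹ := rfl

lemma notK {w : ℂ} (hw : w ∉ S.K) : ∀ n, ZS S.f w n ∉ S.K := by
  intro n
  induction n with
  | zero => exact hw
  | succ n ih =>
    rw [ZS_succ]
    intro hmem
    have hKe : S.f (ZS S.f w n) ∈ S.K := S.E_sub_K (S.hfE _)
    by_cases h0 : ZS S.f w n - S.f (ZS S.f w n) = 0
    · apply ih
      rw [sub_eq_zero] at h0
      rw [h0]; exact hKe
    · apply ih
      have h1 : (ZS S.f w n - S.f (ZS S.f w n))⁻¹⁻¹ ∈ S.K := S.K.inv_mem hmem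
      rw [inv_inv] at h1
      have := S.K.add_mem h1 hKe
      simpa using this

lemma sub_ne {w : ℂ} (hw : w ∉ S.K) (n : ℕ) : ZS S.f w n - S.f (ZS S.f w n) ≠ 0 := by
  intro h0
  apply S.notK hw n
  rw [sub_eq_zero] at h0
  rw [h0]; exact S.E_sub_K (S.hfE _)

lemma inPhi {w : ℂ} (hw : w ∉ S.K) (n : ℕ) :
    ZS S.f w n - S.f (ZS S.f w n) ∈ S.Φ := by
  rw [S.hΦ]; exact ⟨ZS S.f w n, S.notK hw n, rfl⟩

lemma dist_lt {w : ℂ} (hw : w ∉ S.K) (n : ℕ) :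
    Complex.abs (ZS S.f w n - S.f (ZS S.f w n)) < S.r := by
  have := S.ca (S.inPhi hw n)
  have h' : ‖ZS S.f w n - S.f (ZS S.f w n)‖ < S.r := by
    simpa [Metric.mem_ball, Complex.dist_eq] using this
  exact h'

lemma zs_ne {w : ℂ} (hw : w ∉ S.K) (n : ℕ) : ZS S.f w (n+1) ≠ 0 := by
  rw [ZS_succ]; exact inv_ne_zero (S.sub_ne hw n)

lemma zs_abs_mul {w : ℂ} (hw : w ∉ S.K) (n : ℕ) :
    Complex.abs (ZS S.f w (n+1)) * Complex.abs (ZS S.f w n - S.f (ZS S.f w n)) = 1 := by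
  rw [ZS_succ, map_inv₀]
  exact inv_mul_cancel₀ (Complex.abs.ne_zero (S.sub_ne hw n))

lemma zs_abs_gt {w : ℂ} (hw : w ∉ S.K) (n : ℕ) :
    1 < S.r * Complex.abs (ZS S.f w (n+1)) := by
  have h1 := S.zs_abs_mul hw n
  have h2 := S.dist_lt hw n
  have h3 : 0 < Complex.abs (ZS S.f w n - S.f (ZS S.f w n)) := by
    exact Complex.abs.pos (S.sub_ne hw n)
  have h4 : 0 < Complex.abs (ZS S.f w (n+1)) := by
    nlinarith
  nlinarith

lemma zs_mem_invPhi {w : ℂ} (hw : w ∉ S.K) (n : ℕ) :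
    ZS S.f w (n+1) ∈ Inv.inv '' S.Φ :=
  ⟨ZS S.f w n - S.f (ZS S.f w n), S.inPhi hw n, rfl⟩

lemma b_abs_gt {w : ℂ} (hw : w ∉ S.K) (n : ℕ) :
    1 < Complex.abs (S.f (ZS S.f w (n+1))) :=
  S.cb _ (S.zs_mem_invPhi hw n)

lemma b_norm3 {w : ℂ} (hw : w ∉ S.K) (n : ℕ) :
    3 ≤ (Complex.abs (S.f (ZS S.f w (n+1))))^2 := by
  have hbe := S.hfE (ZS S.f w (n+1))
  rw [S.hE] at hbe
  obtain ⟨x, y, hxy⟩ := hbe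
  rw [hxy, S.E_abs_sq]
  have h1 : 1 < Complex.abs (S.f (ZS S.f w (n+1))) := S.b_abs_gt hw n
  rw [hxy] at h1
  have h2 : (1:ℝ) < ((x^2 - x*y + y^2 : ℤ) : ℝ) := by
    rw [← S.E_abs_sq]
    nlinarith [Complex.abs.nonneg ((x:ℂ) + (y:ℂ)*S.ω)]
  have h3 : (1:ℤ) < x^2 - x*y + y^2 := by exact_mod_cast h2
  have h4 : (3:ℤ) ≤ x^2 - x*y + y^2 := by
    have := int_no_norm2 x y
    omega
  exact_mod_cast h4

lemma no_bad_pair {w : ℂ} (hw : w ∉ S.K) (n k : ℕ) (hk : k ≤ 5) (t : ℂ)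
    (ht : t ∈ ({-1 + S.jj, S.jj, 1 + S.jj} : Set ℂ))
    (h1 : S.f (ZS S.f w (n+1)) = S.ρ^(-(k:ℤ)) * t)
    (h2 : S.f (ZS S.f w (n+2)) = S.ρ^k * S.jj) : False := by
  have hd := S.cc k hk t ht
  have hmem1 : ZS S.f w (n+1) ∈
      (fun w' => S.ρ ^ (-(k : ℤ)) * t + w'⁻¹) '' {w' : ℂ | S.f w' = S.ρ ^ k * S.jj} := by
    refine ⟨ZS S.f w (n+2), h2, ?_⟩
    show S.ρ ^ (-(k : ℤ)) * t + (ZS S.f w (n+2))⁻¹ = ZS S.f w (n+1)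
    rw [ZS_succ S.f w (n+1), inv_inv, ← h1]
    ring
  have hmem2 : ZS S.f w (n+1) ∈
      {w' : ℂ | S.f w' = S.ρ ^ (-(k:ℤ)) * t} ∩ Inv.inv '' S.Φ :=
    ⟨h1, S.zs_mem_invPhi hw n⟩
  exact Set.disjoint_left.mp hd hmem1 hmem2

noncomputable def bs (w : ℂ) : ℕ → ℂ := fun n => S.f (ZS S.f w n)
noncomputable def qs (w : ℂ) : ℕ → ℂ := QQ (S.bs w) 0 1
noncomputable def ps (w : ℂ) : ℕ → ℂ := QQ (S.bs w) 1 (S.bs w 0)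

lemma bs_def (w : ℂ) (n : ℕ) : S.bs w n = S.f (ZS S.f w n) := rfl
lemma qs0 (w : ℂ) : S.qs w 0 = 0 := rfl
lemma qs1 (w : ℂ) : S.qs w 1 = 1 := rfl
lemma qs_rec (w : ℂ) (n : ℕ) :
    S.qs w (n+2) = S.bs w (n+1) * S.qs w (n+1) + S.qs w n := rfl
lemma ps0 (w : ℂ) : S.ps w 0 = 1 := rfl
lemma ps1 (w : ℂ) : S.ps w 1 = S.bs w 0 := rfl
lemma ps_rec (w : ℂ) (n : ℕ) :
    S.ps w (n+2) = S.bs w (n+1) * S.ps w (n+1) + S.ps w n := rfl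

lemma q_mono {w : ℂ} (hw : w ∉ S.K) :
    ∀ n, Complex.abs (S.qs w n) < Complex.abs (S.qs w (n+1)) := by
  intro n
  induction n using Nat.strong_induction_on with
  | _ n ih =>
  rcases n with _ | _ | m
  · rw [S.qs0, S.qs1]; simp
  · have h := S.b_abs_gt hw 0
    have e2 : S.qs w 2 = S.bs w 1 := by rw [S.qs_rec w 0, S.qs0, S.qs1]; ring
    rw [S.qs1, e2]
    simpa [S.bs_def] using h
  · have ih1 : Complex.abs (S.qs w (m+1)) < Complex.abs (S.qs w (m+2)) :=
      ih (m+1) (by omega)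
    have ih0 : Complex.abs (S.qs w m) < Complex.abs (S.qs w (m+1)) := ih m (by omega)
    have hone : ∀ j, j ≤ m + 1 → 1 ≤ Complex.abs (S.qs w (j+1)) := by
      intro j hj
      induction j with
      | zero => rw [S.qs1]; simp
      | succ i ihi =>
        have h1 := ihi (by omega)
        have h2 := ih (i+1) (by omega)
        linarith
    have h1q : 1 ≤ Complex.abs (S.qs w (m+1)) := hone m (by omega)
    have h2q : 1 ≤ Complex.abs (S.qs w (m+2)) := by linarith
    have hq1ne : S.qs w (m+1) ≠ 0 := by
      intro h; rw [h] at h1q; simp at h1q; linarith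
    have hq2ne : S.qs w (m+2) ≠ 0 := by
      intro h; rw [h] at h2q; simp at h2q; linarith
    have hβ3 : 3 ≤ (Complex.abs (S.bs w (m+2)))^2 := by
      rw [S.bs_def]; exact S.b_norm3 hw (m+1)
    have hbe := S.hfE (ZS S.f w (m+2))
    rw [S.hE] at hbe
    obtain ⟨x, y, hxy⟩ := hbe
    rw [← S.bs_def] at hxy
    have hNR : (Complex.abs (S.bs w (m+2)))^2 = ((x^2 - x*y + y^2 : ℤ):ℝ) := by
      rw [hxy]; exact S.E_abs_sq x y
    have hN3 : (3:ℤ) ≤ x^2 - x*y + y^2 := by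
      have : (3:ℝ) ≤ ((x^2 - x*y + y^2 : ℤ):ℝ) := by rw [← hNR]; exact hβ3
      exact_mod_cast this
    have hrec : S.qs w (m+3) = S.bs w (m+2) * S.qs w (m+2) + S.qs w (m+1) :=
      S.qs_rec w (m+1)
    rcases (by omega : x^2 - x*y + y^2 = 3 ∨ 4 ≤ x^2 - x*y + y^2) with hN | hN
    · -- case B : small partial quotient
      have hsix := norm3_class x y hN
      have hkex : ∃ k : ℕ, k ≤ 5 ∧ S.bs w (m+2) = S.ρ^k * S.jj := by
        rcases hsix with ⟨hx,hy⟩|⟨hx,hy⟩|⟨hx,hy⟩|⟨hx,hy⟩|⟨hx,hy⟩|⟨hx,hy⟩ <;>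
          subst hx <;> subst hy
        · exact ⟨3, by norm_num, by rw [hxy, S.Ejj3]; push_cast; ring⟩
        · exact ⟨4, by norm_num, by rw [hxy, S.Ejj4]; push_cast; ring⟩
        · exact ⟨2, by norm_num, by rw [hxy, S.Ejj2]; push_cast; ring⟩
        · exact ⟨1, by norm_num, by rw [hxy, S.Ejj1]; push_cast; ring⟩
        · exact ⟨5, by norm_num, by rw [hxy, S.Ejj5]; push_cast; ring⟩
        · exact ⟨0, by norm_num, by rw [hxy, S.Ejj0]; push_cast; ring⟩
      obtain ⟨k, hk5, hβk⟩ := hkex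
      have hprevE : S.bs w (m+1) ∈ S.E := S.hfE _
      have hprev3 : 3 ≤ (Complex.abs (S.bs w (m+1)))^2 := by
        rw [S.bs_def]; exact S.b_norm3 hw m
      have hexcl : ∀ t ∈ ({-1 + S.jj, S.jj, 1 + S.jj} : Set ℂ),
          S.bs w (m+1) ≠ S.ρ^(-(k:ℤ)) * t := by
        intro t ht h1
        exact S.no_bad_pair hw m k hk5 t ht h1 (by rw [← S.bs_def, hβk])
      have hg : Complex.abs (S.qs w m / S.qs w (m+1)) < 1 := by
        rw [map_div₀, div_lt_one (by linarith : (0:ℝ) < Complex.abs (S.qs w (m+1)))]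
        exact ih0
      have hgeo := S.key_geom' hk5 hprevE hprev3
        (hexcl _ (by simp)) (hexcl _ (by simp)) (hexcl _ (by simp)) hg
      have hsum : S.bs w (m+1) + S.qs w m / S.qs w (m+1) =
          S.qs w (m+2) / S.qs w (m+1) := by
        rw [S.qs_rec w m]; field_simp
      have hinv : (S.bs w (m+1) + S.qs w m / S.qs w (m+1))⁻¹ =
          S.qs w (m+1) / S.qs w (m+2) := by
        rw [hsum, inv_div]
      rw [hinv] at hgeo
      have hfin : S.qs w (m+3) =
          (S.bs w (m+2) + S.qs w (m+1) / S.qs w (m+2)) * S.qs w (m+2) := by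
        rw [hrec]; field_simp
      calc Complex.abs (S.qs w (m+2)) = 1 * Complex.abs (S.qs w (m+2)) := (one_mul _).symm
        _ < Complex.abs (S.bs w (m+2) + S.qs w (m+1) / S.qs w (m+2)) *
              Complex.abs (S.qs w (m+2)) := by
            apply mul_lt_mul_of_pos_right _ (by linarith)
            rw [hβk]; exact hgeo
        _ = Complex.abs (S.qs w (m+3)) := by rw [← map_mul, ← hfin]
    · -- case A : large partial quotient
      have hβ2 : 2 ≤ Complex.abs (S.bs w (m+2)) := by
        have h4 : (4:ℝ) ≤ ((x^2 - x*y + y^2 : ℤ):ℝ) := by exact_mod_cast hN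
        nlinarith [Complex.abs.nonneg (S.bs w (m+2)), hNR]
      have htri : Complex.abs (S.bs w (m+2) * S.qs w (m+2)) ≤
          Complex.abs (S.qs w (m+3)) + Complex.abs (S.qs w (m+1)) := by
        calc Complex.abs (S.bs w (m+2) * S.qs w (m+2))
            = Complex.abs (S.qs w (m+3) + -(S.qs w (m+1))) := by rw [hrec]; ring_nf
          _ ≤ _ := by simpa using Complex.abs.add_le (S.qs w (m+3)) (-(S.qs w (m+1)))
      rw [map_mul] at htri
      nlinarith

lemma q_ge_one {w : ℂ} (hw : w ∉ S.K) : ∀ n, 1 ≤ Complex.abs (S.qs w (n+1)) := by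
  intro n
  induction n with
  | zero => rw [S.qs1]; simp
  | succ i ih => have := S.q_mono hw (i+1); linarith

lemma q_ne {w : ℂ} (hw : w ∉ S.K) (n : ℕ) : S.qs w (n+1) ≠ 0 := by
  intro h
  have h1 := S.q_ge_one hw n
  rw [h] at h1; simp at h1; linarith

noncomputable def us (w : ℂ) : ℕ → ℂ := fun n => S.qs w n * w - S.ps w n

lemma us_def (w : ℂ) (n : ℕ) : S.us w n = S.qs w n * w - S.ps w n := rfl
lemma us0 (w : ℂ) : S.us w 0 = -1 := by
  rw [us_def, S.qs0, S.ps0]; ring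

lemma us_zs {w : ℂ} (hw : w ∉ S.K) :
    ∀ n, S.us w (n+1) * ZS S.f w (n+1) = -(S.us w n) := by
  intro n
  induction n with
  | zero =>
    have h : S.us w 1 = ZS S.f w 0 - S.f (ZS S.f w 0) := by
      rw [us_def, S.qs1, S.ps1, S.bs_def]
      show 1 * w - S.f w = ZS S.f w 0 - S.f (ZS S.f w 0)
      norm_num; rfl
    rw [h, ZS_succ S.f w 0, mul_inv_cancel₀ (S.sub_ne hw 0), S.us0]
    norm_num
  | succ n ih =>
    have hsne : ZS S.f w (n+1) - S.f (ZS S.f w (n+1)) ≠ 0 := S.sub_ne hw (n+1)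
    have hz : ZS S.f w (n+2) = (ZS S.f w (n+1) - S.bs w (n+1))⁻¹ := by
      rw [S.bs_def]; rfl
    have h1 : S.us w (n+2) = -(S.us w (n+1)) * (ZS S.f w (n+1) - S.bs w (n+1)) := by
      have hrec : S.us w (n+2) = S.bs w (n+1) * S.us w (n+1) + S.us w n := by
        simp only [us_def, S.qs_rec, S.ps_rec]; ring
      rw [hrec]
      linear_combination ih
    rw [h1, hz, mul_assoc, mul_inv_cancel₀ (by rw [S.bs_def]; exact hsne), mul_one]

lemma us_ne {w : ℂ} (hw : w ∉ S.K) : ∀ n, S.us w n ≠ 0 := by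
  intro n
  induction n with
  | zero => rw [S.us0]; norm_num
  | succ n ih =>
    intro h0
    have := S.us_zs hw n
    rw [h0, zero_mul] at this
    exact ih (neg_eq_zero.mp this.symm)

lemma us_abs_le {w : ℂ} (hw : w ∉ S.K) : ∀ n, Complex.abs (S.us w n) ≤ S.r^n := by
  intro n
  induction n with
  | zero => rw [S.us0]; norm_num
  | succ n ih =>
    have h1 := S.us_zs hw n
    have h2 := S.zs_abs_gt hw n
    have h3 : Complex.abs (S.us w (n+1)) * Complex.abs (ZS S.f w (n+1)) =
        Complex.abs (S.us w n) := by
      rw [← map_mul, h1, map_neg_eq_map]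
    have h4 : (0:ℝ) ≤ Complex.abs (S.us w (n+1)) := Complex.abs.nonneg _
    have h5 : (0:ℝ) < S.r := S.hr0
    have h6 : S.r^n ≤ S.r^n * 1 := by norm_num
    have h7 : (0:ℝ) ≤ Complex.abs (ZS S.f w (n+1)) := Complex.abs.nonneg _
    rw [pow_succ]
    nlinarith [S.hr1]

lemma det_eq (w : ℂ) : ∀ n, S.ps w (n+1) * S.qs w n - S.ps w n * S.qs w (n+1) = (-1:ℂ)^(n+1) := by
  intro n
  induction n with
  | zero => rw [S.ps1, S.qs0, S.ps0, S.qs1]; ring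
  | succ n ih =>
    rw [S.ps_rec, S.qs_rec]
    linear_combination (-1:ℂ) * ih

lemma us_q {w : ℂ} (hw : w ∉ S.K) (n : ℕ) :
    S.us w n * (S.qs w (n+1) * ZS S.f w (n+1) + S.qs w n) =
      (-1:ℂ)^(n+1) * ZS S.f w (n+1) := by
  have h1 := S.us_zs hw n
  have h2 := S.det_eq w n
  simp only [us_def] at h1 ⊢
  linear_combination (S.qs w n) * h1 + (ZS S.f w (n+1)) * h2

lemma us_q_inv {w : ℂ} (hw : w ∉ S.K) (n : ℕ) :
    Complex.abs (S.us w (n+1)) *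
      Complex.abs (S.qs w (n+1) * ZS S.f w (n+1) + S.qs w n) = 1 := by
  have h1 := congrArg Complex.abs (S.us_q hw n)
  rw [map_mul, map_mul, map_pow] at h1
  simp only [map_neg_eq_map, map_one, one_pow, one_mul] at h1
  have h2 := S.us_zs hw n
  have h3 : Complex.abs (S.us w (n+1)) * Complex.abs (ZS S.f w (n+1)) =
      Complex.abs (S.us w n) := by rw [← map_mul, h2, map_neg_eq_map]
  have h4 : Complex.abs (ZS S.f w (n+1)) ≠ 0 :=
    Complex.abs.ne_zero (S.zs_ne hw n)
  apply mul_right_cancel₀ h4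
  rw [one_mul]
  linear_combination Complex.abs (S.qs w (n+1) * ZS S.f w (n+1) + S.qs w n) * h3 + h1

lemma us_q_bound {w : ℂ} (hw : w ∉ S.K) (n : ℕ) :
    Complex.abs (S.us w (n+1)) * Complex.abs (S.qs w (n+1)) ≤ S.r / (1 - S.r) := by
  have hA := S.us_q_inv hw n
  set X := Complex.abs (S.us w (n+1)) with hX
  set Q := Complex.abs (S.qs w (n+1)) with hQ
  set Z := Complex.abs (ZS S.f w (n+1)) with hZ
  have hB : Q * Z - Complex.abs (S.qs w n) ≤
      Complex.abs (S.qs w (n+1) * ZS S.f w (n+1) + S.qs w n) := by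
    have := Complex.abs.add_le (S.qs w (n+1) * ZS S.f w (n+1) + S.qs w n) (-(S.qs w n))
    simp only [add_neg_cancel_right, map_neg_eq_map] at this
    rw [map_mul] at this
    linarith
  have hC : Complex.abs (S.qs w n) < Q := S.q_mono hw n
  have hD : 1 < S.r * Z := S.zs_abs_gt hw n
  have hQ1 : 1 ≤ Q := S.q_ge_one hw n
  have hX0 : 0 ≤ X := Complex.abs.nonneg _
  have hr0 := S.hr0
  have hr1 := S.hr1
  have hq0 : 0 ≤ Complex.abs (S.qs w n) := Complex.abs.nonneg _
  -- X*(Q*Z - |qn|) ≤ X * |...| = 1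
  have hE : X * (Q * Z - Complex.abs (S.qs w n)) ≤ 1 := by
    calc X * (Q * Z - Complex.abs (S.qs w n)) ≤
        X * Complex.abs (S.qs w (n+1) * ZS S.f w (n+1) + S.qs w n) := by
          apply mul_le_mul_of_nonneg_left hB hX0
      _ = 1 := hA
  have hF : X * Q * Z ≤ 1 + X * Q := by nlinarith
  rw [le_div_iff₀ (by linarith : (0:ℝ) < 1 - S.r)]
  nlinarith [mul_le_mul_of_nonneg_left hD.le (mul_nonneg hX0 (by linarith : (0:ℝ) ≤ Q)),
    mul_le_mul_of_nonneg_left hF S.hr0.le]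

lemma conv_err {w : ℂ} (hw : w ∉ S.K) (n : ℕ) :
    w - S.ps w (n+1) / S.qs w (n+1) = S.us w (n+1) / S.qs w (n+1) := by
  rw [us_def]
  field_simp [S.q_ne hw n]

lemma conv_bound {w : ℂ} (hw : w ∉ S.K) (n : ℕ) :
    Complex.abs (w - S.ps w (n+1) / S.qs w (n+1)) ≤
      S.r / (1 - S.r) * ((Complex.abs (S.qs w (n+1)))^2)⁻¹ := by
  rw [S.conv_err hw n, map_div₀]
  have hQ1 : 1 ≤ Complex.abs (S.qs w (n+1)) := S.q_ge_one hw n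
  have hQ0 : (0:ℝ) < Complex.abs (S.qs w (n+1)) := by linarith
  have h1 := S.us_q_bound hw n
  have hR : S.r/(1-S.r) * ((Complex.abs (S.qs w (n+1)))^2)⁻¹ =
      (S.r/(1-S.r)/Complex.abs (S.qs w (n+1)))/Complex.abs (S.qs w (n+1)) := by
    rw [sq, ← div_eq_mul_inv, div_div, div_div, div_div]
  rw [hR]
  apply (div_le_div_iff_of_pos_right hQ0).mpr
  rw [le_div_iff₀ hQ0]
  exact h1

lemma conv_tendsto {w : ℂ} (hw : w ∉ S.K) :
    Tendsto (fun n => S.ps w (n+1) / S.qs w (n+1)) atTop (nhds w) := by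
  have key : ∀ n, dist (S.ps w (n+1) / S.qs w (n+1)) w ≤ S.r^(n+1) := by
    intro n
    rw [Complex.dist_eq]
    show Complex.abs (S.ps w (n+1) / S.qs w (n+1) - w) ≤ S.r^(n+1)
    have h0 : S.ps w (n+1) / S.qs w (n+1) - w = -(w - S.ps w (n+1) / S.qs w (n+1)) := by ring
    rw [h0, map_neg_eq_map, S.conv_err hw n, map_div₀]
    have hQ1 : 1 ≤ Complex.abs (S.qs w (n+1)) := S.q_ge_one hw n
    have h1 := S.us_abs_le hw (n+1)
    have h2 : Complex.abs (S.us w (n+1)) / Complex.abs (S.qs w (n+1)) ≤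
        Complex.abs (S.us w (n+1)) := by
      apply div_le_self (Complex.abs.nonneg _) hQ1
    linarith
  rw [tendsto_iff_dist_tendsto_zero]
  apply squeeze_zero (fun n => dist_nonneg) key
  have h := tendsto_pow_atTop_nhds_zero_of_lt_one S.hr0.le S.hr1
  exact h.comp (tendsto_add_atTop_nat 1)

noncomputable def ER : Subring ℂ where
  carrier := S.E
  mul_mem' := fun h1 h2 => S.E_mul h1 h2
  one_mem' := S.E_one
  add_mem' := fun h1 h2 => S.E_add h1 h2
  zero_mem' := S.E_zero
  neg_mem' := fun h => S.E_neg h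

lemma K_frac {x : ℂ} (hx : x ∈ S.K) :
    ∃ a ∈ S.E, ∃ c ∈ S.E, c ≠ 0 ∧ x = a / c := by
  rw [S.hK, Subfield.mem_closure_iff] at hx
  obtain ⟨y, hy, zc, hz, hyz⟩ := hx
  have hcl : Subring.closure S.E = S.ER := by
    apply le_antisymm
    · exact Subring.closure_le.mpr (fun v hv => hv)
    · exact Subring.subset_closure
  rw [hcl] at hy hz
  by_cases hz0 : zc = 0
  · refine ⟨0, S.E_zero, 1, S.E_one, one_ne_zero, ?_⟩
    rw [← hyz, hz0]
    simp
  · exact ⟨y, hy, zc, hz, hz0, hyz.symm⟩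

lemma qs_E (w : ℂ) : ∀ n, S.qs w n ∈ S.E := by
  intro n
  induction n using Nat.strong_induction_on with
  | _ n ih =>
  rcases n with _ | _ | m
  · rw [S.qs0]; exact S.E_zero
  · rw [S.qs1]; exact S.E_one
  · rw [S.qs_rec]
    exact S.E_add (S.E_mul (S.hfE _) (ih (m+1) (by omega))) (ih m (by omega))

lemma ps_E (w : ℂ) : ∀ n, S.ps w n ∈ S.E := by
  intro n
  induction n using Nat.strong_induction_on with
  | _ n ih =>
  rcases n with _ | _ | m
  · rw [S.ps0]; exact S.E_one
  · rw [S.ps1]; exact S.hfE _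
  · rw [S.ps_rec]
    exact S.E_add (S.E_mul (S.hfE _) (ih (m+1) (by omega))) (ih m (by omega))

lemma E_finite (M : ℝ) : {v : ℂ | v ∈ S.E ∧ Complex.abs v ≤ M}.Finite := by
  obtain ⟨N, hN⟩ := exists_int_gt M
  have hfin : (Set.Icc (-(2*N)) (2*N) ×ˢ Set.Icc (-(2*N)) (2*N) : Set (ℤ × ℤ)).Finite :=
    (Set.finite_Icc _ _).prod (Set.finite_Icc _ _)
  apply Set.Finite.subset (hfin.image (fun p => ((p.1 : ℂ) + (p.2 : ℂ) * S.ω)))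
  rintro v ⟨hvE, hvM⟩
  rw [S.hE] at hvE
  obtain ⟨x, y, rfl⟩ := hvE
  have habs := S.E_abs_sq x y
  by_cases hM0 : 0 ≤ M
  · have hNR : Complex.abs ((x:ℂ) + (y:ℂ)*S.ω) ≤ (N:ℝ) := by linarith
    have hN0 : (0:ℝ) ≤ (N:ℝ) := by linarith [Complex.abs.nonneg ((x:ℂ) + (y:ℂ)*S.ω)]
    have hsq : ((x^2 - x*y + y^2 : ℤ):ℝ) ≤ ((N^2 : ℤ):ℝ) := by
      rw [← habs]
      push_cast
      nlinarith [Complex.abs.nonneg ((x:ℂ) + (y:ℂ)*S.ω)]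
    have hint : x^2 - x*y + y^2 ≤ N^2 := by exact_mod_cast hsq
    have hy2 : y^2 ≤ 4*N^2 := by nlinarith [sq_nonneg (2*x - y)]
    have hx2 : (2*x - y)^2 ≤ 4*N^2 := by nlinarith [sq_nonneg y]
    have hNnn : (0:ℤ) ≤ N := by exact_mod_cast hN0
    have hyb : -(2*N) ≤ y ∧ y ≤ 2*N := by constructor <;> nlinarith
    have hxb : -(2*N) ≤ x ∧ x ≤ 2*N := by
      constructor <;> nlinarith [sq_nonneg (2*x - y), sq_nonneg y]
    exact ⟨(x, y), ⟨⟨hxb.1, hxb.2⟩, ⟨hyb.1, hyb.2⟩⟩, rfl⟩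
  · exfalso
    exact hM0 (le_trans (Complex.abs.nonneg _) hvM)

lemma ZS_shift (w : ℂ) (m : ℕ) : ∀ n, ZS S.f (ZS S.f w m) n = ZS S.f w (m + n) := by
  intro n
  induction n with
  | zero => rfl
  | succ n ih => rw [ZS_succ, ih, ← Nat.add_assoc]; rfl

lemma zs_period (w : ℂ) {m1 m2 : ℕ} (hlt : m1 < m2)
    (heq : ZS S.f w m1 = ZS S.f w m2) :
    ∀ i, m1 ≤ i → ZS S.f w (i + (m2 - m1)) = ZS S.f w i := by
  have key : ∀ j, ZS S.f w (m1 + j + (m2 - m1)) = ZS S.f w (m1 + j) := by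
    intro j
    induction j with
    | zero =>
      rw [show m1 + 0 + (m2 - m1) = m2 from by omega, show m1 + 0 = m1 from by omega]
      exact heq.symm
    | succ j ih =>
      have e1 : m1 + (j+1) + (m2 - m1) = (m1 + j + (m2 - m1)) + 1 := by omega
      rw [e1, ZS_succ, ih]; rfl
  intro i hi
  have : i = m1 + (i - m1) := by omega
  rw [this]
  exact key (i - m1)

lemma QQ_unique (b : ℕ → ℂ) (x y : ℂ) (g : ℕ → ℂ) (h0 : g 0 = x) (h1 : g 1 = y)
    (hrec : ∀ n, g (n+2) = b (n+1) * g (n+1) + g n) : ∀ n, g n = QQ b x y n := by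
  intro n
  induction n using Nat.strong_induction_on with
  | _ n ih =>
  rcases n with _ | _ | m
  · exact h0
  · exact h1
  · rw [hrec m, ih (m+1) (by omega), ih m (by omega)]; rfl

lemma us_abs_lt {w : ℂ} (hw : w ∉ S.K) (n : ℕ) {k : ℕ} (hk : 1 ≤ k) :
    Complex.abs (S.us w (n+k)) < Complex.abs (S.us w n) := by
  have step : ∀ i, Complex.abs (S.us w (i+1)) < Complex.abs (S.us w i) := by
    intro i
    have h1 := S.us_zs hw i
    have h3 : Complex.abs (S.us w (i+1)) * Complex.abs (ZS S.f w (i+1)) =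
        Complex.abs (S.us w i) := by rw [← map_mul, h1, map_neg_eq_map]
    have h2 := S.zs_abs_gt hw i
    have h4 : 0 < Complex.abs (S.us w (i+1)) :=
      Complex.abs.pos (S.us_ne hw (i+1))
    have hr1 := S.hr1
    have hr0 := S.hr0
    nlinarith [Complex.abs.nonneg (ZS S.f w (i+1))]
  induction k with
  | zero => omega
  | succ k ihk =>
    rcases Nat.eq_or_lt_of_le hk with h | h
    · simpa [← h] using step n
    · have hk1 : 1 ≤ k := by omega
      have := ihk hk1
      calc Complex.abs (S.us w (n + (k+1))) < Complex.abs (S.us w (n + k)) := by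
            simpa [← Nat.add_assoc] using step (n + k)
        _ < _ := this

lemma qs_abs_le {w : ℂ} (hw : w ∉ S.K) (n : ℕ) (k : ℕ) :
    Complex.abs (S.qs w n) ≤ Complex.abs (S.qs w (n+k)) := by
  induction k with
  | zero => simp
  | succ k ihk =>
    have := S.q_mono hw (n + k)
    have e : n + (k+1) = (n + k) + 1 := by omega
    rw [e]
    linarith

lemma lagrange_rev {w : ℂ} (hw : w ∉ S.K) {m k : ℕ} (hm : 1 ≤ m) (hk : 1 ≤ k)
    (hper : ∀ n, m ≤ n → S.bs w (n+k) = S.bs w n) :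
    ∃ A B C : ℂ, A ∈ S.K ∧ B ∈ S.K ∧ C ∈ S.K ∧ A ≠ 0 ∧ A*w^2 + B*w + C = 0 := by
  have hw1 : ZS S.f w (m+1) ∉ S.K := S.notK hw (m+1)
  have hw2 : ZS S.f w (m+k+1) ∉ S.K := S.notK hw (m+k+1)
  have hbs_eq : S.bs (ZS S.f w (m+1)) = S.bs (ZS S.f w (m+k+1)) := by
    funext n
    show S.f (ZS S.f (ZS S.f w (m+1)) n) = S.f (ZS S.f (ZS S.f w (m+k+1)) n)
    rw [S.ZS_shift, S.ZS_shift, show m+k+1+n = (m+1+n)+k from by omega,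
      ← S.bs_def, ← S.bs_def]
    exact (hper (m+1+n) (by omega)).symm
  have hps_eq : S.ps (ZS S.f w (m+1)) = S.ps (ZS S.f w (m+k+1)) := by
    show QQ (S.bs (ZS S.f w (m+1))) 1 (S.bs (ZS S.f w (m+1)) 0) =
      QQ (S.bs (ZS S.f w (m+k+1))) 1 (S.bs (ZS S.f w (m+k+1)) 0)
    rw [hbs_eq]
  have hqs_eq : S.qs (ZS S.f w (m+1)) = S.qs (ZS S.f w (m+k+1)) := by
    show QQ (S.bs (ZS S.f w (m+1))) 0 1 = QQ (S.bs (ZS S.f w (m+k+1))) 0 1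
    rw [hbs_eq]
  have weq : ZS S.f w (m+1) = ZS S.f w (m+k+1) := by
    have t1 := S.conv_tendsto hw1
    have t2 := S.conv_tendsto hw2
    rw [hps_eq, hqs_eq] at t1
    exact tendsto_nhds_unique t1 t2
  have e1 := S.us_zs hw m
  have e2 := S.us_zs hw (m+k)
  have hcross : S.us w m * S.us w (m+k+1) = S.us w (m+k) * S.us w (m+1) := by
    have e2' : S.us w (m+k+1) * ZS S.f w (m+1) = -(S.us w (m+k)) := by
      rw [weq]; exact e2
    linear_combination (S.us w (m+k+1)) * e1 - (S.us w (m+1)) * e2'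
  have hqd : (S.qs w m * S.qs w (m+k+1) - S.qs w (m+k) * S.qs w (m+1)) * w^2 +
      ((S.qs w (m+k) * S.ps w (m+1) + S.ps w (m+k) * S.qs w (m+1)) -
        (S.qs w m * S.ps w (m+k+1) + S.ps w m * S.qs w (m+k+1))) * w +
      (S.ps w m * S.ps w (m+k+1) - S.ps w (m+k) * S.ps w (m+1)) = 0 := by
    simp only [us_def] at hcross
    linear_combination hcross
  have hEK : ∀ {v : ℂ}, v ∈ S.E → v ∈ S.K := fun hv => S.E_sub_K hv
  have hq0ne : S.qs w m ≠ 0 := by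
    obtain ⟨t, rfl⟩ : ∃ t, m = t+1 := ⟨m-1, by omega⟩
    exact S.q_ne hw t
  have hqkne : S.qs w (m+k) ≠ 0 := by
    obtain ⟨t, ht⟩ : ∃ t, m + k = t+1 := ⟨m+k-1, by omega⟩
    rw [ht]; exact S.q_ne hw t
  refine ⟨_, _, _,
    S.K.sub_mem (S.K.mul_mem (hEK (S.qs_E w m)) (hEK (S.qs_E w (m+k+1))))
      (S.K.mul_mem (hEK (S.qs_E w (m+k))) (hEK (S.qs_E w (m+1)))),
    S.K.sub_mem (S.K.add_mem (S.K.mul_mem (hEK (S.qs_E w (m+k))) (hEK (S.ps_E w (m+1))))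
        (S.K.mul_mem (hEK (S.ps_E w (m+k))) (hEK (S.qs_E w (m+1)))))
      (S.K.add_mem (S.K.mul_mem (hEK (S.qs_E w m)) (hEK (S.ps_E w (m+k+1))))
        (S.K.mul_mem (hEK (S.ps_E w m)) (hEK (S.qs_E w (m+k+1))))),
    S.K.sub_mem (S.K.mul_mem (hEK (S.ps_E w m)) (hEK (S.ps_E w (m+k+1))))
      (S.K.mul_mem (hEK (S.ps_E w (m+k))) (hEK (S.ps_E w (m+1)))),
    ?_, hqd⟩
  intro hAA0
  have hBC : ((S.qs w (m+k) * S.ps w (m+1) + S.ps w (m+k) * S.qs w (m+1)) -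
      (S.qs w m * S.ps w (m+k+1) + S.ps w m * S.qs w (m+k+1))) * w +
      (S.ps w m * S.ps w (m+k+1) - S.ps w (m+k) * S.ps w (m+1)) = 0 := by
    linear_combination hqd - w^2 * hAA0
  have hBB0 : (S.qs w (m+k) * S.ps w (m+1) + S.ps w (m+k) * S.qs w (m+1)) -
      (S.qs w m * S.ps w (m+k+1) + S.ps w m * S.qs w (m+k+1)) = 0 := by
    by_contra hBB
    apply hw
    have hwv : w = -(S.ps w m * S.ps w (m+k+1) - S.ps w (m+k) * S.ps w (m+1)) /
        ((S.qs w (m+k) * S.ps w (m+1) + S.ps w (m+k) * S.qs w (m+1)) -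
          (S.qs w m * S.ps w (m+k+1) + S.ps w m * S.qs w (m+k+1))) := by
      rw [eq_div_iff hBB]
      linear_combination hBC
    rw [hwv]
    exact S.K.div_mem
      (S.K.neg_mem (S.K.sub_mem
        (S.K.mul_mem (hEK (S.ps_E w m)) (hEK (S.ps_E w (m+k+1))))
        (S.K.mul_mem (hEK (S.ps_E w (m+k))) (hEK (S.ps_E w (m+1))))))
      (S.K.sub_mem
        (S.K.add_mem (S.K.mul_mem (hEK (S.qs_E w (m+k))) (hEK (S.ps_E w (m+1))))
          (S.K.mul_mem (hEK (S.ps_E w (m+k))) (hEK (S.qs_E w (m+1)))))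
        (S.K.add_mem (S.K.mul_mem (hEK (S.qs_E w m)) (hEK (S.ps_E w (m+k+1))))
          (S.K.mul_mem (hEK (S.ps_E w m)) (hEK (S.qs_E w (m+k+1))))))
  have hCC0 : S.ps w m * S.ps w (m+k+1) - S.ps w (m+k) * S.ps w (m+1) = 0 := by
    linear_combination hBC - w * hBB0
  have hv0 : (S.qs w m * (S.ps w m / S.qs w m) - S.ps w m) *
      (S.qs w (m+k+1) * (S.ps w m / S.qs w m) - S.ps w (m+k+1)) =
      (S.qs w (m+k) * (S.ps w m / S.qs w m) - S.ps w (m+k)) *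
      (S.qs w (m+1) * (S.ps w m / S.qs w m) - S.ps w (m+1)) := by
    linear_combination (S.ps w m / S.qs w m)^2 * hAA0 + (S.ps w m / S.qs w m) * hBB0 + hCC0
  have hfac1 : S.qs w m * (S.ps w m / S.qs w m) - S.ps w m = 0 := by
    field_simp
    ring
  rw [hfac1, zero_mul] at hv0
  rcases mul_eq_zero.mp hv0.symm with hc1 | hc2
  · -- p0/q0 = pk/qk : impossible by approximation speed
    have hc1' : S.ps w m * S.qs w (m+k) = S.ps w (m+k) * S.qs w m := by
      rw [sub_eq_zero] at hc1
      field_simp at hc1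
      linear_combination hc1
    have hveq : S.ps w m / S.qs w m = S.ps w (m+k) / S.qs w (m+k) := by
      rw [div_eq_div_iff hq0ne hqkne]
      linear_combination hc1'
    have g1 : w - S.ps w m / S.qs w m = S.us w m / S.qs w m := by
      obtain ⟨t, ht⟩ : ∃ t, m = t+1 := ⟨m-1, by omega⟩
      rw [ht]; exact S.conv_err hw t
    have g2 : w - S.ps w (m+k) / S.qs w (m+k) = S.us w (m+k) / S.qs w (m+k) := by
      obtain ⟨t, ht⟩ : ∃ t, m + k = t+1 := ⟨m+k-1, by omega⟩
      rw [ht]; exact S.conv_err hw t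
    have hdd : S.us w m / S.qs w m = S.us w (m+k) / S.qs w (m+k) := by
      rw [← g1, ← g2, hveq]
    have habseq : Complex.abs (S.us w m) * Complex.abs (S.qs w (m+k)) =
        Complex.abs (S.us w (m+k)) * Complex.abs (S.qs w m) := by
      have hcc := congrArg Complex.abs hdd
      rw [map_div₀, map_div₀, div_eq_div_iff
        (Complex.abs.ne_zero hq0ne) (Complex.abs.ne_zero hqkne)] at hcc
      exact hcc
    have habs1 : Complex.abs (S.us w (m+k)) < Complex.abs (S.us w m) :=
      S.us_abs_lt hw m hk
    have habs2 : Complex.abs (S.qs w m) ≤ Complex.abs (S.qs w (m+k)) :=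
      S.qs_abs_le hw m k
    have hp1 : 0 < Complex.abs (S.qs w m) := Complex.abs.pos hq0ne
    have hp2 : 0 < Complex.abs (S.us w m) := Complex.abs.pos (S.us_ne hw m)
    have hp3 : 0 ≤ Complex.abs (S.us w (m+k)) := Complex.abs.nonneg _
    nlinarith
  · -- p0/q0 = p1/q1 : contradicts determinant
    have hc2' : S.ps w m * S.qs w (m+1) = S.ps w (m+1) * S.qs w m := by
      rw [sub_eq_zero] at hc2
      field_simp at hc2
      linear_combination hc2
    have hdet := S.det_eq w m
    have hzero : ((-1:ℂ))^(m+1) = 0 := by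
      rw [← hdet]
      linear_combination -hc2'
    exact pow_ne_zero (m+1) (by norm_num : (-1:ℂ) ≠ 0) hzero

lemma lagrange_fwd {w : ℂ} (hw : w ∉ S.K) {A B C : ℂ} (hA : A ∈ S.K) (hB : B ∈ S.K)
    (hC : C ∈ S.K) (hA0 : A ≠ 0) (hquad : A * w^2 + B * w + C = 0) :
    ∃ m k : ℕ, 1 ≤ k ∧ ∀ n, m ≤ n → ZS S.f w (n + k) = ZS S.f w n := by
  -- normalize coefficients into E
  obtain ⟨a1, ha1, a2, ha2, ha2ne, hAf⟩ := S.K_frac hA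
  obtain ⟨b1, hb1, b2, hb2, hb2ne, hBf⟩ := S.K_frac hB
  obtain ⟨c1, hc1, c2, hc2, hc2ne, hCf⟩ := S.K_frac hC
  set A' := a1 * (b2 * c2) with hA'
  set B' := b1 * (a2 * c2) with hB'
  set C' := c1 * (a2 * b2) with hC'
  have hA'E : A' ∈ S.E := S.E_mul ha1 (S.E_mul hb2 hc2)
  have hB'E : B' ∈ S.E := S.E_mul hb1 (S.E_mul ha2 hc2)
  have hC'E : C' ∈ S.E := S.E_mul hc1 (S.E_mul ha2 hb2)
  have hA'0 : A' ≠ 0 := by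
    intro h
    apply hA0
    rw [hAf]
    rcases mul_eq_zero.mp h with h1 | h2
    · rw [h1]; simp
    · exact absurd h2 (mul_ne_zero hb2ne hc2ne)
  have hquad' : A' * w^2 + B' * w + C' = 0 := by
    have he : A' * w^2 + B' * w + C' = (a2*b2*c2) * (A*w^2 + B*w + C) := by
      rw [hAf, hBf, hCf, hA', hB', hC']
      field_simp
    rw [he, hquad, mul_zero]
  -- quadratic data along the orbit
  set Aq : ℕ → ℂ := fun n =>
    A' * (S.ps w n)^2 + B' * (S.ps w n) * (S.qs w n) + C' * (S.qs w n)^2 with hAq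
  set Bq : ℕ → ℂ := fun n => 2*A' * (S.ps w (n+1)) * (S.ps w n) +
      B' * ((S.ps w (n+1)) * (S.qs w n) + (S.ps w n) * (S.qs w (n+1))) +
      2*C' * (S.qs w (n+1)) * (S.qs w n) with hBq
  have hAid : ∀ n, Aq n =
      S.us w n * (A' * S.us w n - 2*A'*(S.qs w n)*w - B'*(S.qs w n)) := by
    intro n
    have hp : S.ps w n = S.qs w n * w - S.us w n := by rw [us_def]; ring
    simp only [hAq]
    rw [hp]
    linear_combination (S.qs w n)^2 * hquad'
  have hAne : ∀ n, Aq (n+1) ≠ 0 := by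
    intro n h0
    rw [hAid (n+1)] at h0
    rcases mul_eq_zero.mp h0 with h1 | h2
    · exact S.us_ne hw (n+1) h1
    · apply hw
      have hqne := S.q_ne hw n
      have hwv : w = (-(A' * S.ps w (n+1)) - B' * S.qs w (n+1)) / (A' * S.qs w (n+1)) := by
        rw [eq_div_iff (mul_ne_zero hA'0 hqne)]
        simp only [us_def] at h2
        linear_combination -h2
      rw [hwv]
      exact S.K.div_mem
        (S.K.sub_mem (S.K.neg_mem (S.K.mul_mem (S.E_sub_K hA'E) (S.E_sub_K (S.ps_E w (n+1)))))
          (S.K.mul_mem (S.E_sub_K hB'E) (S.E_sub_K (S.qs_E w (n+1)))))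
        (S.K.mul_mem (S.E_sub_K hA'E) (S.E_sub_K (S.qs_E w (n+1))))
  -- roots
  have hroot : ∀ n, Aq (n+1) * (ZS S.f w (n+1))^2 + Bq n * (ZS S.f w (n+1)) + Aq n = 0 := by
    intro n
    have hM := S.us_zs hw n
    simp only [us_def] at hM
    simp only [hAq, hBq]
    linear_combination (S.qs w (n+1) * ZS S.f w (n+1) + S.qs w n)^2 * hquad' -
      (A' * ((S.ps w (n+1) * ZS S.f w (n+1) + S.ps w n) +
        w * (S.qs w (n+1) * ZS S.f w (n+1) + S.qs w n)) +
       B' * (S.qs w (n+1) * ZS S.f w (n+1) + S.qs w n)) * hM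
  -- bounds
  have hrrnn : (0:ℝ) ≤ S.r / (1 - S.r) := div_nonneg S.hr0.le (by linarith [S.hr1])
  set M1 : ℝ := Complex.abs A' +
      (2*Complex.abs A'*Complex.abs w + Complex.abs B') * (S.r/(1-S.r)) with hM1
  have hAbd : ∀ n, Complex.abs (Aq n) ≤ M1 := by
    intro n
    cases n with
    | zero =>
      have h0 : Aq 0 = A' := by
        simp only [hAq, S.ps0, S.qs0]; ring
      rw [h0, hM1]
      nlinarith [Complex.abs.nonneg A', Complex.abs.nonneg B', Complex.abs.nonneg w,
        mul_nonneg (mul_nonneg (by norm_num : (0:ℝ) ≤ 2) (Complex.abs.nonneg A')) (Complex.abs.nonneg w)]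
    | succ n =>
      rw [hAid (n+1), map_mul]
      have htri : Complex.abs (A' * S.us w (n+1) - 2*A'*(S.qs w (n+1))*w - B'*(S.qs w (n+1))) ≤
          Complex.abs A' * Complex.abs (S.us w (n+1)) +
          2*Complex.abs A' * Complex.abs (S.qs w (n+1)) * Complex.abs w +
          Complex.abs B' * Complex.abs (S.qs w (n+1)) := by
        calc Complex.abs (A' * S.us w (n+1) - 2*A'*(S.qs w (n+1))*w - B'*(S.qs w (n+1)))
            ≤ Complex.abs (A' * S.us w (n+1) - 2*A'*(S.qs w (n+1))*w) +
              Complex.abs (B'*(S.qs w (n+1))) := by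
              simpa [sub_eq_add_neg] using Complex.abs.add_le
                (A' * S.us w (n+1) - 2*A'*(S.qs w (n+1))*w) (-(B'*(S.qs w (n+1))))
          _ ≤ Complex.abs (A' * S.us w (n+1)) + Complex.abs (2*A'*(S.qs w (n+1))*w) +
              Complex.abs (B'*(S.qs w (n+1))) := by
              have := Complex.abs.add_le (A' * S.us w (n+1)) (-(2*A'*(S.qs w (n+1))*w))
              simp only [map_neg_eq_map] at this
              have h' : A' * S.us w (n+1) - 2*A'*(S.qs w (n+1))*w =
                A' * S.us w (n+1) + -(2*A'*(S.qs w (n+1))*w) := by ring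
              rw [h']
              linarith
          _ = _ := by
              simp only [map_mul]
              have h2 : Complex.abs 2 = 2 := by
                rw [show (2:ℂ) = ((2:ℝ):ℂ) from by norm_num, Complex.abs_ofReal]
                norm_num
              rw [h2]
      have hU1 : Complex.abs (S.us w (n+1)) ≤ 1 := by
        have := S.us_abs_le hw (n+1)
        have h2 : S.r^(n+1) ≤ 1 := pow_le_one₀ S.hr0.le S.hr1.le
        linarith
      have hUQ := S.us_q_bound hw n
      have hU0 : 0 ≤ Complex.abs (S.us w (n+1)) := Complex.abs.nonneg _
      have hQ0 : 0 ≤ Complex.abs (S.qs w (n+1)) := Complex.abs.nonneg _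
      have hW0 : 0 ≤ Complex.abs w := Complex.abs.nonneg _
      have hA0' : 0 ≤ Complex.abs A' := Complex.abs.nonneg _
      have hB0' : 0 ≤ Complex.abs B' := Complex.abs.nonneg _
      calc Complex.abs (S.us w (n+1)) *
            Complex.abs (A' * S.us w (n+1) - 2*A'*(S.qs w (n+1))*w - B'*(S.qs w (n+1)))
          ≤ Complex.abs (S.us w (n+1)) *
            (Complex.abs A' * Complex.abs (S.us w (n+1)) +
             2*Complex.abs A' * Complex.abs (S.qs w (n+1)) * Complex.abs w +
             Complex.abs B' * Complex.abs (S.qs w (n+1))) :=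
            mul_le_mul_of_nonneg_left htri hU0
        _ ≤ M1 := by
            rw [hM1]
            nlinarith [mul_le_mul_of_nonneg_left hUQ (mul_nonneg (mul_nonneg (by norm_num : (0:ℝ) ≤ 2) hA0') hW0),
              mul_le_mul_of_nonneg_left hUQ hB0',
              mul_le_mul_of_nonneg_left hU1 (mul_nonneg hA0' hU0)]
  have hdisc : ∀ n, (Bq n)^2 - 4 * Aq (n+1) * Aq n =
      (B'^2 - 4*A'*C') * ((S.ps w (n+1)) * (S.qs w n) - (S.ps w n) * (S.qs w (n+1)))^2 := by
    intro n; simp only [hAq, hBq]; ring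
  have hdet2 : ∀ n, ((S.ps w (n+1)) * (S.qs w n) - (S.ps w n) * (S.qs w (n+1)))^2 = 1 := by
    intro n
    rw [S.det_eq w n, ← pow_mul, mul_comm, pow_mul]
    norm_num
  set M2 : ℝ := Real.sqrt (Complex.abs (B'^2 - 4*A'*C') + 4*M1^2) with hM2
  have hBbd : ∀ n, Complex.abs (Bq n) ≤ M2 := by
    intro n
    have h1 : (Bq n)^2 = (B'^2 - 4*A'*C') + 4*(Aq (n+1))*(Aq n) := by
      have h := hdisc n
      rw [hdet2 n] at h
      linear_combination h
    have h2 : (Complex.abs (Bq n))^2 ≤ Complex.abs (B'^2 - 4*A'*C') + 4*M1^2 := by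
      rw [← map_pow, h1]
      calc Complex.abs ((B'^2 - 4*A'*C') + 4*(Aq (n+1))*(Aq n))
          ≤ Complex.abs (B'^2 - 4*A'*C') + Complex.abs (4*(Aq (n+1))*(Aq n)) :=
            Complex.abs.add_le _ _
        _ ≤ _ := by
            simp only [map_mul]
            have h4 : Complex.abs 4 = 4 := by
              rw [show (4:ℂ) = ((4:ℝ):ℂ) from by norm_num, Complex.abs_ofReal]
              norm_num
            rw [h4]
            have hb1' := hAbd (n+1)
            have hb2' := hAbd n
            have hM1nn : 0 ≤ M1 := le_trans (Complex.abs.nonneg _) (hAbd 0)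
            nlinarith [Complex.abs.nonneg (Aq (n+1)), Complex.abs.nonneg (Aq n)]
    have h3 : (0:ℝ) ≤ Complex.abs (B'^2 - 4*A'*C') + 4*M1^2 := by
      have := Complex.abs.nonneg (B'^2 - 4*A'*C')
      nlinarith
    nlinarith [Real.sq_sqrt h3, Real.sqrt_nonneg (Complex.abs (B'^2 - 4*A'*C') + 4*M1^2),
      Complex.abs.nonneg (Bq n)]
  -- membership of coefficients in E
  have h2E : (2:ℂ) ∈ S.E := by
    have := S.E_add S.E_one S.E_one
    norm_num at this
    exact this
  have hAE : ∀ n, Aq n ∈ S.E := by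
    intro n
    have h1 : Aq n = A' * (S.ps w n * S.ps w n) + B' * S.ps w n * S.qs w n +
        C' * (S.qs w n * S.qs w n) := by simp only [hAq]; ring
    rw [h1]
    exact S.E_add (S.E_add (S.E_mul hA'E (S.E_mul (S.ps_E w n) (S.ps_E w n)))
      (S.E_mul (S.E_mul hB'E (S.ps_E w n)) (S.qs_E w n)))
      (S.E_mul hC'E (S.E_mul (S.qs_E w n) (S.qs_E w n)))
  have hBE : ∀ n, Bq n ∈ S.E := by
    intro n
    simp only [hBq]
    exact S.E_add (S.E_add
      (S.E_mul (S.E_mul (S.E_mul h2E hA'E) (S.ps_E w (n+1))) (S.ps_E w n))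
      (S.E_mul hB'E (S.E_add (S.E_mul (S.ps_E w (n+1)) (S.qs_E w n))
        (S.E_mul (S.ps_E w n) (S.qs_E w (n+1))))))
      (S.E_mul (S.E_mul (S.E_mul h2E hC'E) (S.qs_E w (n+1))) (S.qs_E w n))
  -- pigeonhole
  set T : Set ℂ := {v : ℂ | v ∈ S.E ∧ Complex.abs v ≤ max M1 M2} with hT
  have hTfin : T.Finite := S.E_finite (max M1 M2)
  have hfin3 : (T ×ˢ T ×ˢ T).Finite := hTfin.prod (hTfin.prod hTfin)
  have hmem : ∀ n, ((Aq (n+1), Bq n, Aq n) : ℂ × ℂ × ℂ) ∈ T ×ˢ T ×ˢ T := by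
    intro n
    refine ⟨⟨hAE (n+1), le_trans (hAbd (n+1)) (le_max_left _ _)⟩,
      ⟨hBE n, le_trans (hBbd n) (le_max_right _ _)⟩,
      ⟨hAE n, le_trans (hAbd n) (le_max_left _ _)⟩⟩
  haveI := hfin3.to_subtype
  set g : ℕ → (T ×ˢ T ×ˢ T : Set (ℂ × ℂ × ℂ)) := fun n => ⟨(Aq (n+1), Bq n, Aq n), hmem n⟩
    with hg
  obtain ⟨v, hv⟩ := Finite.exists_infinite_fiber g
  have hinf : (g ⁻¹' {v}).Infinite := Set.infinite_coe_iff.mp hv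
  obtain ⟨n1, hn1⟩ := hinf.nonempty
  obtain ⟨n2, hn2, h12⟩ := hinf.exists_gt n1
  obtain ⟨n3, hn3, h23⟩ := hinf.exists_gt n2
  have hgeq : ∀ {i j : ℕ}, i ∈ g ⁻¹' {v} → j ∈ g ⁻¹' {v} →
      Aq (i+1) = Aq (j+1) ∧ Bq i = Bq j ∧ Aq i = Aq j := by
    intro i j hi hj
    have hgi : g i = v := hi
    have hgj : g j = v := hj
    have := hgi.trans hgj.symm
    have h' := congrArg Subtype.val this
    simp only [hg] at h'
    exact ⟨congrArg (fun p : ℂ × ℂ × ℂ => p.1) h',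
      congrArg (fun p : ℂ × ℂ × ℂ => p.2.1) h',
      congrArg (fun p : ℂ × ℂ × ℂ => p.2.2) h'⟩
  obtain ⟨hA12, hB12, hC12⟩ := hgeq hn1 hn2
  obtain ⟨hA13, hB13, hC13⟩ := hgeq hn1 hn3
  have r1 := hroot n1
  have r2 := hroot n2
  have r3 := hroot n3
  rw [← hA12, ← hB12, ← hC12] at r2
  rw [← hA13, ← hB13, ← hC13] at r3
  have hZZ : ZS S.f w (n1+1) = ZS S.f w (n2+1) ∨ ZS S.f w (n1+1) = ZS S.f w (n3+1) ∨
      ZS S.f w (n2+1) = ZS S.f w (n3+1) := by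
    by_contra hcon
    push_neg at hcon
    obtain ⟨h12', h13', h23'⟩ := hcon
    have e12 : Aq (n1+1) * (ZS S.f w (n1+1) + ZS S.f w (n2+1)) + Bq n1 = 0 := by
      have hs : (ZS S.f w (n1+1) - ZS S.f w (n2+1)) *
          (Aq (n1+1) * (ZS S.f w (n1+1) + ZS S.f w (n2+1)) + Bq n1) = 0 := by
        linear_combination r1 - r2
      rcases mul_eq_zero.mp hs with h | h
      · exact absurd (sub_eq_zero.mp h) h12'
      · exact h
    have e13 : Aq (n1+1) * (ZS S.f w (n1+1) + ZS S.f w (n3+1)) + Bq n1 = 0 := by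
      have hs : (ZS S.f w (n1+1) - ZS S.f w (n3+1)) *
          (Aq (n1+1) * (ZS S.f w (n1+1) + ZS S.f w (n3+1)) + Bq n1) = 0 := by
        linear_combination r1 - r3
      rcases mul_eq_zero.mp hs with h | h
      · exact absurd (sub_eq_zero.mp h) h13'
      · exact h
    have hz : Aq (n1+1) * (ZS S.f w (n2+1) - ZS S.f w (n3+1)) = 0 := by
      linear_combination e12 - e13
    rcases mul_eq_zero.mp hz with h | h
    · exact hAne n1 h
    · exact h23' (sub_eq_zero.mp h)
  rcases hZZ with h | h | h
  · refine ⟨n1+1, n2 - n1, by omega, ?_⟩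
    intro n hn
    have h2 := S.zs_period w (show n1+1 < n2+1 from by omega) h n hn
    rwa [show (n2+1) - (n1+1) = n2 - n1 from by omega] at h2
  · refine ⟨n1+1, n3 - n1, by omega, ?_⟩
    intro n hn
    have h2 := S.zs_period w (show n1+1 < n3+1 from by omega) h n hn
    rwa [show (n3+1) - (n1+1) = n3 - n1 from by omega] at h2
  · refine ⟨n2+1, n3 - n2, by omega, ?_⟩
    intro n hn
    have h2 := S.zs_period w (show n2+1 < n3+1 from by omega) h n hn
    rwa [show (n3+1) - (n2+1) = n3 - n2 from by omega] at h2

end Setup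
end Eis

/-- Theorem on continued fractions with Eisenstein-integer partial quotients:
for an `𝔈`-valued algorithm `f` satisfying conditions (a), (b), (c), and
`z ∉ K` (`K` the subfield generated by `𝔈`), the denominators of the
convergents strictly increase in absolute value (in particular they are
nonzero), the convergents tend to `z` with `|z − pₙ/qₙ| ≤ (r/(1−r))|qₙ|⁻²`,
and `z` is a quadratic surd over `K` iff the sequence of partial quotients is
eventually periodic.  (Q-pairs are indexed with offset one, `q (n+1) = qₙ`.) -/
theorem eisenstein_algorithm_theorem
    (ω ρ jj : ℂ)
    (hω : ω = -(1 / 2) + (Real.sqrt 3 / 2) * Complex.I)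
    (hρ : ρ = 1 / 2 + (Real.sqrt 3 / 2) * Complex.I)
    (hjj : jj = Real.sqrt 3 * Complex.I)
    (E : Set ℂ) (hE : E = {w : ℂ | ∃ x y : ℤ, w = (x : ℂ) + (y : ℂ) * ω})
    (f : ℂ → ℂ) (hfE : ∀ w, f w ∈ E) (hfalg : ∀ w, ‖w - f w‖ ≤ 1)
    (K : Subfield ℂ) (hK : K = Subfield.closure E)
    (Φ : Set ℂ) (hΦ : Φ = (fun w => w - f w) '' {w : ℂ | w ∉ K})
    (r : ℝ) (hr0 : 0 < r) (hr1 : r < 1)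
    (hcond_a : Φ ⊆ Metric.ball (0 : ℂ) r)
    (hcond_b : ∀ ζ ∈ Inv.inv '' Φ, 1 < ‖f ζ‖)
    (hcond_c : ∀ k : ℕ, k ≤ 5 → ∀ t ∈ ({-1 + jj, jj, 1 + jj} : Set ℂ),
      Disjoint ((fun w => ρ ^ (-(k : ℤ)) * t + w⁻¹) '' {w : ℂ | f w = ρ ^ k * jj})
        ({w : ℂ | f w = ρ ^ (-(k : ℤ)) * t} ∩ Inv.inv '' Φ))
    (z : ℂ) (hzK : z ∉ K)
    (zs : ℕ → ℂ) (hzs0 : zs 0 = z)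
    (hzsrec : ∀ n, zs (n + 1) = (zs n - f (zs n))⁻¹)
    (a : ℕ → ℂ) (ha : ∀ n, a n = f (zs n))
    (p q : ℕ → ℂ)
    (hp0 : p 0 = 1) (hp1 : p 1 = a 0)
    (hp : ∀ n, p (n + 2) = a (n + 1) * p (n + 1) + p n)
    (hq0 : q 0 = 0) (hq1 : q 1 = 1)
    (hq : ∀ n, q (n + 2) = a (n + 1) * q (n + 1) + q n) :
    (∀ n : ℕ, 1 ≤ n → ‖q n‖ < ‖q (n + 1)‖) ∧
    (∀ n : ℕ, q (n + 1) ≠ 0) ∧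
    Filter.Tendsto (fun n => p (n + 1) / q (n + 1)) Filter.atTop (nhds z) ∧
    (∀ n : ℕ, ‖z - p (n + 1) / q (n + 1)‖ ≤
      r / (1 - r) * (‖q (n + 1)‖ ^ 2)⁻¹) ∧
    ((z ∉ K ∧ ∃ A B C : ℂ, A ∈ K ∧ B ∈ K ∧ C ∈ K ∧ A ≠ 0 ∧
        A * z ^ 2 + B * z + C = 0) ↔
      ∃ m k : ℕ, 1 ≤ k ∧ ∀ n, m ≤ n → a (n + k) = a n) := by
  set S : Eis.Setup := ⟨ω, ρ, jj, E, f, K, Φ, r, hω, hρ, hjj, hE, hfE, hfalg, hK, hΦ,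
    hr0, hr1, hcond_a, hcond_b, hcond_c⟩ with hS
  have hzs_eq : ∀ n, zs n = ZS f z n := by
    intro n
    induction n with
    | zero => rw [hzs0]; rfl
    | succ n ih => rw [hzsrec n, ih]; rfl
  have ha_eq : ∀ n, a n = S.bs z n := by
    intro n; rw [ha n, hzs_eq n]; rfl
  have hq_eq : ∀ n, q n = S.qs z n := fun n =>
    Eis.Setup.QQ_unique (S.bs z) 0 1 q hq0 hq1
      (fun n => by rw [hq n, ha_eq (n+1)]) n
  have hp_eq : ∀ n, p n = S.ps z n := fun n =>
    Eis.Setup.QQ_unique (S.bs z) 1 (S.bs z 0) p hp0 (by rw [hp1, ha_eq 0])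
      (fun n => by rw [hp n, ha_eq (n+1)]) n
  have hzK' : z ∉ S.K := hzK
  refine ⟨?_, ?_, ?_, ?_, ?_⟩
  · intro n _
    rw [hq_eq n, hq_eq (n+1)]
    exact S.q_mono hzK' n
  · intro n
    rw [hq_eq (n+1)]
    exact S.q_ne hzK' n
  · have hfun : (fun n => p (n+1) / q (n+1)) = (fun n => S.ps z (n+1) / S.qs z (n+1)) := by
      funext n; rw [hp_eq, hq_eq]
    rw [hfun]
    exact S.conv_tendsto hzK'
  · intro n
    rw [hp_eq (n+1), hq_eq (n+1)]
    exact S.conv_bound hzK' n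
  · constructor
    · rintro ⟨_, A, B, C, hA, hB, hC, hA0, hquad⟩
      obtain ⟨m, k, hk, hper⟩ := S.lagrange_fwd hzK' hA hB hC hA0 hquad
      refine ⟨m, k, hk, fun n hn => ?_⟩
      rw [ha_eq (n+k), ha_eq n]
      show S.f (ZS S.f z (n+k)) = S.f (ZS S.f z n)
      rw [hper n hn]
    · rintro ⟨m, k, hk, hper⟩
      refine ⟨hzK, ?_⟩
      have hper' : ∀ n, m + 1 ≤ n → S.bs z (n + k) = S.bs z n := by
        intro n hn
        rw [← ha_eq (n+k), ← ha_eq n]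
        exact hper n (by omega)
      obtain ⟨A, B, C, hA, hB, hC, hA0, hqd⟩ :=
        S.lagrange_rev hzK' (by omega : 1 ≤ m+1) hk hper'
      exact ⟨A, B, C, hA, hB, hC, hA0, hqd⟩
end
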